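/- arXiv:0705.4236 — 6 statements merged into one kernel-verified Lean document; each statement's English description precedes it below -/
import Mathlib

section
/- Let a_1,…,a_n be nonzero vectors spanning ℂ^d, let ℓ_i = Σ_j (a_i)_j x_j be the corresponding nonzero linear forms in the field ℂ(x_1,…,x_d) of rational functions, and let φ : ℂ[e_1,…,e_n] → ℂ(x_1,…,x_d) be the ℂ-algebra homomorphism sending e_i to ℓ_i^{-1}. Then the kernel I(𝒜) of φ is generated, as an ideal, by the elements k_{S,c} = Σ_{i∈S} c_i Π_{j∈S∖{i}} e_j, where S ranges over the circuits of the configuration (the minimal subsets S ⊆ {1,…,n} such that {a_i : i ∈ S} is linearly dependent) and c = (c_i)_{i∈S} ranges over tuples of complex numbers with Σ_{i∈S} c_i a_i = 0. -/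
set_option maxHeartbeats 1000000
set_option synthInstance.maxHeartbeats 400000

open scoped BigOperators

noncomputable section

open MvPolynomial

/-- The field `ℂ(x_1,…,x_d)` of rational functions. -/
abbrev RatFunField (d : ℕ) := FractionRing (MvPolynomial (Fin d) ℂ)

/-- The linear form `ℓ_i = Σ_j (a_i)_j x_j`, viewed in `ℂ(x_1,…,x_d)`. -/
def ellForm {d n : ℕ} (a : Fin n → Fin d → ℂ) (i : Fin n) : RatFunField d :=
  algebraMap (MvPolynomial (Fin d) ℂ) (RatFunField d)
    (∑ j : Fin d, C (a i j) * X j)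

/-- The ℂ-algebra homomorphism `φ : ℂ[e_1,…,e_n] → ℂ(x_1,…,x_d)` sending `e_i ↦ ℓ_i⁻¹`. -/
def phiHom {d n : ℕ} (a : Fin n → Fin d → ℂ) :
    MvPolynomial (Fin n) ℂ →+* RatFunField d :=
  eval₂Hom ((algebraMap (MvPolynomial (Fin d) ℂ) (RatFunField d)).comp
      (algebraMap ℂ (MvPolynomial (Fin d) ℂ)))
    (fun i => (ellForm a i)⁻¹)

/-- `S` indexes a linearly dependent subfamily of `a`. -/
def DepSet {d n : ℕ} (a : Fin n → Fin d → ℂ) (S : Finset (Fin n)) : Prop :=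
  ¬ LinearIndependent ℂ (fun i : {x // x ∈ S} => a i)

/-- A circuit: a minimal subset `S ⊆ {1,…,n}` such that `{a_i : i ∈ S}` is linearly
dependent. -/
def IsCircuit {d n : ℕ} (a : Fin n → Fin d → ℂ) (S : Finset (Fin n)) : Prop :=
  DepSet a S ∧ ∀ T ⊂ S, ¬ DepSet a T

/-! ### Generalized setup over an arbitrary finite index type -/

section OT

variable {d : ℕ}

/-- The linear form as a polynomial. -/
def Lf {d : ℕ} (v : Fin d → ℂ) : MvPolynomial (Fin d) ℂ := ∑ j : Fin d, C (v j) * X j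

lemma Lf_add (u v : Fin d → ℂ) : Lf (u + v) = Lf u + Lf v := by
  simp [Lf, C_add, add_mul, Finset.sum_add_distrib]

lemma Lf_smul (c : ℂ) (v : Fin d → ℂ) : Lf (c • v) = C c * Lf v := by
  simp [Lf, C_mul, mul_assoc, Finset.mul_sum]

/-- `Lf` as a linear map. -/
def LfL {d : ℕ} : (Fin d → ℂ) →ₗ[ℂ] MvPolynomial (Fin d) ℂ where
  toFun := Lf
  map_add' := Lf_add
  map_smul' c v := by
    simp only [RingHom.id_apply, smul_eq_C_mul]
    exact Lf_smul c v

lemma coeff_Lf (v : Fin d → ℂ) (j : Fin d) :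
    coeff (Finsupp.single j 1) (Lf v) = v j := by
  classical
  rw [Lf, coeff_sum]
  rw [Finset.sum_eq_single j]
  · simp [coeff_C_mul, coeff_X]
  · intro k _ hkj
    have : ¬ (Finsupp.single k 1 = Finsupp.single j 1) := by
      intro h
      exact hkj (by simpa using (Finsupp.single_left_injective (one_ne_zero)) h)
    simp [coeff_C_mul, coeff_X', this]
  · intro h; exact absurd (Finset.mem_univ j) h

lemma Lf_ne_zero {v : Fin d → ℂ} (hv : v ≠ 0) : Lf v ≠ 0 := by
  intro h
  apply hv
  funext j
  have := coeff_Lf v j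
  rw [h, coeff_zero] at this
  exact this.symm

lemma Lf_sum {σ : Type} (S : Finset σ) (c : σ → ℂ) (v : σ → Fin d → ℂ) :
    Lf (∑ i ∈ S, c i • v i) = ∑ i ∈ S, C (c i) * Lf (v i) := by
  have : Lf (∑ i ∈ S, c i • v i) = LfL (∑ i ∈ S, c i • v i) := rfl
  rw [this, map_sum]
  refine Finset.sum_congr rfl (fun i _ => ?_)
  show Lf (c i • v i) = _
  rw [Lf_smul]

lemma Lf_zero : Lf (0 : Fin d → ℂ) = 0 := by simp [Lf]

/-- generalized φ -/
def genPhi {σ : Type} (b : σ → Fin d → ℂ) : MvPolynomial σ ℂ →+* RatFunField d :=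
  eval₂Hom ((algebraMap (MvPolynomial (Fin d) ℂ) (RatFunField d)).comp
      (algebraMap ℂ (MvPolynomial (Fin d) ℂ)))
    (fun i => (algebraMap (MvPolynomial (Fin d) ℂ) (RatFunField d) (Lf (b i)))⁻¹)

def DepSetG {σ : Type} (b : σ → Fin d → ℂ) (S : Finset σ) : Prop :=
  ¬ LinearIndependent ℂ (fun i : {x // x ∈ S} => b i)

def IsCircuitG {σ : Type} (b : σ → Fin d → ℂ) (S : Finset σ) : Prop :=
  DepSetG b S ∧ ∀ T ⊂ S, ¬ DepSetG b T

def kpoly {σ : Type} [DecidableEq σ] (S : Finset σ) (c : σ → ℂ) : MvPolynomial σ ℂ :=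
  ∑ i ∈ S, C (c i) * ∏ j ∈ S.erase i, X j

def genSet {σ : Type} [DecidableEq σ] (b : σ → Fin d → ℂ) : Set (MvPolynomial σ ℂ) :=
  {p : MvPolynomial σ ℂ |
    ∃ (S : Finset σ) (c : σ → ℂ), IsCircuitG b S ∧
      (∑ i ∈ S, c i • b i) = 0 ∧
      p = ∑ i ∈ S, C (c i) * ∏ j ∈ S.erase i, X j}

def CircIdeal {σ : Type} [DecidableEq σ] (b : σ → Fin d → ℂ) : Ideal (MvPolynomial σ ℂ) :=
  Ideal.span (genSet b)

section Basic

variable {σ : Type} (b : σ → Fin d → ℂ)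

lemma alg_inj : Function.Injective (algebraMap (MvPolynomial (Fin d) ℂ) (RatFunField d)) :=
  IsFractionRing.injective _ _

lemma ell_ne_zero' {v : Fin d → ℂ} (hv : v ≠ 0) :
    algebraMap (MvPolynomial (Fin d) ℂ) (RatFunField d) (Lf v) ≠ 0 := by
  intro h
  exact Lf_ne_zero hv (alg_inj (by simpa using h))

lemma ell_ne_zero (hb : ∀ i, b i ≠ 0) (i : σ) :
    algebraMap (MvPolynomial (Fin d) ℂ) (RatFunField d) (Lf (b i)) ≠ 0 :=
  ell_ne_zero' (hb i)

lemma genPhi_C (r : ℂ) :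
    genPhi b (C r) = algebraMap (MvPolynomial (Fin d) ℂ) (RatFunField d) (C r) := by
  rw [genPhi, eval₂Hom_C]; rfl

lemma genPhi_monomial [Fintype σ] (m : σ →₀ ℕ) (r : ℂ) :
    genPhi b (monomial m r)
      = algebraMap (MvPolynomial (Fin d) ℂ) (RatFunField d) (C r) *
        ∏ i : σ, ((algebraMap (MvPolynomial (Fin d) ℂ) (RatFunField d) (Lf (b i)))⁻¹) ^ m i := by
  rw [genPhi, eval₂Hom_monomial]
  rw [Finsupp.prod_fintype]
  · rfl
  · intro i; exact pow_zero _

lemma genPhi_eq_sum [Fintype σ] (q : MvPolynomial σ ℂ) :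
    genPhi b q = ∑ m ∈ q.support,
      algebraMap (MvPolynomial (Fin d) ℂ) (RatFunField d) (C (coeff m q)) *
        ∏ i : σ, ((algebraMap (MvPolynomial (Fin d) ℂ) (RatFunField d) (Lf (b i)))⁻¹) ^ m i := by
  conv_lhs => rw [← support_sum_monomial_coeff q]
  rw [map_sum]
  exact Finset.sum_congr rfl (fun m _ => genPhi_monomial b m _)

lemma genPhi_rename {τ : Type} (f : τ → σ) (u : MvPolynomial τ ℂ) :
    genPhi b (rename f u) = genPhi (b ∘ f) u := by
  rw [genPhi, genPhi, coe_eval₂Hom, coe_eval₂Hom, eval₂_rename]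
  rfl

end Basic

/-! ### Dependence helper lemmas -/

section Dep

variable {σ : Type} [Fintype σ] [DecidableEq σ] {b : σ → Fin d → ℂ}

lemma dep_of_rel {S : Finset σ} {c : σ → ℂ}
    (h0 : ∑ i ∈ S, c i • b i = 0) {j₀ : σ} (hj₀ : j₀ ∈ S) (hc : c j₀ ≠ 0) :
    DepSetG b S := by
  intro hLI
  rw [Fintype.linearIndependent_iff] at hLI
  refine hc (hLI (fun i => c i.1) ?_ ⟨j₀, hj₀⟩)
  rw [Finset.sum_coe_sort S (fun i => c i • b i)]
  exact h0

lemma rel_of_dep {S : Finset σ} (h : DepSetG b S) :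
    ∃ c : σ → ℂ, (∑ i ∈ S, c i • b i = 0) ∧ (∃ j ∈ S, c j ≠ 0) ∧ ∀ j, j ∉ S → c j = 0 := by
  classical
  rw [DepSetG, Fintype.not_linearIndependent_iff] at h
  obtain ⟨g, hg, i, hi⟩ := h
  refine ⟨fun j => if h : j ∈ S then g ⟨j, h⟩ else 0, ?_, ⟨i.1, i.2, by simp [i.2]; exact hi⟩,
    fun j hj => dif_neg hj⟩
  rw [← Finset.sum_coe_sort S (fun j => (if h : j ∈ S then g ⟨j, h⟩ else 0) • b j)]
  rw [← hg]
  refine Finset.sum_congr rfl (fun j _ => ?_)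
  simp [j.2]

lemma indep_small (hb : ∀ i, b i ≠ 0) {S : Finset σ} (hS : S.card ≤ 1) :
    ¬ DepSetG b S := by
  intro hdep
  obtain ⟨c, hsum, ⟨j, hjS, hcj⟩, hout⟩ := rel_of_dep hdep
  have hSj : S = {j} := by
    apply Finset.eq_singleton_iff_unique_mem.2
    exact ⟨hjS, fun x hx => Finset.card_le_one.1 hS x hx j hjS⟩
  rw [hSj, Finset.sum_singleton] at hsum
  rcases smul_eq_zero.1 hsum with h | h
  · exact hcj h
  · exact hb j h

end Dep

/-! ### kpoly lemmas -/

section Kpoly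

variable {σ : Type} [DecidableEq σ]

lemma kpoly_erase_zero {S : Finset σ} {c : σ → ℂ} {j₀ : σ} (hj₀ : j₀ ∈ S) (hc : c j₀ = 0) :
    kpoly S c = X j₀ * kpoly (S.erase j₀) c := by
  rw [kpoly, kpoly, Finset.mul_sum, ← Finset.sum_erase_add _ _ hj₀, hc]
  simp only [map_zero, zero_mul, add_zero]
  refine Finset.sum_congr rfl (fun i hi => ?_)
  have hij : j₀ ≠ i := fun h => (Finset.mem_erase.1 hi).1 h.symm
  have hj₀i : j₀ ∈ S.erase i := Finset.mem_erase.2 ⟨hij, hj₀⟩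
  rw [← Finset.mul_prod_erase _ _ hj₀i, Finset.erase_right_comm]
  ring

lemma kpoly_add_smul (S : Finset σ) (c₁ c₂ : σ → ℂ) (s : ℂ) :
    kpoly S (fun i => c₁ i + s * c₂ i) = kpoly S c₁ + C s * kpoly S c₂ := by
  rw [kpoly, kpoly, kpoly, Finset.mul_sum, ← Finset.sum_add_distrib]
  refine Finset.sum_congr rfl (fun i _ => ?_)
  rw [C_add, C_mul]
  ring

lemma rename_kpoly {P : σ → Prop} [DecidablePred P] (S : Finset {x // P x})
    (c : {x // P x} → ℂ) :
    rename (Subtype.val) (kpoly S c)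
      = kpoly (S.image Subtype.val) (fun j => if h : P j then c ⟨j, h⟩ else 0) := by
  classical
  rw [kpoly, kpoly, map_sum]
  rw [Finset.sum_image (fun x _ y _ h => Subtype.ext h)]
  refine Finset.sum_congr rfl (fun i hi => ?_)
  rw [map_mul, rename_C, ← Finset.image_erase Subtype.val_injective,
    Finset.prod_image (fun x _ y _ h => Subtype.ext h), map_prod]
  simp only [rename_X]
  congr 1
  rw [dif_pos i.2]

end Kpoly

/-! ### Easy direction -/

section Easy

variable {σ : Type} [Fintype σ] [DecidableEq σ] {b : σ → Fin d → ℂ}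

lemma genPhi_kpoly_zero (hb : ∀ i, b i ≠ 0) {S : Finset σ} {c : σ → ℂ}
    (hrel : ∑ i ∈ S, c i • b i = 0) :
    genPhi b (kpoly S c) = 0 := by
  classical
  set alg := algebraMap (MvPolynomial (Fin d) ℂ) (RatFunField d) with halg
  have hX : ∀ i : σ, genPhi b (X i) = (alg (Lf (b i)))⁻¹ := fun i => by
    rw [genPhi]; exact eval₂Hom_X' _ _ _
  have h1 : genPhi b (kpoly S c)
      = ∑ i ∈ S, alg (C (c i)) * ∏ j ∈ S.erase i, (alg (Lf (b j)))⁻¹ := by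
    rw [kpoly, map_sum]
    refine Finset.sum_congr rfl (fun i _ => ?_)
    rw [map_mul, map_prod, genPhi_C]
    simp only [hX]
    rfl
  rw [h1]
  have h2 : ∀ i ∈ S, (∏ j ∈ S.erase i, (alg (Lf (b j)))⁻¹)
      = alg (Lf (b i)) * ∏ j ∈ S, (alg (Lf (b j)))⁻¹ := by
    intro i hi
    rw [← Finset.mul_prod_erase S (fun j => (alg (Lf (b j)))⁻¹) hi, ← mul_assoc,
      mul_inv_cancel₀ (ell_ne_zero b hb i), one_mul]
  rw [Finset.sum_congr rfl (fun i hi => by rw [h2 i hi, ← mul_assoc])]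
  rw [← Finset.sum_mul]
  have h3 : (∑ i ∈ S, alg (C (c i) * Lf (b i))) = 0 := by
    rw [← map_sum alg (fun i => C (c i) * Lf (b i)) S, ← Lf_sum S c b, hrel, Lf_zero, map_zero]
  have h4 : (∑ i ∈ S, alg (C (c i)) * alg (Lf (b i))) = 0 := by
    simpa only [map_mul] using h3
  rw [h4, zero_mul]

lemma circIdeal_le_ker (hb : ∀ i, b i ≠ 0) :
    CircIdeal b ≤ RingHom.ker (genPhi b) := by
  rw [CircIdeal, Ideal.span_le]
  rintro p ⟨S, c, _, hrel, rfl⟩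
  rw [SetLike.mem_coe, RingHom.mem_ker]
  exact genPhi_kpoly_zero hb hrel

end Easy

/-! ### Lemma C : every dependence relation polynomial is in the circuit ideal -/

section LemC

variable {σ : Type} [Fintype σ] [DecidableEq σ] {b : σ → Fin d → ℂ}

lemma kpoly_mem_aux : ∀ (n : ℕ) (S : Finset σ), S.card ≤ n → ∀ c : σ → ℂ,
    (∑ i ∈ S, c i • b i = 0) → kpoly S c ∈ CircIdeal b := by
  intro n
  induction n with
  | zero =>
    intro S hS c _
    rw [Finset.card_eq_zero.1 (Nat.le_zero.1 hS), kpoly, Finset.sum_empty]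
    exact Ideal.zero_mem _
  | succ n IH =>
    intro S hS c hrel
    by_cases hz : ∃ j₀ ∈ S, c j₀ = 0
    · obtain ⟨j₀, hj₀, hc⟩ := hz
      rw [kpoly_erase_zero hj₀ hc]
      refine Ideal.mul_mem_left _ _ (IH (S.erase j₀) ?_ c ?_)
      · rw [Finset.card_erase_of_mem hj₀]
        omega
      · rw [Finset.sum_erase _ (by rw [hc, zero_smul])]
        exact hrel
    · push_neg at hz
      rcases S.eq_empty_or_nonempty with hE | hNE
      · rw [hE, kpoly, Finset.sum_empty]; exact Ideal.zero_mem _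
      obtain ⟨j₁, hj₁⟩ := hNE
      have hdep : DepSetG b S := dep_of_rel hrel hj₁ (hz j₁ hj₁)
      by_cases hcirc : IsCircuitG b S
      · exact Ideal.subset_span ⟨S, c, hcirc, hrel, rfl⟩
      · have hex : ∃ T, T ⊂ S ∧ DepSetG b T := by
          by_contra hno
          push_neg at hno
          exact hcirc ⟨hdep, fun T hT => hno T hT⟩
        obtain ⟨T, hTS, hTdep⟩ := hex
        obtain ⟨g, hgsum, ⟨j₀, hj₀T, hgj₀⟩, hgout⟩ := rel_of_dep hTdep
        have hj₀S : j₀ ∈ S := hTS.subset hj₀T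
        have hgS : ∑ i ∈ S, g i • b i = 0 := by
          rw [← Finset.sum_subset hTS.subset (fun x _ hx => by rw [hgout x hx, zero_smul])]
          exact hgsum
        set s := c j₀ / g j₀ with hs
        have hsplit : kpoly S c = kpoly S (fun i => c i - s * g i) + C s * kpoly S g := by
          rw [← kpoly_add_smul S (fun i => c i - s * g i) g s]
          congr 1
          funext i
          ring
        rw [hsplit]
        refine Ideal.add_mem _ ?_ (Ideal.mul_mem_left _ _ ?_)
        · -- part 1 : the modified relation vanishes at j₀
          have hc'j₀ : c j₀ - s * g j₀ = 0 := by
            rw [hs, div_mul_cancel₀ _ hgj₀, sub_self]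
          have hrel' : ∑ i ∈ S, (c i - s * g i) • b i = 0 := by
            have : ∀ i, (c i - s * g i) • b i = c i • b i - s • (g i • b i) := by
              intro i; rw [sub_smul, smul_smul]
            simp only [this]
            rw [Finset.sum_sub_distrib, hrel, ← Finset.smul_sum, hgS, smul_zero, sub_zero]
          rw [kpoly_erase_zero hj₀S hc'j₀]
          refine Ideal.mul_mem_left _ _ (IH (S.erase j₀) ?_ _ ?_)
          · rw [Finset.card_erase_of_mem hj₀S]; omega
          · rw [Finset.sum_erase _ (by rw [hc'j₀, zero_smul])]
            exact hrel'
        · -- part 2 : g vanishes somewhere in S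
          obtain ⟨j₂, hj₂S, hj₂T⟩ := Finset.exists_of_ssubset hTS
          rw [kpoly_erase_zero hj₂S (hgout j₂ hj₂T)]
          refine Ideal.mul_mem_left _ _ (IH (S.erase j₂) ?_ _ ?_)
          · rw [Finset.card_erase_of_mem hj₂S]; omega
          · rw [Finset.sum_erase _ (by rw [hgout j₂ hj₂T, zero_smul])]
            exact hgS

lemma kpoly_mem {S : Finset σ} {c : σ → ℂ} (hrel : ∑ i ∈ S, c i • b i = 0) :
    kpoly S c ∈ CircIdeal b :=
  kpoly_mem_aux S.card S le_rfl c hrel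

end LemC


/-! ### Support and coefficient helpers -/

section Helpers

variable {σ : Type} [DecidableEq σ]

lemma coeff_sum_monomial (s : Finset (σ →₀ ℕ)) (cf : (σ →₀ ℕ) → ℂ) (m : σ →₀ ℕ) :
    coeff m (∑ μ ∈ s, monomial μ (cf μ)) = if m ∈ s then cf m else 0 := by
  rw [coeff_sum, Finset.sum_congr rfl (fun μ _ => coeff_monomial m μ (cf μ))]
  exact Finset.sum_ite_eq' s m cf

lemma mem_support_sum_monomial' {ι : Type} {s : Finset ι} {g : ι → (σ →₀ ℕ)}
    {cf : ι → ℂ} {m : σ →₀ ℕ}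
    (hm : m ∈ (∑ μ ∈ s, monomial (g μ) (cf μ)).support) : ∃ μ ∈ s, m = g μ := by
  rw [mem_support_iff, coeff_sum] at hm
  obtain ⟨μ, hμ, hne⟩ := Finset.exists_ne_zero_of_sum_ne_zero hm
  rw [coeff_monomial] at hne
  split_ifs at hne with h
  · exact ⟨μ, hμ, h.symm⟩
  · exact absurd rfl hne

lemma exp_le_totalDegree {q : MvPolynomial σ ℂ} {m : σ →₀ ℕ} (hm : m ∈ q.support) (j : σ) :
    m j ≤ q.totalDegree := by
  refine le_trans ?_ (le_totalDegree hm)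
  by_cases h : m j = 0
  · simp [h]
  · exact Finset.single_le_sum (f := fun i => m i) (fun _ _ => Nat.zero_le _)
      (Finsupp.mem_support_iff.2 h)

lemma supp_CX {c : ℂ} {i : σ} {m : σ →₀ ℕ}
    (hm : m ∈ (C c * X i : MvPolynomial σ ℂ).support) {j : σ} (hj : j ≠ i) : m j = 0 := by
  rw [mem_support_iff, coeff_C_mul, coeff_X'] at hm
  split_ifs at hm with h
  · rw [← h, Finsupp.single_apply, if_neg (fun hh => hj hh.symm)]
  · exact absurd (mul_zero c) hm

lemma supp_X {i : σ} {m : σ →₀ ℕ}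
    (hm : m ∈ (X i : MvPolynomial σ ℂ).support) {j : σ} (hj : j ≠ i) : m j = 0 := by
  rw [support_X, Finset.mem_singleton] at hm
  rw [hm, Finsupp.single_apply, if_neg (fun hh => hj hh.symm)]

end Helpers

section Pow

lemma hpow1 {K : Type*} [Field K] {a : K} (ha : a ≠ 0) {k n : ℕ} (h : k ≤ n) :
    a ^ n * (a⁻¹) ^ k = a ^ (n - k) := by
  rw [inv_pow, ← pow_sub₀ a ha h]

lemma hpow2 {K : Type*} [Field K] {a : K} (ha : a ≠ 0) {k n : ℕ} (h : k ≤ n) :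
    a ^ (n - k) * (a⁻¹) ^ n = (a⁻¹) ^ k := by
  rw [pow_sub₀ a ha h, inv_pow, inv_pow, mul_right_comm,
    mul_inv_cancel₀ (pow_ne_zero n ha), one_mul]

end Pow

/-! ### restriction of polynomials to a subtype of variables -/

section ResPoly

variable {σ : Type} [DecidableEq σ]

def resPoly (P : σ → Prop) [DecidablePred P] (u : MvPolynomial σ ℂ) :
    MvPolynomial {x // P x} ℂ :=
  ∑ m ∈ u.support, monomial (Finsupp.subtypeDomain P m) (coeff m u)

lemma rename_resPoly {P : σ → Prop} [DecidablePred P] {u : MvPolynomial σ ℂ}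
    (hu : ∀ m ∈ u.support, ∀ j, ¬ P j → m j = 0) :
    rename (Subtype.val) (resPoly P u) = u := by
  rw [resPoly, map_sum]
  conv_rhs => rw [← support_sum_monomial_coeff u]
  refine Finset.sum_congr rfl (fun m hm => ?_)
  rw [rename_monomial]
  have hkey : Finsupp.mapDomain (Subtype.val) (Finsupp.subtypeDomain P m) = m := by
    ext j
    by_cases hj : P j
    · exact Finsupp.mapDomain_apply Subtype.val_injective (Finsupp.subtypeDomain P m) ⟨j, hj⟩
    · rw [Finsupp.mapDomain_notin_range _ _ (by rw [Subtype.range_coe_subtype]; exact hj),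
        hu m hm j hj]
  rw [hkey]

lemma rename_support_zero {P : σ → Prop} (u : MvPolynomial {x // P x} ℂ) {m : σ →₀ ℕ}
    (hm : m ∈ (rename (Subtype.val) u).support) {j : σ} (hj : ¬ P j) : m j = 0 := by
  classical
  rw [support_rename_of_injective Subtype.val_injective] at hm
  obtain ⟨μ, _, rfl⟩ := Finset.mem_image.1 hm
  exact Finsupp.mapDomain_notin_range _ _ (by rw [Subtype.range_coe_subtype]; exact hj)

end ResPoly

/-! ### transfer of the circuit ideal along a subtype inclusion -/

lemma circIdeal_rename {σ : Type} [Fintype σ] [DecidableEq σ] {b : σ → Fin d → ℂ}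
    {P : σ → Prop} [DecidablePred P] {u : MvPolynomial {x // P x} ℂ}
    (hu : u ∈ CircIdeal (fun i : {x // P x} => b i.1)) :
    rename (Subtype.val) u ∈ CircIdeal b := by
  classical
  refine Submodule.span_induction ?_ ?_ ?_ ?_ hu
  · rintro p ⟨S, c, _, hrel, rfl⟩
    rw [show (∑ i ∈ S, C (c i) * ∏ j ∈ S.erase i, X j : MvPolynomial {x // P x} ℂ)
        = kpoly S c from rfl, rename_kpoly]
    have hrel' : ∑ j ∈ S.image Subtype.val,
        (fun j => if h : P j then c ⟨j, h⟩ else 0) j • b j = 0 := by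
      rw [Finset.sum_image (fun x _ y _ h => Subtype.ext h), ← hrel]
      refine Finset.sum_congr rfl (fun x _ => ?_)
      simp only [dif_pos x.2]
    exact kpoly_mem hrel'
  · rw [map_zero]; exact Ideal.zero_mem _
  · intro x y _ _ hx hy; rw [map_add]; exact Ideal.add_mem _ hx hy
  · intro a x _ hx; rw [smul_eq_mul, map_mul]; exact Ideal.mul_mem_left _ _ hx

/-! ### eliminating variables parallel to `b i₀` -/

lemma subst_reduce {σ : Type} [Fintype σ] [DecidableEq σ] (b : σ → Fin d → ℂ)
    (hb : ∀ i, b i ≠ 0) (i₀ : σ) (p : MvPolynomial σ ℂ) :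
    ∃ q : MvPolynomial σ ℂ, p - q ∈ CircIdeal b ∧
      ∀ m ∈ q.support, ∀ j, (∃ β : ℂ, b j = β • b i₀) → j ≠ i₀ → m j = 0 := by
  classical
  set Bad : σ → Prop := fun j => (∃ β : ℂ, b j = β • b i₀) ∧ j ≠ i₀ with hBad
  have hBadchoice : ∀ j, Bad j → ∃ β : ℂ, b j = β • b i₀ := fun j h => h.1
  set f : σ → MvPolynomial σ ℂ := fun j =>
    if h : Bad j then C ((hBadchoice j h).choose)⁻¹ * X i₀ else X j with hf
  have hfJ : ∀ j, f j - X j ∈ CircIdeal b := by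
    intro j
    by_cases h : Bad j
    · set β := (hBadchoice j h).choose with hβdef
      have hβ : b j = β • b i₀ := (hBadchoice j h).choose_spec
      have hβ0 : β ≠ 0 := by
        intro h0; rw [h0, zero_smul] at hβ; exact hb j hβ
      have hne : i₀ ≠ j := fun hh => h.2 hh.symm
      set c : σ → ℂ := fun i => if i = i₀ then 1 else if i = j then -β⁻¹ else 0 with hc
      have h1 : c i₀ = 1 := if_pos rfl
      have h2 : c j = -β⁻¹ := by simp [hc, h.2]
      have hrel : ∑ i ∈ ({i₀, j} : Finset σ), c i • b i = 0 := by
        rw [Finset.sum_pair hne, h1, h2, hβ, one_smul, smul_smul, neg_mul,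
          inv_mul_cancel₀ hβ0, neg_smul, one_smul, add_neg_cancel]
      have hcirc : IsCircuitG b ({i₀, j} : Finset σ) := by
        constructor
        · refine dep_of_rel hrel (j₀ := j) (by simp) ?_
          rw [h2]
          exact neg_ne_zero.2 (inv_ne_zero hβ0)
        · intro T hT
          apply indep_small hb
          have hlt := Finset.card_lt_card hT
          rw [Finset.card_pair hne] at hlt
          omega
      have e1 : ({i₀, j} : Finset σ).erase i₀ = {j} := by
        rw [Finset.erase_insert (by simp [hne])]
      have e2 : ({i₀, j} : Finset σ).erase j = {i₀} := by
        rw [Finset.pair_comm, Finset.erase_insert (by simp [Ne.symm hne])]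
      have hkp : kpoly ({i₀, j} : Finset σ) c = X j - C β⁻¹ * X i₀ := by
        rw [kpoly, Finset.sum_pair hne, e1, e2, Finset.prod_singleton,
          Finset.prod_singleton, h1, h2, map_one, one_mul, map_neg]
        ring
      have hgen : kpoly ({i₀, j} : Finset σ) c ∈ CircIdeal b :=
        Ideal.subset_span ⟨_, c, hcirc, hrel, rfl⟩
      rw [hf]
      simp only [dif_pos h]
      have hform : C β⁻¹ * X i₀ - X j = -(kpoly ({i₀, j} : Finset σ) c) := by
        rw [hkp]; ring
      rw [show ((hBadchoice j h).choose)⁻¹ = β⁻¹ from rfl, hform]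
      exact neg_mem hgen
    · rw [hf]; simp only [dif_neg h, sub_self]; exact Ideal.zero_mem _
  have hdiff : ∀ p : MvPolynomial σ ℂ, p - aeval f p ∈ CircIdeal b := by
    intro p
    induction p using MvPolynomial.induction_on with
    | C a =>
      rw [aeval_C, MvPolynomial.algebraMap_eq, sub_self]
      exact Ideal.zero_mem _
    | add p q hp hq =>
      rw [map_add, show p + q - (aeval f p + aeval f q)
        = (p - aeval f p) + (q - aeval f q) from by ring]
      exact Ideal.add_mem _ hp hq
    | mul_X p j hp =>
      rw [map_mul, aeval_X, show p * X j - aeval f p * f j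
        = (p - aeval f p) * X j - aeval f p * (f j - X j) from by ring]
      exact Ideal.sub_mem _ (Ideal.mul_mem_right _ _ hp) (Ideal.mul_mem_left _ _ (hfJ j))
  have hsupp : ∀ p : MvPolynomial σ ℂ, ∀ m ∈ (aeval f p).support, ∀ j, Bad j → m j = 0 := by
    intro p
    induction p using MvPolynomial.induction_on with
    | C a =>
      intro m hm j hj
      rw [aeval_C, MvPolynomial.algebraMap_eq, mem_support_iff, coeff_C] at hm
      split_ifs at hm with h0
      · rw [← h0]; rfl
      · exact absurd rfl hm
    | add p q hp hq =>
      intro m hm j hj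
      rw [map_add] at hm
      rcases Finset.mem_union.1 (MvPolynomial.support_add hm) with h | h
      · exact hp m h j hj
      · exact hq m h j hj
    | mul_X p j' hp =>
      intro m hm j hj
      rw [map_mul, aeval_X] at hm
      obtain ⟨m1, hm1, m2, hm2, rfl⟩ := Finset.mem_add.1 (MvPolynomial.support_mul _ _ hm)
      rw [Finsupp.add_apply, hp m1 hm1 j hj]
      rw [zero_add]
      by_cases hBj' : Bad j'
      · rw [hf] at hm2
        simp only [dif_pos hBj'] at hm2
        exact supp_CX hm2 hj.2
      · rw [hf] at hm2
        simp only [dif_neg hBj'] at hm2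
        exact supp_X hm2 (fun hh => hBj' (hh ▸ hj))
  exact ⟨aeval f p, hdiff p, fun m hm j h1 h2 => hsupp p m hm j ⟨h1, h2⟩⟩

/-! ### the projected configuration and the substitution `ρ` -/

def resCfg {σ : Type} (b : σ → Fin d → ℂ) (i₀ : σ) (w : Fin d → ℂ) : σ → Fin d → ℂ :=
  fun j => b j - (∑ k, b j k * w k) • b i₀

lemma Lf_sub_smul (v u : Fin d → ℂ) (s : ℂ) : Lf (v - s • u) = Lf v - C s * Lf u := by
  rw [sub_eq_add_neg v (s • u), ← neg_smul, Lf_add, Lf_smul, map_neg, neg_mul,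
    ← sub_eq_add_neg]

lemma rho_Lf (u w v : Fin d → ℂ) :
    aeval (fun k => X k - C (w k) * Lf u) (Lf v) = Lf (v - (∑ k, v k * w k) • u) := by
  rw [Lf_sub_smul]
  rw [show Lf v = ∑ k : Fin d, C (v k) * X k from rfl, map_sum]
  have h1 : ∀ k : Fin d, (aeval (fun k => X k - C (w k) * Lf u)) (C (v k) * X k)
      = C (v k) * X k - C (v k * w k) * Lf u := by
    intro k
    rw [map_mul, aeval_X, aeval_C, MvPolynomial.algebraMap_eq, mul_sub, C_mul]
    ring
  rw [Finset.sum_congr rfl (fun k _ => h1 k), Finset.sum_sub_distrib]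
  congr 1
  rw [← Finset.sum_mul, ← map_sum]

/-! ### extraction of the top `ℓ_{i₀}`-adic coefficient -/

lemma extraction {σ : Type} [Fintype σ] [DecidableEq σ]
    (b : σ → Fin d → ℂ) (hb : ∀ i, b i ≠ 0) (i₀ : σ) (w : Fin d → ℂ)
    (hw : (∑ k, b i₀ k * w k) = 1)
    (q : MvPolynomial σ ℂ) (M1 : ℕ)
    (hq1 : ∀ m ∈ q.support, ∀ j, (∃ β : ℂ, b j = β • b i₀) → j ≠ i₀ → m j = 0)
    (hq2 : ∀ m ∈ q.support, m i₀ ≤ M1)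
    (hphi : genPhi b q = 0) :
    genPhi (resCfg b i₀ w)
      (∑ m ∈ q.support.filter (fun m => m i₀ = M1),
        monomial (m - Finsupp.single i₀ M1) (coeff m q)) = 0 := by
  classical
  have hE1 : (∑ m ∈ q.support,
      algebraMap (MvPolynomial (Fin d) ℂ) (RatFunField d) (C (coeff m q)) *
      ∏ i : σ, ((algebraMap (MvPolynomial (Fin d) ℂ) (RatFunField d) (Lf (b i)))⁻¹) ^ m i) = 0 := by
    rw [← genPhi_eq_sum b q]; exact hphi
  set t' : Finset σ := Finset.univ.filter (fun j => ¬ ∃ β : ℂ, b j = β • b i₀) with ht'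
  have hi₀t' : i₀ ∉ t' := by
    rw [ht', Finset.mem_filter]
    rintro ⟨-, hcon⟩
    exact hcon ⟨1, (one_smul ℂ (b i₀)).symm⟩
  have ht'mem : ∀ j ∈ t', ¬ ∃ β : ℂ, b j = β • b i₀ := fun j hj => (Finset.mem_filter.1 hj).2
  have hins : ∀ m ∈ q.support,
      (∏ i : σ, ((algebraMap (MvPolynomial (Fin d) ℂ) (RatFunField d) (Lf (b i)))⁻¹) ^ m i)
        = ((algebraMap (MvPolynomial (Fin d) ℂ) (RatFunField d) (Lf (b i₀)))⁻¹) ^ m i₀ *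
          ∏ j ∈ t', ((algebraMap (MvPolynomial (Fin d) ℂ) (RatFunField d) (Lf (b j)))⁻¹) ^ m j := by
    intro m hm
    refine Eq.trans ?_ (Finset.prod_insert
      (f := fun i => ((algebraMap (MvPolynomial (Fin d) ℂ) (RatFunField d)) (Lf (b i)))⁻¹ ^ m i)
      hi₀t')
    refine (Finset.prod_subset (Finset.subset_univ _) ?_).symm
    intro i _ hi
    have hii₀ : i ≠ i₀ := fun h => hi (by rw [h]; exact Finset.mem_insert_self _ _)
    have hiPara : (∃ β : ℂ, b i = β • b i₀) := by
      by_contra hcon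
      exact hi (Finset.mem_insert.2 (Or.inr (Finset.mem_filter.2 ⟨Finset.mem_univ _, hcon⟩)))
    rw [hq1 m hm i hiPara hii₀, pow_zero]
  have hE3 : (∑ m ∈ q.support, C (coeff m q) *
      (Lf (b i₀) ^ (M1 - m i₀) * ∏ j ∈ t', Lf (b j) ^ (q.totalDegree - m j))) = 0 := by
    apply alg_inj (d := d)
    rw [map_zero, map_sum]
    have hterm : ∀ m ∈ q.support,
        algebraMap (MvPolynomial (Fin d) ℂ) (RatFunField d)
          (C (coeff m q) * (Lf (b i₀) ^ (M1 - m i₀) *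
            ∏ j ∈ t', Lf (b j) ^ (q.totalDegree - m j)))
        = (algebraMap (MvPolynomial (Fin d) ℂ) (RatFunField d) (Lf (b i₀)) ^ M1 *
            ∏ j ∈ t', algebraMap (MvPolynomial (Fin d) ℂ) (RatFunField d) (Lf (b j))
              ^ q.totalDegree) *
          (algebraMap (MvPolynomial (Fin d) ℂ) (RatFunField d) (C (coeff m q)) *
            ∏ i : σ, ((algebraMap (MvPolynomial (Fin d) ℂ) (RatFunField d) (Lf (b i)))⁻¹)
              ^ m i) := by
      intro m hm
      rw [hins m hm, map_mul, map_mul, map_pow, map_prod]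
      simp only [map_pow]
      rw [show algebraMap (MvPolynomial (Fin d) ℂ) (RatFunField d) (Lf (b i₀)) ^ (M1 - m i₀)
            = algebraMap (MvPolynomial (Fin d) ℂ) (RatFunField d) (Lf (b i₀)) ^ M1 *
              ((algebraMap (MvPolynomial (Fin d) ℂ) (RatFunField d) (Lf (b i₀)))⁻¹) ^ m i₀
          from (hpow1 (ell_ne_zero b hb i₀) (hq2 m hm)).symm,
        show (∏ j ∈ t', algebraMap (MvPolynomial (Fin d) ℂ) (RatFunField d) (Lf (b j))
              ^ (q.totalDegree - m j))
            = ∏ j ∈ t', algebraMap (MvPolynomial (Fin d) ℂ) (RatFunField d) (Lf (b j))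
                ^ q.totalDegree *
              ((algebraMap (MvPolynomial (Fin d) ℂ) (RatFunField d) (Lf (b j)))⁻¹) ^ m j
          from Finset.prod_congr rfl (fun j _ =>
            (hpow1 (ell_ne_zero b hb j) (exp_le_totalDegree hm j)).symm),
        Finset.prod_mul_distrib]
      ring
    rw [Finset.sum_congr rfl hterm, ← Finset.mul_sum, hE1, mul_zero]
  have hρLi₀ : aeval (fun k => X k - C (w k) * Lf (b i₀)) (Lf (b i₀)) = 0 := by
    rw [rho_Lf, hw, one_smul, sub_self, Lf_zero]
  have hρL : ∀ j : σ, aeval (fun k => X k - C (w k) * Lf (b i₀)) (Lf (b j))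
      = Lf (resCfg b i₀ w j) := by
    intro j; rw [rho_Lf]; rfl
  have hE4 : (∑ m ∈ q.support, C (coeff m q) *
      ((0 : MvPolynomial (Fin d) ℂ) ^ (M1 - m i₀) *
        ∏ j ∈ t', Lf (resCfg b i₀ w j) ^ (q.totalDegree - m j))) = 0 := by
    have h := congrArg (aeval (fun k => X k - C (w k) * Lf (b i₀))) hE3
    rw [map_zero, map_sum] at h
    refine Eq.trans ?_ h
    refine (Finset.sum_congr rfl (fun m hm => ?_)).symm
    rw [map_mul, map_mul, map_pow, map_prod, hρLi₀]
    rw [show (aeval (fun k => X k - C (w k) * Lf (b i₀))) (C (coeff m q)) = C (coeff m q)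
      from by rw [aeval_C, MvPolynomial.algebraMap_eq]]
    rw [Finset.prod_congr rfl (fun j _ => by rw [map_pow, hρL j])]
  have hE5 : (∑ m ∈ q.support.filter (fun m => m i₀ = M1), C (coeff m q) *
      ∏ j ∈ t', Lf (resCfg b i₀ w j) ^ (q.totalDegree - m j)) = 0 := by
    rw [Finset.sum_filter]
    refine Eq.trans ?_ hE4
    refine Finset.sum_congr rfl (fun m hm => ?_)
    by_cases h : m i₀ = M1
    · rw [if_pos h, h, Nat.sub_self, pow_zero, one_mul]
    · rw [if_neg h, zero_pow (Nat.sub_ne_zero_of_lt (lt_of_le_of_ne (hq2 m hm) h)),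
        zero_mul, mul_zero]
  have hres_ne : ∀ j ∈ t', algebraMap (MvPolynomial (Fin d) ℂ) (RatFunField d)
      (Lf (resCfg b i₀ w j)) ≠ 0 := by
    intro j hj
    refine ell_ne_zero' ?_
    intro h0
    have hbj : b j = (∑ k, b j k * w k) • b i₀ := sub_eq_zero.1 h0
    exact ht'mem j hj ⟨_, hbj⟩
  have hA : (∑ m ∈ q.support.filter (fun m => m i₀ = M1),
      algebraMap (MvPolynomial (Fin d) ℂ) (RatFunField d) (C (coeff m q)) *
      ∏ j ∈ t', (algebraMap (MvPolynomial (Fin d) ℂ) (RatFunField d)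
        (Lf (resCfg b i₀ w j))) ^ (q.totalDegree - m j)) = 0 := by
    have h := congrArg (algebraMap (MvPolynomial (Fin d) ℂ) (RatFunField d)) hE5
    rw [map_zero, map_sum] at h
    refine Eq.trans ?_ h
    refine (Finset.sum_congr rfl (fun m hm => ?_)).symm
    rw [map_mul, map_prod]
    simp only [map_pow]
  have hE6 : (∑ m ∈ q.support.filter (fun m => m i₀ = M1),
      algebraMap (MvPolynomial (Fin d) ℂ) (RatFunField d) (C (coeff m q)) *
      ∏ j ∈ t', ((algebraMap (MvPolynomial (Fin d) ℂ) (RatFunField d)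
        (Lf (resCfg b i₀ w j)))⁻¹) ^ m j) = 0 := by
    have h2 := congrArg (fun z => z * ∏ j ∈ t',
      ((algebraMap (MvPolynomial (Fin d) ℂ) (RatFunField d)
        (Lf (resCfg b i₀ w j)))⁻¹) ^ q.totalDegree) hA
    simp only [zero_mul] at h2
    refine Eq.trans ?_ h2
    rw [Finset.sum_mul]
    refine Finset.sum_congr rfl (fun m hm => ?_)
    rw [mul_assoc, ← Finset.prod_mul_distrib]
    congr 1
    refine Finset.prod_congr rfl (fun j hj => ?_)
    exact (hpow2 (hres_ne j hj) (exp_le_totalDegree (Finset.mem_filter.1 hm).1 j)).symm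
  rw [map_sum]
  refine Eq.trans (Finset.sum_congr rfl
    (fun m _ => genPhi_monomial (resCfg b i₀ w) _ _)) ?_
  refine Eq.trans ?_ hE6
  refine Finset.sum_congr rfl (fun m hm => ?_)
  congr 1
  have hm' := Finset.mem_filter.1 hm
  refine Eq.trans ((Finset.prod_subset (Finset.subset_univ t') ?_).symm) ?_
  · intro i _ hi
    have hzero : (m - Finsupp.single i₀ M1) i = 0 := by
      by_cases hii : i = i₀
      · subst hii
        rw [Finsupp.tsub_apply, Finsupp.single_eq_same, hm'.2, Nat.sub_self]
      · have hiPara : ∃ β : ℂ, b i = β • b i₀ := by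
          by_contra hcon
          exact hi (Finset.mem_filter.2 ⟨Finset.mem_univ _, hcon⟩)
        rw [Finsupp.tsub_apply, Finsupp.single_eq_of_ne' (Ne.symm hii), Nat.sub_zero]
        exact hq1 m hm'.1 i hiPara hii
    rw [hzero, pow_zero]
  · refine Finset.prod_congr rfl (fun j hj => ?_)
    have hji₀ : j ≠ i₀ := fun h => hi₀t' (h ▸ hj)
    rw [Finsupp.tsub_apply, Finsupp.single_eq_of_ne' (Ne.symm hji₀), Nat.sub_zero]


/-! ### lifting circuit relations of the projected configuration -/

lemma lift_gen {σ : Type} [Fintype σ] [DecidableEq σ]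
    (b : σ → Fin d → ℂ) (i₀ : σ) (w : Fin d → ℂ)
    (S : Finset {x : σ // ¬ ∃ β : ℂ, b x = β • b i₀})
    (c : {x : σ // ¬ ∃ β : ℂ, b x = β • b i₀} → ℂ)
    (hrel : ∑ i ∈ S, c i • resCfg b i₀ w i.1 = 0) :
    ∃ r : MvPolynomial {x : σ // ¬ ∃ β : ℂ, b x = β • b i₀} ℂ,
      X i₀ * rename Subtype.val (kpoly S c) - rename Subtype.val r ∈ CircIdeal b := by
  classical
  have hi₀S' : i₀ ∉ (S.image Subtype.val) := by
    intro hmem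
    obtain ⟨x, _, hx⟩ := Finset.mem_image.1 hmem
    exact absurd ⟨1, (one_smul ℂ (b i₀)).symm⟩ (hx ▸ x.2)
  have hrelS' : ∑ j ∈ (S.image Subtype.val), (fun j : σ => if h : ¬ ∃ β : ℂ, b j = β • b i₀ then c ⟨j, h⟩ else 0) j • resCfg b i₀ w j = 0 := by
    rw [Finset.sum_image (fun x _ y _ h => Subtype.ext h), ← hrel]
    refine Finset.sum_congr rfl (fun x _ => ?_)
    simp only [dif_pos x.2]
  have hlift : ∑ j ∈ (S.image Subtype.val), (fun j : σ => if h : ¬ ∃ β : ℂ, b j = β • b i₀ then c ⟨j, h⟩ else 0) j • b j = (∑ j ∈ (S.image Subtype.val), (fun j : σ => if h : ¬ ∃ β : ℂ, b j = β • b i₀ then c ⟨j, h⟩ else 0) j * (∑ k, b j k * w k)) • b i₀ := by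
    have hexp : ∀ j, (fun j : σ => if h : ¬ ∃ β : ℂ, b j = β • b i₀ then c ⟨j, h⟩ else 0) j • resCfg b i₀ w j
        = (fun j : σ => if h : ¬ ∃ β : ℂ, b j = β • b i₀ then c ⟨j, h⟩ else 0) j • b j - ((fun j : σ => if h : ¬ ∃ β : ℂ, b j = β • b i₀ then c ⟨j, h⟩ else 0) j * (∑ k, b j k * w k)) • b i₀ := by
      intro j
      show (fun j : σ => if h : ¬ ∃ β : ℂ, b j = β • b i₀ then c ⟨j, h⟩ else 0) j • (b j - (∑ k, b j k * w k) • b i₀) = _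
      rw [smul_sub, smul_smul]
    rw [Finset.sum_congr rfl (fun j _ => hexp j), Finset.sum_sub_distrib,
      sub_eq_zero] at hrelS'
    rw [hrelS', Finset.sum_smul]
  have hrel2 : ∑ i ∈ insert i₀ (S.image Subtype.val), (Function.update (fun j : σ => if h : ¬ ∃ β : ℂ, b j = β • b i₀ then c ⟨j, h⟩ else 0) i₀ (-(∑ j ∈ (S.image Subtype.val), (fun j : σ => if h : ¬ ∃ β : ℂ, b j = β • b i₀ then c ⟨j, h⟩ else 0) j * (∑ k, b j k * w k)))) i • b i = 0 := by
    rw [Finset.sum_insert hi₀S', Function.update_self]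
    have hstep : ∀ i ∈ (S.image Subtype.val), (Function.update (fun j : σ => if h : ¬ ∃ β : ℂ, b j = β • b i₀ then c ⟨j, h⟩ else 0) i₀ (-(∑ j ∈ (S.image Subtype.val), (fun j : σ => if h : ¬ ∃ β : ℂ, b j = β • b i₀ then c ⟨j, h⟩ else 0) j * (∑ k, b j k * w k)))) i • b i = (fun j : σ => if h : ¬ ∃ β : ℂ, b j = β • b i₀ then c ⟨j, h⟩ else 0) i • b i := by
      intro i hi
      rw [Function.update_of_ne (fun h => hi₀S' (by rw [h] at hi; exact hi))]
    rw [Finset.sum_congr rfl hstep, hlift, neg_smul, neg_add_cancel]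
  have hkmem : kpoly (insert i₀ (S.image Subtype.val)) (Function.update (fun j : σ => if h : ¬ ∃ β : ℂ, b j = β • b i₀ then c ⟨j, h⟩ else 0) i₀ (-(∑ j ∈ (S.image Subtype.val), (fun j : σ => if h : ¬ ∃ β : ℂ, b j = β • b i₀ then c ⟨j, h⟩ else 0) j * (∑ k, b j k * w k)))) ∈ CircIdeal b := kpoly_mem hrel2
  have hsplit : kpoly (insert i₀ (S.image Subtype.val)) (Function.update (fun j : σ => if h : ¬ ∃ β : ℂ, b j = β • b i₀ then c ⟨j, h⟩ else 0) i₀ (-(∑ j ∈ (S.image Subtype.val), (fun j : σ => if h : ¬ ∃ β : ℂ, b j = β • b i₀ then c ⟨j, h⟩ else 0) j * (∑ k, b j k * w k))))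
      = X i₀ * kpoly (S.image Subtype.val) (fun j : σ => if h : ¬ ∃ β : ℂ, b j = β • b i₀ then c ⟨j, h⟩ else 0) - C (∑ j ∈ (S.image Subtype.val), (fun j : σ => if h : ¬ ∃ β : ℂ, b j = β • b i₀ then c ⟨j, h⟩ else 0) j * (∑ k, b j k * w k)) * ∏ j ∈ (S.image Subtype.val), X j := by
    rw [kpoly, Finset.sum_insert hi₀S', Finset.erase_insert hi₀S']
    have hterm : ∀ i ∈ (S.image Subtype.val), C ((Function.update (fun j : σ => if h : ¬ ∃ β : ℂ, b j = β • b i₀ then c ⟨j, h⟩ else 0) i₀ (-(∑ j ∈ (S.image Subtype.val), (fun j : σ => if h : ¬ ∃ β : ℂ, b j = β • b i₀ then c ⟨j, h⟩ else 0) j * (∑ k, b j k * w k)))) i) * ∏ j ∈ (insert i₀ (S.image Subtype.val)).erase i, X j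
        = X i₀ * (C ((fun j : σ => if h : ¬ ∃ β : ℂ, b j = β • b i₀ then c ⟨j, h⟩ else 0) i) * ∏ j ∈ (S.image Subtype.val).erase i, X j) := by
      intro i hi
      have hii₀ : i₀ ≠ i := fun h => hi₀S' (by rw [← h] at hi; exact hi)
      rw [Finset.erase_insert_of_ne hii₀,
        Finset.prod_insert (fun hmem => hi₀S' (Finset.mem_of_mem_erase hmem)),
        Function.update_of_ne (fun h => hi₀S' (by rw [h] at hi; exact hi))]
      ring
    rw [Finset.sum_congr rfl hterm, ← Finset.mul_sum, Function.update_self, map_neg,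
      neg_mul, show (∑ i ∈ (S.image Subtype.val), C ((fun j : σ => if h : ¬ ∃ β : ℂ, b j = β • b i₀ then c ⟨j, h⟩ else 0) i) * ∏ j ∈ (S.image Subtype.val).erase i, X j)
        = kpoly (S.image Subtype.val) (fun j : σ => if h : ¬ ∃ β : ℂ, b j = β • b i₀ then c ⟨j, h⟩ else 0) from rfl]
    ring
  refine ⟨C (∑ j ∈ (S.image Subtype.val), (fun j : σ => if h : ¬ ∃ β : ℂ, b j = β • b i₀ then c ⟨j, h⟩ else 0) j * (∑ k, b j k * w k)) * ∏ j ∈ S, X j, ?_⟩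
  have hrenr : rename Subtype.val (C (∑ j ∈ (S.image Subtype.val), (fun j : σ => if h : ¬ ∃ β : ℂ, b j = β • b i₀ then c ⟨j, h⟩ else 0) j * (∑ k, b j k * w k)) * ∏ j ∈ S, X j)
      = C (∑ j ∈ (S.image Subtype.val), (fun j : σ => if h : ¬ ∃ β : ℂ, b j = β • b i₀ then c ⟨j, h⟩ else 0) j * (∑ k, b j k * w k)) * ∏ j ∈ (S.image Subtype.val), X j := by
    rw [map_mul, rename_C]
    congr 1
    rw [map_prod, Finset.prod_image (fun x _ y _ h => Subtype.ext h)]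
    exact Finset.prod_congr rfl (fun x _ => rename_X _ _)
  rw [rename_kpoly, hrenr]
  rw [show kpoly (S.image Subtype.val) (fun j => if h : (fun x : σ => ¬ ∃ β : ℂ, b x = β • b i₀) j
      then c ⟨j, h⟩ else 0) = kpoly (S.image Subtype.val) (fun j : σ => if h : ¬ ∃ β : ℂ, b j = β • b i₀ then c ⟨j, h⟩ else 0) from rfl]
  rw [← hsplit]
  exact hkmem

lemma lift_ideal {σ : Type} [Fintype σ] [DecidableEq σ]
    (b : σ → Fin d → ℂ) (i₀ : σ) (w : Fin d → ℂ) :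
    ∀ u ∈ CircIdeal (fun x : {x : σ // ¬ ∃ β : ℂ, b x = β • b i₀} => resCfg b i₀ w x.1),
      ∃ r : MvPolynomial {x : σ // ¬ ∃ β : ℂ, b x = β • b i₀} ℂ,
        X i₀ * rename Subtype.val u - rename Subtype.val r ∈ CircIdeal b := by
  classical
  intro u hu
  refine Submodule.span_induction ?_ ?_ ?_ ?_ hu
  · rintro p ⟨S, c, _, hrel, rfl⟩
    exact lift_gen b i₀ w S c hrel
  · exact ⟨0, by rw [map_zero, mul_zero, sub_zero]; exact Ideal.zero_mem _⟩
  · rintro x y _ _ ⟨r1, hr1⟩ ⟨r2, hr2⟩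
    refine ⟨r1 + r2, ?_⟩
    have h := Ideal.add_mem _ hr1 hr2
    rw [map_add, map_add]
    convert h using 1
    ring
  · rintro a x _ ⟨r, hr⟩
    refine ⟨a * r, ?_⟩
    rw [smul_eq_mul, map_mul, map_mul]
    have h := Ideal.mul_mem_left _ (rename Subtype.val a) hr
    convert h using 1
    ring

/-! ### the main theorem, by induction on the number of vectors -/

theorem genMain : ∀ (N : ℕ) (σ : Type) [Fintype σ] [DecidableEq σ]
    (b : σ → Fin d → ℂ), (∀ i, b i ≠ 0) → Fintype.card σ ≤ N →
    RingHom.ker (genPhi b) = CircIdeal b := by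
  intro N
  induction N with
  | zero =>
    intro σ _ _ b hb hcard
    have hempty : IsEmpty σ := Fintype.card_eq_zero_iff.1 (Nat.le_zero.1 hcard)
    refine le_antisymm ?_ (circIdeal_le_ker hb)
    intro p hp
    obtain ⟨z, rfl⟩ := C_surjective σ p
    rw [RingHom.mem_ker, genPhi_C] at hp
    have h0 : (C z : MvPolynomial (Fin d) ℂ) = 0 := alg_inj (by rw [hp, map_zero])
    have hz : z = 0 := C_injective (Fin d) ℂ (by rw [h0, map_zero])
    rw [hz, map_zero]
    exact Ideal.zero_mem _
  | succ N IH =>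
    intro σ _ _ b hb hcard
    by_cases hsmall : Fintype.card σ ≤ N
    · exact IH σ b hb hsmall
    · have hpos : 0 < Fintype.card σ := by omega
      have hne : Nonempty σ := Fintype.card_pos_iff.1 hpos
      obtain ⟨i₀⟩ := hne
      have hex : ∃ k, b i₀ k ≠ 0 := by
        by_contra hcon
        push_neg at hcon
        exact hb i₀ (funext fun k => hcon k)
      obtain ⟨k₀, hk₀⟩ := hex
      have hw : (∑ k, b i₀ k * (fun k => if k = k₀ then (b i₀ k₀)⁻¹ else 0) k) = 1 := by
        have hh : ∀ k : Fin d, b i₀ k * (fun k => if k = k₀ then (b i₀ k₀)⁻¹ else 0) k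
            = if k = k₀ then b i₀ k₀ * (b i₀ k₀)⁻¹ else 0 := by
          intro k
          by_cases h : k = k₀
          · subst h; simp
          · simp [h]
        rw [Finset.sum_congr rfl (fun k _ => hh k), Finset.sum_ite_eq' Finset.univ k₀,
          if_pos (Finset.mem_univ _), mul_inv_cancel₀ hk₀]
      set w : Fin d → ℂ := fun k => if k = k₀ then (b i₀ k₀)⁻¹ else 0 with hwdef
      letI : DecidablePred (fun x : σ => ¬ ∃ β : ℂ, b x = β • b i₀) := Classical.decPred _
      have hcard' : Fintype.card {x : σ // ¬ ∃ β : ℂ, b x = β • b i₀} ≤ N := by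
        have hlt : Fintype.card {x : σ // ¬ ∃ β : ℂ, b x = β • b i₀} < Fintype.card σ :=
          Fintype.card_subtype_lt (x := i₀)
            (not_not_intro ⟨1, (one_smul ℂ (b i₀)).symm⟩)
        omega
      -- the inner induction on the degree in `X i₀`
      have inner : ∀ (M1 : ℕ) (q : MvPolynomial σ ℂ),
          (∀ m ∈ q.support, ∀ j, (∃ β : ℂ, b j = β • b i₀) → j ≠ i₀ → m j = 0) →
          (∀ m ∈ q.support, m i₀ ≤ M1) → genPhi b q = 0 → q ∈ CircIdeal b := by
        intro M1
        induction M1 with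
        | zero =>
          intro q hs hdeg hphi
          have hq0 : ∀ m ∈ q.support, ∀ j, ¬ (¬ ∃ β : ℂ, b j = β • b i₀) → m j = 0 := by
            intro m hm j hj
            rw [not_not] at hj
            by_cases hji : j = i₀
            · subst hji
              exact Nat.le_zero.1 (hdeg m hm)
            · exact hs m hm j hj hji
          have hren : rename Subtype.val
              (resPoly (fun x : σ => ¬ ∃ β : ℂ, b x = β • b i₀) q) = q :=
            rename_resPoly hq0
          have hphi' : genPhi (fun x : {x : σ // ¬ ∃ β : ℂ, b x = β • b i₀} => b x.1)
              (resPoly (fun x : σ => ¬ ∃ β : ℂ, b x = β • b i₀) q) = 0 := by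
            have h1 := genPhi_rename b (Subtype.val)
              (resPoly (fun x : σ => ¬ ∃ β : ℂ, b x = β • b i₀) q)
            rw [hren] at h1
            exact h1.symm.trans hphi
          have hker := IH {x : σ // ¬ ∃ β : ℂ, b x = β • b i₀}
            (fun x => b x.1) (fun x => hb x.1) hcard'
          have hmem : resPoly (fun x : σ => ¬ ∃ β : ℂ, b x = β • b i₀) q
              ∈ CircIdeal (fun x : {x : σ // ¬ ∃ β : ℂ, b x = β • b i₀} => b x.1) := by
            rw [← hker]
            exact hphi'
          rw [← hren]
          exact circIdeal_rename hmem
        | succ M IH2 =>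
          intro q hs hdeg hphi
          have hext := extraction b hb i₀ w hw q (M + 1) hs hdeg hphi
          have hqdiv_supp : ∀ m ∈ (∑ μ ∈ q.support.filter (fun m : σ →₀ ℕ => m i₀ = M + 1),
              monomial (μ - Finsupp.single i₀ (M + 1)) (coeff μ q)).support,
              ∀ j, ¬ (¬ ∃ β : ℂ, b j = β • b i₀) → m j = 0 := by
            intro m hm j hj
            rw [not_not] at hj
            obtain ⟨μ, hμF, rfl⟩ := mem_support_sum_monomial' hm
            have hμsupp : μ ∈ q.support := (Finset.mem_filter.1 hμF).1
            have hμtop : μ i₀ = M + 1 := (Finset.mem_filter.1 hμF).2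
            by_cases hji : j = i₀
            · subst hji
              rw [Finsupp.tsub_apply, Finsupp.single_eq_same, hμtop, Nat.sub_self]
            · rw [Finsupp.tsub_apply, Finsupp.single_eq_of_ne' (Ne.symm hji), Nat.sub_zero]
              exact hs μ hμsupp j hj hji
          have hren : rename Subtype.val
              (resPoly (fun x : σ => ¬ ∃ β : ℂ, b x = β • b i₀)
                (∑ μ ∈ q.support.filter (fun m : σ →₀ ℕ => m i₀ = M + 1),
                  monomial (μ - Finsupp.single i₀ (M + 1)) (coeff μ q)))
              = ∑ μ ∈ q.support.filter (fun m : σ →₀ ℕ => m i₀ = M + 1),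
                  monomial (μ - Finsupp.single i₀ (M + 1)) (coeff μ q) :=
            rename_resPoly hqdiv_supp
          have hphi'' : genPhi
              (fun x : {x : σ // ¬ ∃ β : ℂ, b x = β • b i₀} => resCfg b i₀ w x.1)
              (resPoly (fun x : σ => ¬ ∃ β : ℂ, b x = β • b i₀)
                (∑ μ ∈ q.support.filter (fun m : σ →₀ ℕ => m i₀ = M + 1),
                  monomial (μ - Finsupp.single i₀ (M + 1)) (coeff μ q))) = 0 := by
            have h1 := genPhi_rename (resCfg b i₀ w) (Subtype.val)
              (resPoly (fun x : σ => ¬ ∃ β : ℂ, b x = β • b i₀)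
                (∑ μ ∈ q.support.filter (fun m : σ →₀ ℕ => m i₀ = M + 1),
                  monomial (μ - Finsupp.single i₀ (M + 1)) (coeff μ q)))
            rw [hren] at h1
            exact h1.symm.trans hext
          have hres_nz : ∀ x : {x : σ // ¬ ∃ β : ℂ, b x = β • b i₀},
              resCfg b i₀ w x.1 ≠ 0 := by
            intro x h0
            exact x.2 ⟨∑ k, b x.1 k * w k, sub_eq_zero.1 h0⟩
          have hker2 := IH {x : σ // ¬ ∃ β : ℂ, b x = β • b i₀}
            (fun x => resCfg b i₀ w x.1) hres_nz hcard'
          have hmem2 : resPoly (fun x : σ => ¬ ∃ β : ℂ, b x = β • b i₀)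
              (∑ μ ∈ q.support.filter (fun m : σ →₀ ℕ => m i₀ = M + 1),
                monomial (μ - Finsupp.single i₀ (M + 1)) (coeff μ q))
              ∈ CircIdeal (fun x : {x : σ // ¬ ∃ β : ℂ, b x = β • b i₀} =>
                  resCfg b i₀ w x.1) := by
            rw [← hker2]
            exact hphi''
          obtain ⟨r, hr⟩ := lift_ideal b i₀ w _ hmem2
          rw [hren] at hr
          -- hr : X i₀ * qdiv - rename Subtype.val r ∈ CircIdeal b
          have hdiffJ : q - (q - (X i₀ ^ (M + 1) *
              (∑ μ ∈ q.support.filter (fun m : σ →₀ ℕ => m i₀ = M + 1),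
                monomial (μ - Finsupp.single i₀ (M + 1)) (coeff μ q)))
              + X i₀ ^ M * rename Subtype.val r) ∈ CircIdeal b := by
            have heq : q - (q - (X i₀ ^ (M + 1) *
                (∑ μ ∈ q.support.filter (fun m : σ →₀ ℕ => m i₀ = M + 1),
                  monomial (μ - Finsupp.single i₀ (M + 1)) (coeff μ q)))
                + X i₀ ^ M * rename Subtype.val r)
                = X i₀ ^ M * (X i₀ * (∑ μ ∈ q.support.filter (fun m : σ →₀ ℕ => m i₀ = M + 1),
                    monomial (μ - Finsupp.single i₀ (M + 1)) (coeff μ q))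
                  - rename Subtype.val r) := by
              ring
            rw [heq]
            exact Ideal.mul_mem_left _ _ hr
          have hXq : X i₀ ^ (M + 1) * (∑ μ ∈ q.support.filter (fun m : σ →₀ ℕ => m i₀ = M + 1),
              monomial (μ - Finsupp.single i₀ (M + 1)) (coeff μ q))
              = ∑ μ ∈ q.support.filter (fun m : σ →₀ ℕ => m i₀ = M + 1), monomial μ (coeff μ q) := by
            rw [Finset.mul_sum]
            refine Finset.sum_congr rfl (fun μ hμ => ?_)
            rw [X_pow_eq_monomial, monomial_mul, one_mul]
            have hle : Finsupp.single i₀ (M + 1) ≤ μ :=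
              Finsupp.single_le_iff.2 (le_of_eq (Finset.mem_filter.1 hμ).2.symm)
            rw [add_tsub_cancel_of_le hle]
          have hqtop_coeff : ∀ m, coeff m (X i₀ ^ (M + 1) *
              (∑ μ ∈ q.support.filter (fun m : σ →₀ ℕ => m i₀ = M + 1),
                monomial (μ - Finsupp.single i₀ (M + 1)) (coeff μ q)))
              = if m ∈ q.support.filter (fun m : σ →₀ ℕ => m i₀ = M + 1) then coeff m q else 0 := by
            intro m
            rw [hXq, coeff_sum_monomial]
          have hthird_zero : ∀ m : σ →₀ ℕ, m i₀ ≠ M →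
              coeff m (X i₀ ^ M * rename Subtype.val r) = 0 := by
            intro m hmM
            by_contra h3n
            have hmem := mem_support_iff.2 h3n
            obtain ⟨m1, hm1, m2, hm2, heq⟩ :=
              Finset.mem_add.1 (MvPolynomial.support_mul _ _ hmem)
            rw [X_pow_eq_monomial] at hm1
            have hm1eq : m1 = Finsupp.single i₀ M :=
              Finset.mem_singleton.1 (support_monomial_subset hm1)
            have hm2i₀ : m2 i₀ = 0 :=
              rename_support_zero r hm2 (not_not_intro ⟨1, (one_smul ℂ (b i₀)).symm⟩)
            apply hmM
            rw [← heq, Finsupp.add_apply, hm1eq, Finsupp.single_eq_same, hm2i₀, add_zero]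
          have hphiq' : genPhi b (q - (X i₀ ^ (M + 1) *
              (∑ μ ∈ q.support.filter (fun m : σ →₀ ℕ => m i₀ = M + 1),
                monomial (μ - Finsupp.single i₀ (M + 1)) (coeff μ q)))
              + X i₀ ^ M * rename Subtype.val r) = 0 := by
            have h1 : genPhi b (q - (q - (X i₀ ^ (M + 1) *
                (∑ μ ∈ q.support.filter (fun m : σ →₀ ℕ => m i₀ = M + 1),
                  monomial (μ - Finsupp.single i₀ (M + 1)) (coeff μ q)))
                + X i₀ ^ M * rename Subtype.val r)) = 0 :=
              RingHom.mem_ker.1 (circIdeal_le_ker hb hdiffJ)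
            rw [map_sub, hphi, zero_sub, neg_eq_zero] at h1
            exact h1
          have hs' : ∀ m : σ →₀ ℕ, m ∈ (q - (X i₀ ^ (M + 1) *
              (∑ μ ∈ q.support.filter (fun m : σ →₀ ℕ => m i₀ = M + 1),
                monomial (μ - Finsupp.single i₀ (M + 1)) (coeff μ q)))
              + X i₀ ^ M * rename Subtype.val r).support →
              ∀ j, (∃ β : ℂ, b j = β • b i₀) → j ≠ i₀ → m j = 0 := by
            intro m hm j hjpar hji
            rcases Finset.mem_union.1 (MvPolynomial.support_add hm) with h1 | h1
            · rcases Finset.mem_union.1 (MvPolynomial.support_sub σ _ _ h1) with h2 | h2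
              · exact hs m h2 j hjpar hji
              · rw [hXq] at h2
                obtain ⟨μ, hμF, hmeq⟩ := mem_support_sum_monomial' h2
                rw [hmeq]
                exact hs μ (Finset.mem_filter.1 hμF).1 j hjpar hji
            · obtain ⟨m1, hm1, m2, hm2, heq⟩ :=
                Finset.mem_add.1 (MvPolynomial.support_mul _ _ h1)
              rw [X_pow_eq_monomial] at hm1
              have hm1eq : m1 = Finsupp.single i₀ M :=
                Finset.mem_singleton.1 (support_monomial_subset hm1)
              have hm2j : m2 j = 0 :=
                rename_support_zero r hm2 (not_not_intro hjpar)
              rw [← heq, Finsupp.add_apply, hm1eq,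
                Finsupp.single_eq_of_ne' (Ne.symm hji), hm2j]
          have hdeg' : ∀ m : σ →₀ ℕ, m ∈ (q - (X i₀ ^ (M + 1) *
              (∑ μ ∈ q.support.filter (fun m : σ →₀ ℕ => m i₀ = M + 1),
                monomial (μ - Finsupp.single i₀ (M + 1)) (coeff μ q)))
              + X i₀ ^ M * rename Subtype.val r).support → m i₀ ≤ M := by
            intro m hm
            by_contra hcon
            push_neg at hcon
            have hzero : coeff m (q - (X i₀ ^ (M + 1) *
                (∑ μ ∈ q.support.filter (fun m : σ →₀ ℕ => m i₀ = M + 1),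
                  monomial (μ - Finsupp.single i₀ (M + 1)) (coeff μ q)))
                + X i₀ ^ M * rename Subtype.val r) = 0 := by
              rw [coeff_add, coeff_sub, hqtop_coeff m, hthird_zero m (by omega), add_zero]
              by_cases hF : m ∈ q.support.filter (fun m : σ →₀ ℕ => m i₀ = M + 1)
              · rw [if_pos hF, sub_self]
              · rw [if_neg hF]
                have hq0 : coeff m q = 0 := by
                  by_contra hne'
                  have hmsupp := mem_support_iff.2 hne'
                  have hle := hdeg m hmsupp
                  exact hF (Finset.mem_filter.2 ⟨hmsupp, by omega⟩)
                rw [hq0, sub_zero]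
            exact (mem_support_iff.1 hm) hzero
          have hq'mem := IH2 (q - (X i₀ ^ (M + 1) *
              (∑ μ ∈ q.support.filter (fun m : σ →₀ ℕ => m i₀ = M + 1),
                monomial (μ - Finsupp.single i₀ (M + 1)) (coeff μ q)))
              + X i₀ ^ M * rename Subtype.val r) hs' hdeg' hphiq'
          have hfin : q = (q - (X i₀ ^ (M + 1) *
              (∑ μ ∈ q.support.filter (fun m : σ →₀ ℕ => m i₀ = M + 1),
                monomial (μ - Finsupp.single i₀ (M + 1)) (coeff μ q)))
              + X i₀ ^ M * rename Subtype.val r)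
              + (q - ((q - (X i₀ ^ (M + 1) *
                (∑ μ ∈ q.support.filter (fun m : σ →₀ ℕ => m i₀ = M + 1),
                  monomial (μ - Finsupp.single i₀ (M + 1)) (coeff μ q)))
                + X i₀ ^ M * rename Subtype.val r))) := by
            ring
          rw [hfin]
          exact Ideal.add_mem _ hq'mem hdiffJ
      -- conclude
      refine le_antisymm ?_ (circIdeal_le_ker hb)
      intro p hp
      rw [RingHom.mem_ker] at hp
      obtain ⟨q, hq_diff, hq_supp⟩ := subst_reduce b hb i₀ p
      have hphiq : genPhi b q = 0 := by
        have h1 : genPhi b (p - q) = 0 :=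
          RingHom.mem_ker.1 (circIdeal_le_ker hb hq_diff)
        rw [map_sub, hp, zero_sub, neg_eq_zero] at h1
        exact h1
      have hqJ : q ∈ CircIdeal b :=
        inner q.totalDegree q hq_supp (fun m hm => exp_le_totalDegree hm i₀) hphiq
      have hfin : p = q + (p - q) := by ring
      rw [hfin]
      exact Ideal.add_mem _ hqJ hq_diff

end OT

/-- The kernel of `φ : ℂ[e_1,…,e_n] → ℂ(x_1,…,x_d)`, `e_i ↦ ℓ_i⁻¹`, is generated by the
elements `k_{S,c} = Σ_{i∈S} c_i Π_{j∈S∖{i}} e_j`, where `S` ranges over circuits and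
`c` over linear relations `Σ_{i∈S} c_i a_i = 0`. -/
theorem stmt2 {d n : ℕ} (a : Fin n → Fin d → ℂ)
    (ha : ∀ i, a i ≠ 0)
    (hspan : Submodule.span ℂ (Set.range a) = ⊤) :
    RingHom.ker (phiHom a)
      = Ideal.span {p : MvPolynomial (Fin n) ℂ |
          ∃ (S : Finset (Fin n)) (c : Fin n → ℂ), IsCircuit a S ∧
            (∑ i ∈ S, c i • a i) = 0 ∧
            p = ∑ i ∈ S, C (c i) * ∏ j ∈ S.erase i, X j} := by
  exact genMain n (Fin n) a ha (Fintype.card_fin n).le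
end
end

section
/- Let a_1,…,a_n be nonzero vectors spanning ℂ^d, let φ : ℂ[e_1,…,e_n] → ℂ(x_1,…,x_d) be the ℂ-algebra homomorphism sending e_i to ℓ_i^{-1} where ℓ_i = Σ_j (a_i)_j x_j, and let I(𝒜) = ker φ. For any linear order σ on {1,…,n}, let bc_σ(Δ_𝒜) be the σ-broken circuit complex of the configuration, and let I_{bc_σ(Δ_𝒜)} ⊆ ℂ[e_1,…,e_n] be its Stanley–Reisner ideal, generated by the monomials Π_{i∈S} e_i over subsets S not in bc_σ(Δ_𝒜). Then for every m ≥ 0, dim_ℂ( ℂ[e]_m / (I(𝒜) ∩ ℂ[e]_m) ) = dim_ℂ( ℂ[e]_m / (I_{bc_σ(Δ_𝒜)} ∩ ℂ[e]_m) ), where ℂ[e]_m denotes the homogeneous polynomials of degree m; in particular the Hilbert function of R(𝒜) = ℂ[e_1,…,e_n]/I(𝒜) coincides with that of the Stanley–Reisner ring of bc_σ(Δ_𝒜) for every order σ. -/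
open scoped BigOperators

noncomputable section

open MvPolynomial

/-- `T` is a face of the `σ`-broken circuit complex: `T` contains no `σ`-broken circuit
(a circuit minus its `σ`-smallest element). -/
def BCFace {d n : ℕ} (a : Fin n → Fin d → ℂ) (σ : LinearOrder (Fin n))
    (T : Finset (Fin n)) : Prop :=
  ¬ ∃ (S : Finset (Fin n)) (i : Fin n), IsCircuit a S ∧ i ∈ S ∧
      (∀ j ∈ S, σ.le i j) ∧ S.erase i ⊆ T

/-- The Stanley–Reisner ideal of the `σ`-broken circuit complex. -/
def bcIdeal {d n : ℕ} (a : Fin n → Fin d → ℂ) (σ : LinearOrder (Fin n)) :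
    Ideal (MvPolynomial (Fin n) ℂ) :=
  Ideal.span {p | ∃ T : Finset (Fin n), ¬ BCFace a σ T ∧
    p = ∏ i ∈ T, (X i : MvPolynomial (Fin n) ℂ)}

/-- The dimension of the degree-`m` graded piece of `ℂ[e_1,…,e_n]/I`. -/
def gradedDim {n : ℕ} (I : Ideal (MvPolynomial (Fin n) ℂ)) (m : ℕ) : ℕ :=
  Module.finrank ℂ
    (↥(homogeneousSubmodule (Fin n) ℂ m) ⧸
      (Submodule.comap (homogeneousSubmodule (Fin n) ℂ m).subtype (I.restrictScalars ℂ)))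

namespace PS

variable {d n : ℕ}

/-- The linear form attached to a vector. -/
def Lv (v : Fin d → ℂ) : MvPolynomial (Fin d) ℂ := ∑ j : Fin d, C (v j) * X j

lemma ellForm_eq (a : Fin n → Fin d → ℂ) (i : Fin n) :
    ellForm a i = algebraMap (MvPolynomial (Fin d) ℂ) (RatFunField d) (Lv (a i)) := rfl

lemma coeff_Lv (v : Fin d → ℂ) (j : Fin d) : coeff (Finsupp.single j 1) (Lv v) = v j := by
  rw [Lv, coeff_sum]
  rw [Finset.sum_eq_single j]
  · simp [coeff_C_mul, coeff_X']
  · intro j' _ hj'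
    simp only [coeff_C_mul, coeff_X']
    rw [if_neg, mul_zero]
    intro h
    exact hj' (by simpa using ((Finsupp.single_left_injective one_ne_zero) h.symm).symm)
  · simp

lemma Lv_zero : Lv (0 : Fin d → ℂ) = 0 := by simp [Lv]

lemma Lv_ne_zero {v : Fin d → ℂ} (hv : v ≠ 0) : Lv v ≠ 0 := by
  obtain ⟨j, hj⟩ := Function.ne_iff.mp hv
  intro h
  apply hj
  have := coeff_Lv v j
  rw [h] at this
  simpa using this.symm

lemma algInj : Function.Injective (algebraMap (MvPolynomial (Fin d) ℂ) (RatFunField d)) :=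
  IsFractionRing.injective _ _

lemma alg_eq_zero_iff {p : MvPolynomial (Fin d) ℂ} :
    algebraMap (MvPolynomial (Fin d) ℂ) (RatFunField d) p = 0 ↔ p = 0 :=
  map_eq_zero_iff _ algInj

lemma ellForm_ne_zero {a : Fin n → Fin d → ℂ} {i : Fin n} (h : a i ≠ 0) :
    ellForm a i ≠ 0 := by
  rw [ellForm_eq]
  exact fun hc => (Lv_ne_zero h) (alg_eq_zero_iff.mp hc)

/-! ### Matroid-type lemmas -/

lemma dep_mono {a : Fin n → Fin d → ℂ} {S T : Finset (Fin n)} (hST : S ⊆ T)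
    (h : DepSet a S) : DepSet a T := by
  intro hT
  apply h
  exact hT.comp (fun x : {x // x ∈ S} => (⟨x.1, hST x.2⟩ : {x // x ∈ T}))
    (fun x y hxy => Subtype.ext (by simpa using congrArg Subtype.val hxy))

lemma not_dep_empty {a : Fin n → Fin d → ℂ} : ¬ DepSet a (∅ : Finset (Fin n)) := by
  intro h
  apply h
  haveI : IsEmpty {x // x ∈ (∅ : Finset (Fin n))} :=
    ⟨fun x => absurd x.2 (Finset.notMem_empty _)⟩
  exact linearIndependent_empty_type


lemma dep_iff {a : Fin n → Fin d → ℂ} {S : Finset (Fin n)} :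
    DepSet a S ↔ ∃ c : Fin n → ℂ, (∑ i ∈ S, c i • a i = 0) ∧ ∃ i ∈ S, c i ≠ 0 := by
  classical
  rw [DepSet, Fintype.not_linearIndependent_iff]
  constructor
  · rintro ⟨g, hsum, ⟨x, hx⟩⟩
    refine ⟨fun i => if h : i ∈ S then g ⟨i, h⟩ else 0, ?_, ⟨x.1, x.2, by simpa using hx⟩⟩
    rw [← Finset.sum_attach S (fun i => (if h : i ∈ S then g ⟨i, h⟩ else 0) • a i)]
    rw [← hsum, Finset.univ_eq_attach]
    apply Finset.sum_congr rfl
    intro x _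
    simp
  · rintro ⟨c, hsum, ⟨i, hi, hci⟩⟩
    refine ⟨fun x => c x.1, ?_, ⟨⟨i, hi⟩, hci⟩⟩
    rw [Finset.univ_eq_attach, Finset.sum_attach S (fun i => c i • a i)]
    exact hsum

lemma not_dep_singleton {a : Fin n → Fin d → ℂ} {i : Fin n} (h : a i ≠ 0) :
    ¬ DepSet a ({i} : Finset (Fin n)) := by
  intro hdep
  obtain ⟨c, hsum, ⟨j, hj, hcj⟩⟩ := dep_iff.mp hdep
  rw [Finset.sum_singleton] at hsum
  rw [Finset.mem_singleton] at hj
  subst hj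
  rcases smul_eq_zero.mp hsum with h1 | h2
  · exact hcj h1
  · exact h h2

lemma exists_circuit {a : Fin n → Fin d → ℂ} :
    ∀ S : Finset (Fin n), DepSet a S → ∃ C, C ⊆ S ∧ IsCircuit a C := by
  intro S
  induction S using Finset.strongInductionOn with
  | _ S ih =>
    intro hS
    by_cases h : ∀ T ⊂ S, ¬ DepSet a T
    · exact ⟨S, subset_rfl, hS, h⟩
    · push_neg at h
      obtain ⟨T, hT, hdep⟩ := h
      obtain ⟨C, hCT, hC⟩ := ih T hT hdep
      exact ⟨C, hCT.trans hT.subset, hC⟩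

lemma circuit_nonempty {a : Fin n → Fin d → ℂ} {S : Finset (Fin n)} (h : IsCircuit a S) :
    S.Nonempty := by
  rcases Finset.eq_empty_or_nonempty S with rfl | hne
  · exact absurd h.1 not_dep_empty
  · exact hne

lemma circuit_coeffs {a : Fin n → Fin d → ℂ} {S : Finset (Fin n)} (h : IsCircuit a S) :
    ∃ c : Fin n → ℂ, (∑ i ∈ S, c i • a i = 0) ∧ ∀ i ∈ S, c i ≠ 0 := by
  classical
  obtain ⟨c, hsum, ⟨i₀, hi₀, hc₀⟩⟩ := dep_iff.mp h.1
  refine ⟨c, hsum, ?_⟩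
  by_contra hcon
  push_neg at hcon
  obtain ⟨j, hj, hcj⟩ := hcon
  set S' := S.filter (fun i => c i ≠ 0) with hS'
  have hsub : S' ⊆ S := Finset.filter_subset _ _
  have hss : S' ⊂ S := ⟨hsub, fun hS => by
    have := Finset.mem_filter.mp (hS hj)
    exact this.2 hcj⟩
  apply h.2 S' hss
  rw [dep_iff]
  refine ⟨c, ?_, ⟨i₀, Finset.mem_filter.mpr ⟨hi₀, hc₀⟩, hc₀⟩⟩
  rw [Finset.sum_filter_of_ne, hsum]
  intro x _ hx
  intro hcx
  exact hx (by rw [hcx, zero_smul])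

end PS
namespace PS

variable {d n : ℕ}

/-- Faces of the broken-circuit complex relative to a ground set `E`. -/
def FaceOn (a : Fin n → Fin d → ℂ) (σ : LinearOrder (Fin n)) (E T : Finset (Fin n)) : Prop :=
  ¬ ∃ (S : Finset (Fin n)) (i : Fin n), S ⊆ E ∧ IsCircuit a S ∧ i ∈ S ∧
      (∀ j ∈ S, σ.le i j) ∧ S.erase i ⊆ T

lemma faceOn_univ {a : Fin n → Fin d → ℂ} {σ : LinearOrder (Fin n)} {T : Finset (Fin n)} :
    FaceOn a σ Finset.univ T ↔ BCFace a σ T := by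
  constructor
  · rintro h ⟨S, i, h1, h2, h3, h4⟩
    exact h ⟨S, i, Finset.subset_univ S, h1, h2, h3, h4⟩
  · rintro h ⟨S, i, _, h1, h2, h3, h4⟩
    exact h ⟨S, i, h1, h2, h3, h4⟩

lemma faceOn_anti {a : Fin n → Fin d → ℂ} {σ : LinearOrder (Fin n)} {E E' T : Finset (Fin n)}
    (hE : E' ⊆ E) (h : FaceOn a σ E T) : FaceOn a σ E' T := by
  rintro ⟨S, i, hSE, h1, h2, h3, h4⟩
  exact h ⟨S, i, hSE.trans hE, h1, h2, h3, h4⟩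

lemma faceOn_subset {a : Fin n → Fin d → ℂ} {σ : LinearOrder (Fin n)} {E T T' : Finset (Fin n)}
    (hT : T' ⊆ T) (h : FaceOn a σ E T) : FaceOn a σ E T' := by
  rintro ⟨S, i, hSE, h1, h2, h3, h4⟩
  exact h ⟨S, i, hSE, h1, h2, h3, h4.trans hT⟩

lemma bcface_subset {a : Fin n → Fin d → ℂ} {σ : LinearOrder (Fin n)} {T T' : Finset (Fin n)}
    (hT : T' ⊆ T) (h : BCFace a σ T) : BCFace a σ T' := by
  rintro ⟨S, i, h1, h2, h3, h4⟩
  exact h ⟨S, i, h1, h2, h3, h4.trans hT⟩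

/-! ### Contraction -/

/-- The "contraction" of the family `a` along `a z`, using coordinate `j₀`. -/
def ctr (a : Fin n → Fin d → ℂ) (z : Fin n) (j₀ : Fin d) : Fin n → Fin d → ℂ :=
  fun i => a i - (a i j₀ * (a z j₀)⁻¹) • a z

lemma ctr_z {a : Fin n → Fin d → ℂ} {z : Fin n} {j₀ : Fin d} (hz : a z j₀ ≠ 0) :
    ctr a z j₀ z = 0 := by
  simp [ctr, mul_inv_cancel₀ hz]

lemma ctr_ne_zero {a : Fin n → Fin d → ℂ} {z i : Fin n} {j₀ : Fin d}
    (hiz : i ≠ z) (hdep : ¬ DepSet a ({i, z} : Finset (Fin n))) :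
    ctr a z j₀ i ≠ 0 := by
  intro h0
  apply hdep
  rw [dep_iff]
  classical
  refine ⟨fun x => if x = i then 1 else -(a i j₀ * (a z j₀)⁻¹), ?_, ⟨i, by simp, by simp⟩⟩
  rw [Finset.sum_pair hiz]
  beta_reduce
  rw [if_pos rfl, if_neg (Ne.symm hiz), one_smul, neg_smul, ← sub_eq_add_neg]
  exact h0

lemma dep_insert_of_dep_ctr {a : Fin n → Fin d → ℂ} {z : Fin n} {j₀ : Fin d}
    {S : Finset (Fin n)} (hzS : z ∉ S) (h : DepSet (ctr a z j₀) S) :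
    DepSet a (insert z S) := by
  classical
  obtain ⟨c, hsum, ⟨i, hi, hci⟩⟩ := dep_iff.mp h
  rw [dep_iff]
  refine ⟨fun x => if x = z then -(∑ i ∈ S, c i * (a i j₀ * (a z j₀)⁻¹)) else c x, ?_,
    ⟨i, Finset.mem_insert_of_mem hi, by
      beta_reduce
      rw [if_neg (show i ≠ z from fun hiz => hzS (hiz ▸ hi))]; exact hci⟩⟩
  rw [Finset.sum_insert hzS]
  beta_reduce
  rw [if_pos rfl]
  have hrest : ∀ x ∈ S, (if x = z then -(∑ i ∈ S, c i * (a i j₀ * (a z j₀)⁻¹)) else c x) • a x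
      = c x • a x := by
    intro x hx
    rw [if_neg (show x ≠ z from fun hxz => hzS (hxz ▸ hx))]
  rw [Finset.sum_congr rfl hrest]
  have hS : ∑ x ∈ S, c x • a x = (∑ i ∈ S, c i * (a i j₀ * (a z j₀)⁻¹)) • a z := by
    have : ∀ x ∈ S, c x • a x = c x • ctr a z j₀ x + (c x * (a x j₀ * (a z j₀)⁻¹)) • a z := by
      intro x _
      simp only [ctr, smul_sub, mul_smul]
      abel
    rw [Finset.sum_congr rfl this, Finset.sum_add_distrib, hsum, zero_add, ← Finset.sum_smul]
  rw [hS, neg_smul, neg_add_cancel]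

/-- The key matroid fact: faces of the broken-circuit complex contract to faces. -/
lemma faceOn_ctr {a : Fin n → Fin d → ℂ} {σ : LinearOrder (Fin n)} {E T : Finset (Fin n)}
    {z : Fin n} {j₀ : Fin d}
    (hzE : z ∈ E) (hzmax : ∀ j ∈ E, σ.le j z) (hTE : T ⊆ E) (hzT : z ∈ T)
    (hface : FaceOn a σ E T) :
    FaceOn (ctr a z j₀) σ (E.erase z) (T.erase z) := by
  rintro ⟨S, i', hSE, hcirc, hi'S, hi'min, hbc⟩
  have hzS : z ∉ S := fun h => (Finset.mem_erase.mp (hSE h)).1 rfl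
  have hdep : DepSet a (insert z S) := dep_insert_of_dep_ctr hzS hcirc.1
  obtain ⟨C, hCsub, hC⟩ := exists_circuit _ hdep
  have hCne : C.Nonempty := circuit_nonempty hC
  obtain ⟨m, hmC, hmin⟩ : ∃ m ∈ C, ∀ j ∈ C, σ.le m j := by
    letI := σ
    obtain ⟨m, hm, hmin⟩ := C.exists_min_image id hCne
    exact ⟨m, hm, hmin⟩
  apply hface
  refine ⟨C, m, ?_, hC, hmC, hmin, ?_⟩
  · -- C ⊆ E
    intro x hx
    rcases Finset.mem_insert.mp (hCsub hx) with rfl | hxS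
    · exact hzE
    · exact Finset.mem_of_mem_erase (hSE hxS)
  · -- C.erase m ⊆ T
    by_cases hi'C : i' ∈ C
    · have hmi' : m = i' := by
        apply σ.le_antisymm _ _ (hmin i' hi'C)
        rcases Finset.mem_insert.mp (hCsub hmC) with h | h
        · exact h ▸ hzmax i' (Finset.mem_of_mem_erase (hSE hi'S))
        · exact hi'min m h
      subst hmi'
      intro x hx
      obtain ⟨hxm, hxC⟩ := Finset.mem_erase.mp hx
      rcases Finset.mem_insert.mp (hCsub hxC) with rfl | hxS
      · exact hzT
      · exact Finset.mem_of_mem_erase (hbc (Finset.mem_erase.mpr ⟨hxm, hxS⟩))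
    · intro x hx
      obtain ⟨_, hxC⟩ := Finset.mem_erase.mp hx
      rcases Finset.mem_insert.mp (hCsub hxC) with rfl | hxS
      · exact hzT
      · have hxi' : x ≠ i' := fun h => hi'C (h ▸ hxC)
        exact Finset.mem_of_mem_erase (hbc (Finset.mem_erase.mpr ⟨hxi', hxS⟩))

end PS
namespace PS

variable {d n : ℕ}

/-- The rational function `∏ ℓ_i^{-α_i}`. -/
def fInv (a : Fin n → Fin d → ℂ) (α : Fin n →₀ ℕ) : RatFunField d :=
  α.prod fun i k => (ellForm a i)⁻¹ ^ k

lemma fInv_zero (a : Fin n → Fin d → ℂ) : fInv a 0 = 1 := Finsupp.prod_zero_index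

lemma fInv_add (a : Fin n → Fin d → ℂ) (α β : Fin n →₀ ℕ) :
    fInv a (α + β) = fInv a α * fInv a β :=
  Finsupp.prod_add_index' (fun i => pow_zero _) (fun i k l => pow_add _ _ _)

lemma fInv_single (a : Fin n → Fin d → ℂ) (i : Fin n) (k : ℕ) :
    fInv a (Finsupp.single i k) = ((ellForm a i)⁻¹) ^ k :=
  Finsupp.prod_single_index (pow_zero _)

lemma fInv_eq_prod_on (a : Fin n → Fin d → ℂ) (α : Fin n →₀ ℕ) {F : Finset (Fin n)}
    (hF : α.support ⊆ F) :
    fInv a α = ∏ i ∈ F, ((ellForm a i)⁻¹) ^ α i :=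
  Finsupp.prod_of_support_subset α hF _ (fun i _ => pow_zero _)

lemma fInv_sub_single {a : Fin n → Fin d → ℂ} {α : Fin n →₀ ℕ} {i : Fin n}
    (hi : 1 ≤ α i) (hne : ellForm a i ≠ 0) :
    fInv a (α - Finsupp.single i 1) = fInv a α * ellForm a i := by
  have hle : Finsupp.single i 1 ≤ α := Finsupp.single_le_iff.mpr hi
  have h1 : α - Finsupp.single i 1 + Finsupp.single i 1 = α := tsub_add_cancel_of_le hle
  have := fInv_add a (α - Finsupp.single i 1) (Finsupp.single i 1)
  rw [h1, fInv_single, pow_one] at this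
  rw [this, mul_assoc, inv_mul_cancel₀ hne, mul_one]

/-- The key product identity used to clear denominators. -/
lemma term_eq {a : Fin n → Fin d → ℂ} {F : Finset (Fin n)}
    (hv : ∀ i ∈ F, ellForm a i ≠ 0) (β : Fin n →₀ ℕ) (hβ : β.support ⊆ F)
    {M : ℕ} (hM : ∀ i, β i ≤ M) :
    ∏ i ∈ F, (ellForm a i) ^ (M - β i) =
      (∏ i ∈ F, (ellForm a i) ^ M) * fInv a β := by
  rw [fInv_eq_prod_on a β hβ, ← Finset.prod_mul_distrib]
  apply Finset.prod_congr rfl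
  intro i hi
  rw [inv_pow, pow_sub₀ _ (hv i hi) (hM i)]

/-! ### Rank and weight functions for the rewriting induction -/

/-- Number of elements `σ`-below `i`. -/
def rankOf (σ : LinearOrder (Fin n)) (i : Fin n) : ℕ :=
  (Finset.univ.filter (fun j => σ.lt j i)).card

lemma rankOf_lt_rankOf {σ : LinearOrder (Fin n)} {i j : Fin n} (h : σ.lt i j) :
    rankOf σ i < rankOf σ j := by
  classical
  apply Finset.card_lt_card
  constructor
  · intro x hx
    simp only [Finset.mem_filter, Finset.mem_univ, true_and] at hx ⊢
    exact @lt_trans _ σ.toPartialOrder.toPreorder _ _ _ hx h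
  · intro hsub
    have hi : i ∈ Finset.univ.filter (fun j' => σ.lt j' j) := by
      simp only [Finset.mem_filter, Finset.mem_univ, true_and]; exact h
    have := hsub hi
    simp only [Finset.mem_filter, Finset.mem_univ, true_and] at this
    exact @lt_irrefl _ σ.toPartialOrder.toPreorder i this

/-- The weight of a monomial. -/
def wt (σ : LinearOrder (Fin n)) (α : Fin n →₀ ℕ) : ℕ :=
  α.sum fun i k => k * rankOf σ i

lemma wt_add (σ : LinearOrder (Fin n)) (α β : Fin n →₀ ℕ) :
    wt σ (α + β) = wt σ α + wt σ β :=
  Finsupp.sum_add_index' (fun i => zero_mul _) (fun i k l => add_mul _ _ _)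

lemma wt_single (σ : LinearOrder (Fin n)) (i : Fin n) (k : ℕ) :
    wt σ (Finsupp.single i k) = k * rankOf σ i :=
  Finsupp.sum_single_index (zero_mul _)

lemma degree_add' (α β : Fin n →₀ ℕ) : (α + β).degree = α.degree + β.degree := by
  rw [Finsupp.degree_eq_weight_one, map_add]

lemma degree_single' (i : Fin n) (k : ℕ) : (Finsupp.single i k).degree = k := by
  rw [Finsupp.degree]
  rcases eq_or_ne k 0 with rfl | hk
  · simp
  · show ∑ j ∈ (Finsupp.single i k).support, (Finsupp.single i k) j = k
    rw [Finsupp.support_single_ne_zero i hk, Finset.sum_singleton, Finsupp.single_eq_same]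

end PS
set_option maxHeartbeats 1000000
set_option synthInstance.maxHeartbeats 1000000

namespace PS

variable {d n : ℕ}

lemma csmul {d : ℕ} (c : ℂ) (x : RatFunField d) :
    c • x = algebraMap ℂ (RatFunField d) c * x := Algebra.smul_def c x

/-- `Lv` as a linear map. -/
def LvLM : (Fin d → ℂ) →ₗ[ℂ] MvPolynomial (Fin d) ℂ where
  toFun := Lv
  map_add' v w := by
    simp only [Lv, Pi.add_apply, C_add, add_mul, Finset.sum_add_distrib]
  map_smul' c v := by
    simp only [Lv, RingHom.id_apply, smul_eq_C_mul, Finset.mul_sum]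
    apply Finset.sum_congr rfl
    intro j _
    rw [Pi.smul_apply, smul_eq_mul, C_mul, mul_assoc]

/-- The algebra map to the fraction field, as an `AlgHom`. -/
def algA (d : ℕ) : MvPolynomial (Fin d) ℂ →ₐ[ℂ] RatFunField d :=
  IsScalarTower.toAlgHom ℂ _ _

lemma algA_apply (p : MvPolynomial (Fin d) ℂ) :
    algA d p = algebraMap (MvPolynomial (Fin d) ℂ) (RatFunField d) p := rfl

lemma ell_rel {a : Fin n → Fin d → ℂ} {S : Finset (Fin n)} {c : Fin n → ℂ}
    (hsum : ∑ i ∈ S, c i • a i = 0) :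
    ∑ i ∈ S, c i • ellForm a i = 0 := by
  have hmain : (∑ i ∈ S, c i • ellForm a i)
      = (algA d).toLinearMap (LvLM (∑ i ∈ S, c i • a i)) := by
    rw [map_sum, map_sum]
    refine Finset.sum_congr rfl fun i _ => ?_
    rw [map_smul, map_smul]
    rfl
  rw [hmain, hsum, map_zero, map_zero]

lemma gamma_inj : Function.Injective (algebraMap ℂ (RatFunField d)) :=
  RingHom.injective _

/-- The spanning lemma: every `fInv a α` lies in the span of the
broken-circuit-face monomials of the same degree. -/
lemma span_mem {a : Fin n → Fin d → ℂ} (ha : ∀ i, a i ≠ 0) (σ : LinearOrder (Fin n))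
    (α : Fin n →₀ ℕ) :
    fInv a α ∈ Submodule.span ℂ
      (fInv a '' {β | BCFace a σ β.support ∧ β.degree = α.degree}) := by
  classical
  suffices H : ∀ N (α : Fin n →₀ ℕ), wt σ α = N → fInv a α ∈ Submodule.span ℂ
      (fInv a '' {β | BCFace a σ β.support ∧ β.degree = α.degree}) from H _ α rfl
  intro N
  induction N using Nat.strong_induction_on with
  | _ N ih =>
    intro α hN
    by_cases hface : BCFace a σ α.support
    · exact Submodule.subset_span ⟨α, ⟨hface, rfl⟩, rfl⟩
    · obtain ⟨S, i₀, hcirc, hi₀S, hmin, hbc⟩ := not_not.mp hface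
      obtain ⟨c, hsum, hcne⟩ := circuit_coeffs hcirc
      have hrel : ∑ i ∈ S, c i • ellForm a i = 0 := ell_rel hsum
      set γ : ℂ →+* RatFunField d := algebraMap ℂ (RatFunField d) with hγ
      have hrelγ : ∑ i ∈ S.erase i₀, γ (c i) * ellForm a i
          = -(γ (c i₀) * ellForm a i₀) := by
        have h0 := Finset.add_sum_erase S (fun i => c i • ellForm a i) hi₀S
        rw [hrel] at h0
        have h1 : ∑ i ∈ S.erase i₀, c i • ellForm a i = -(c i₀ • ellForm a i₀) := by
          linear_combination h0
        calc ∑ i ∈ S.erase i₀, γ (c i) * ellForm a i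
            = ∑ i ∈ S.erase i₀, c i • ellForm a i := by
              apply Finset.sum_congr rfl; intro i _; rw [csmul]
          _ = -(c i₀ • ellForm a i₀) := h1
          _ = -(γ (c i₀) * ellForm a i₀) := by rw [csmul]
      set e : Fin n → (Fin n →₀ ℕ) := fun i => α - Finsupp.single i 1 + Finsupp.single i₀ 1
        with he
      have hα1 : ∀ i ∈ S.erase i₀, 1 ≤ α i := by
        intro i hi
        have : i ∈ α.support := hbc hi
        exact Nat.one_le_iff_ne_zero.mpr (Finsupp.mem_support_iff.mp this)
      have key : ∀ i ∈ S.erase i₀, fInv a (e i)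
          = (ellForm a i₀)⁻¹ * (ellForm a i * fInv a α) := by
        intro i hi
        rw [he]
        beta_reduce
        rw [fInv_add, fInv_single, pow_one, fInv_sub_single (hα1 i hi) (ellForm_ne_zero (ha i))]
        ring
      have hid : fInv a α = ∑ i ∈ S.erase i₀, (-(c i₀)⁻¹ * c i) • fInv a (e i) := by
        rw [Finset.sum_congr rfl (fun i hi => by rw [key i hi])]
        have : ∀ i ∈ S.erase i₀, (-(c i₀)⁻¹ * c i) • ((ellForm a i₀)⁻¹ * (ellForm a i * fInv a α))
            = (-(γ (c i₀))⁻¹ * (ellForm a i₀)⁻¹ * fInv a α) * (γ (c i) * ellForm a i) := by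
          intro i _
          rw [csmul, map_mul, map_neg, map_inv₀]
          ring
        rw [Finset.sum_congr rfl this, ← Finset.mul_sum, hrelγ]
        have h1 : γ (c i₀) ≠ 0 := fun h => hcne i₀ hi₀S (gamma_inj (by rw [h, map_zero]))
        have h2 : ellForm a i₀ ≠ 0 := ellForm_ne_zero (ha i₀)
        rw [show -(γ (c i₀))⁻¹ * (ellForm a i₀)⁻¹ * fInv a α * -(γ (c i₀) * ellForm a i₀)
            = ((γ (c i₀))⁻¹ * γ (c i₀)) * ((ellForm a i₀)⁻¹ * ellForm a i₀) * fInv a α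
          from by ring, inv_mul_cancel₀ h1, inv_mul_cancel₀ h2, one_mul, one_mul]
      rw [hid]
      apply Submodule.sum_mem
      intro i hi
      apply Submodule.smul_mem
      -- degree bookkeeping
      have hcancel : α - Finsupp.single i 1 + Finsupp.single i 1 = α :=
        tsub_add_cancel_of_le (Finsupp.single_le_iff.mpr (hα1 i hi))
      have hdeg : (e i).degree = α.degree := by
        rw [he]
        beta_reduce
        rw [degree_add', degree_single']
        conv_rhs => rw [← hcancel, degree_add', degree_single']
      have hwt : wt σ (e i) < N := by
        rw [← hN]
        conv_rhs => rw [← hcancel, wt_add, wt_single]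
        rw [he]
        beta_reduce
        rw [wt_add, wt_single, one_mul, one_mul]
        have hlt : σ.lt i₀ i := by
          have hne : i₀ ≠ i := fun h => (Finset.mem_erase.mp hi).1 h.symm
          exact @lt_of_le_of_ne _ σ.toPartialOrder i₀ i (hmin i (Finset.mem_of_mem_erase hi)) hne
        exact Nat.add_lt_add_left (rankOf_lt_rankOf hlt) _
      have := ih _ hwt (e i) rfl
      rwa [hdeg] at this

end PS
namespace PS

variable {d n : ℕ}

/-- Substitution killing the linear form `ℓ_z`. -/
def tauFun (a : Fin n → Fin d → ℂ) (z : Fin n) (j₀ : Fin d) : Fin d → MvPolynomial (Fin d) ℂ :=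
  fun j => if j = j₀ then
    C (-(a z j₀)⁻¹) * (∑ j' ∈ Finset.univ.erase j₀, C (a z j') * X j') else X j

lemma tauFun_ne {a : Fin n → Fin d → ℂ} {z : Fin n} {j₀ j : Fin d} (h : j ≠ j₀) :
    tauFun a z j₀ j = X j := if_neg h

lemma tauFun_j₀ (a : Fin n → Fin d → ℂ) (z : Fin n) (j₀ : Fin d) :
    tauFun a z j₀ j₀ =
      C (-(a z j₀)⁻¹) * (∑ j' ∈ Finset.univ.erase j₀, C (a z j') * X j') := if_pos rfl

lemma tau_Lv {a : Fin n → Fin d → ℂ} {z : Fin n} {j₀ : Fin d} (hj₀ : a z j₀ ≠ 0)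
    (v : Fin d → ℂ) :
    aeval (tauFun a z j₀) (Lv v) = Lv (v - (v j₀ * (a z j₀)⁻¹) • a z) := by
  classical
  set u : Fin d → ℂ := v - (v j₀ * (a z j₀)⁻¹) • a z with hu
  have hu_apply : ∀ j, u j = v j - v j₀ * (a z j₀)⁻¹ * a z j := by
    intro j; rw [hu]; simp [mul_assoc]
  have huj₀ : u j₀ = 0 := by rw [hu_apply j₀]; field_simp; simp
  have hL : aeval (tauFun a z j₀) (Lv v) = ∑ j, C (v j) * tauFun a z j₀ j := by
    rw [Lv, map_sum]
    apply Finset.sum_congr rfl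
    intro j _
    rw [map_mul, aeval_X, aeval_C, MvPolynomial.algebraMap_eq]
  rw [hL, Lv]
  rw [← Finset.add_sum_erase _ _ (Finset.mem_univ j₀),
    ← Finset.add_sum_erase _ (fun j => C (u j) * X j) (Finset.mem_univ j₀)]
  rw [huj₀, map_zero, zero_mul, zero_add, tauFun_j₀]
  rw [show C (v j₀) * (C (-(a z j₀)⁻¹) * ∑ j' ∈ Finset.univ.erase j₀, C (a z j') * X j')
      = ∑ j' ∈ Finset.univ.erase j₀, (C (v j₀) * C (-(a z j₀)⁻¹) * C (a z j')) * X j' from by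
    rw [Finset.mul_sum, Finset.mul_sum]
    apply Finset.sum_congr rfl
    intro j _
    ring]
  rw [Finset.sum_congr rfl (fun j hj => by
    rw [tauFun_ne (Finset.mem_erase.mp hj).1] :
      ∀ j ∈ Finset.univ.erase j₀, C (v j) * tauFun a z j₀ j = C (v j) * X j)]
  rw [← Finset.sum_add_distrib]
  apply Finset.sum_congr rfl
  intro j hj
  rw [← C_mul, ← C_mul, ← add_mul, ← C_add]
  congr 2
  rw [hu_apply j]
  ring

/-- Clearing denominators identity in the fraction field. -/
lemma clear_denoms {a : Fin n → Fin d → ℂ} {z : Fin n} {F : Finset (Fin n)} (hzF : z ∉ F)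
    (hellF : ∀ i ∈ F, ellForm a i ≠ 0) (hellz : ellForm a z ≠ 0)
    {α : Fin n →₀ ℕ} (hsupp : α.support ⊆ insert z F) {K M : ℕ} (hzK : α z ≤ K)
    (hαM : ∀ i, α i ≤ M) :
    (ellForm a z) ^ (K - α z) * ∏ i ∈ F, (ellForm a i) ^ (M - α i)
      = ((ellForm a z) ^ K * ∏ i ∈ F, (ellForm a i) ^ M) * fInv a α := by
  have hsupperase : (α.erase z).support ⊆ F := by
    rw [Finsupp.support_erase]
    intro i hi
    obtain ⟨hiz, hiα⟩ := Finset.mem_erase.mp hi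
    rcases Finset.mem_insert.mp (hsupp hiα) with rfl | h
    · exact absurd rfl hiz
    · exact h
  have hαM' : ∀ i, (α.erase z) i ≤ M := by
    intro i
    rcases eq_or_ne i z with rfl | hne
    · rw [Finsupp.erase_same]; exact Nat.zero_le M
    · rw [Finsupp.erase_ne hne]; exact hαM i
  have h2 : ∏ i ∈ F, (ellForm a i) ^ (M - α i)
      = (∏ i ∈ F, (ellForm a i) ^ M) * fInv a (α.erase z) := by
    rw [← term_eq hellF (α.erase z) hsupperase hαM']
    apply Finset.prod_congr rfl
    intro i hi
    rw [Finsupp.erase_ne (fun h : i = z => hzF (h ▸ hi))]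
  have h1 : fInv a α = fInv a (α.erase z) * ((ellForm a z)⁻¹) ^ (α z) := by
    conv_lhs => rw [← Finsupp.erase_add_single z α, fInv_add, fInv_single]
  have h3 : (ellForm a z) ^ (K - α z) = (ellForm a z) ^ K * ((ellForm a z)⁻¹) ^ (α z) := by
    rw [inv_pow, pow_sub₀ _ hellz hzK]
  rw [h2, h1, h3]
  ring

end PS
namespace PS

variable {d n : ℕ}

/-- The main independence lemma, by induction on the ground set. -/
lemma independent_on (σ : LinearOrder (Fin n)) :
    ∀ (N : ℕ) (E : Finset (Fin n)), E.card = N →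
    ∀ (a : Fin n → Fin d → ℂ), (∀ i ∈ E, a i ≠ 0) →
    ∀ (s : Finset (Fin n →₀ ℕ)), (∀ α ∈ s, α.support ⊆ E ∧ FaceOn a σ E α.support) →
    ∀ (c : (Fin n →₀ ℕ) → ℂ), (∑ α ∈ s, c α • fInv a α) = 0 →
    ∀ α ∈ s, c α = 0 := by
  classical
  intro N
  induction N using Nat.strong_induction_on with
  | _ N ihN =>
  intro E hEcard a ha s hs c hsum α₀ hα₀
  by_contra hc0
  set s' := s.filter (fun α => c α ≠ 0) with hs'def
  have hs'sub : s' ⊆ s := Finset.filter_subset _ _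
  have hs'ne : s'.Nonempty := ⟨α₀, Finset.mem_filter.mpr ⟨hα₀, hc0⟩⟩
  have hcs' : ∀ α ∈ s', c α ≠ 0 := fun α hα => (Finset.mem_filter.mp hα).2
  have hsum' : ∑ α ∈ s', c α • fInv a α = 0 := by
    rw [hs'def, Finset.sum_filter_of_ne, hsum]
    intro α _ hne heq
    exact hne (by rw [csmul, heq, map_zero, zero_mul])
  rcases Finset.eq_empty_or_nonempty E with rfl | hEne
  · obtain ⟨α, hα⟩ := hs'ne
    have hzero : ∀ β ∈ s', β = 0 := by
      intro β hβ
      have := (hs β (hs'sub hβ)).1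
      rwa [Finset.subset_empty, Finsupp.support_eq_empty] at this
    have hα0 : α = 0 := hzero α hα
    have hs'eq : s' = {0} := Finset.eq_singleton_iff_unique_mem.mpr ⟨hα0 ▸ hα, hzero⟩
    rw [hs'eq, Finset.sum_singleton, fInv_zero, csmul, mul_one] at hsum'
    exact hcs' 0 (hs'eq ▸ Finset.mem_singleton_self 0) (gamma_inj (by rw [hsum', map_zero]))
  obtain ⟨z, hzE, hzmax⟩ : ∃ z ∈ E, ∀ j ∈ E, σ.le j z := by
    letI := σ
    obtain ⟨z, hz, hmax⟩ := E.exists_max_image id hEne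
    exact ⟨z, hz, hmax⟩
  have hcard : (E.erase z).card < N := hEcard ▸ Finset.card_erase_lt_of_mem hzE
  by_cases hz0 : ∀ α ∈ s', α z = 0
  · -- deletion case: no `z` appears
    have hfacts : ∀ α ∈ s', α.support ⊆ E.erase z ∧ FaceOn a σ (E.erase z) α.support := by
      intro α hα
      refine ⟨?_, faceOn_anti (Finset.erase_subset _ _) (hs α (hs'sub hα)).2⟩
      intro i hi
      refine Finset.mem_erase.mpr ⟨?_, (hs α (hs'sub hα)).1 hi⟩
      intro hiz
      exact (Finsupp.mem_support_iff.mp hi) (hiz ▸ hz0 α hα)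
    obtain ⟨α, hα⟩ := hs'ne
    exact hcs' α hα (ihN _ hcard (E.erase z) rfl a
      (fun i hi => ha i (Finset.mem_of_mem_erase hi)) s' hfacts c hsum' α hα)
  · push_neg at hz0
    obtain ⟨α₁, hα₁s, hα₁z⟩ := hz0
    have hzsupp1 : z ∈ α₁.support := Finsupp.mem_support_iff.mpr hα₁z
    -- no element of E.erase z is parallel to z
    have hnopar : ∀ i ∈ E.erase z, ¬ DepSet a ({i, z} : Finset (Fin n)) := by
      intro i hi hdep
      obtain ⟨hiz, hiE⟩ := Finset.mem_erase.mp hi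
      apply (hs α₁ (hs'sub hα₁s)).2
      refine ⟨{i, z}, i, ?_, ⟨hdep, ?_⟩, Finset.mem_insert_self i _, ?_, ?_⟩
      · intro x hx
        rcases Finset.mem_insert.mp hx with rfl | hx
        · exact hiE
        · rw [Finset.mem_singleton] at hx; exact hx ▸ hzE
      · intro T hT hdepT
        have hTcard : T.card < 2 := by
          have h2 := Finset.card_lt_card hT
          rwa [Finset.card_pair hiz] at h2
        have hTc' : T.card = 0 ∨ T.card = 1 := by omega
        rcases hTc' with h0 | h1
        · rw [Finset.card_eq_zero] at h0
          exact not_dep_empty (h0 ▸ hdepT)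
        · obtain ⟨x, rfl⟩ := Finset.card_eq_one.mp h1
          have hx : x ∈ ({i, z} : Finset (Fin n)) := hT.subset (Finset.mem_singleton_self x)
          rcases Finset.mem_insert.mp hx with rfl | hx
          · exact not_dep_singleton (ha x hiE) hdepT
          · rw [Finset.mem_singleton] at hx
            exact not_dep_singleton (hx ▸ ha z hzE) (hx ▸ hdepT)
      · intro j hj
        rcases Finset.mem_insert.mp hj with rfl | hj
        · exact σ.le_refl j
        · rw [Finset.mem_singleton] at hj
          exact hj ▸ hzmax i hiE
      · intro x hx
        obtain ⟨hxi, hxmem⟩ := Finset.mem_erase.mp hx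
        rcases Finset.mem_insert.mp hxmem with rfl | hxz
        · exact absurd rfl hxi
        · rw [Finset.mem_singleton] at hxz
          exact hxz ▸ hzsupp1
    obtain ⟨j₀, hj₀⟩ : ∃ j₀, a z j₀ ≠ 0 := Function.ne_iff.mp (ha z hzE)
    set b := ctr a z j₀ with hb
    have hbne : ∀ i ∈ E.erase z, b i ≠ 0 := fun i hi =>
      ctr_ne_zero (Finset.mem_erase.mp hi).1 (hnopar i hi)
    set K := s'.sup (fun α => α z) with hKdef
    obtain ⟨αK, hαKs, hαKz⟩ : ∃ αK ∈ s', αK z = K := by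
      obtain ⟨αK, h1, h2⟩ := Finset.exists_mem_eq_sup s' hs'ne (fun α => α z)
      exact ⟨αK, h1, h2.symm⟩
    have hK1 : 1 ≤ K := le_trans (Nat.one_le_iff_ne_zero.mpr hα₁z) (Finset.le_sup (f := fun α => α z) hα₁s)
    set M := s'.sup Finsupp.degree with hMdef
    have hMle : ∀ α ∈ s', ∀ i, α i ≤ M := fun α hα i =>
      le_trans (Finsupp.le_degree i α) (Finset.le_sup (f := Finsupp.degree) hα)
    have hKle : ∀ α ∈ s', α z ≤ K := fun α hα => Finset.le_sup (f := fun α => α z) hα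
    set F := E.erase z with hFdef
    have hzF : z ∉ F := Finset.notMem_erase z E
    have hellF : ∀ i ∈ F, ellForm a i ≠ 0 := fun i hi =>
      ellForm_ne_zero (ha i (Finset.mem_of_mem_erase hi))
    have hellz : ellForm a z ≠ 0 := ellForm_ne_zero (ha z hzE)
    have hEins : E = insert z F := (Finset.insert_erase hzE).symm
    set q : MvPolynomial (Fin d) ℂ := ∑ α ∈ s', C (c α) *
      ((Lv (a z)) ^ (K - α z) * ∏ i ∈ F, (Lv (a i)) ^ (M - α i)) with hqdef
    have hterm : ∀ α ∈ s', algebraMap (MvPolynomial (Fin d) ℂ) (RatFunField d) (C (c α) *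
        ((Lv (a z)) ^ (K - α z) * ∏ i ∈ F, (Lv (a i)) ^ (M - α i)))
        = ((ellForm a z) ^ K * ∏ i ∈ F, (ellForm a i) ^ M) * (c α • fInv a α) := by
      intro α hα
      have hsupp : α.support ⊆ insert z F := hEins ▸ (hs α (hs'sub hα)).1
      rw [map_mul, map_mul, map_pow, map_prod]
      rw [show ∀ x : ℂ, algebraMap (MvPolynomial (Fin d) ℂ) (RatFunField d) (C x)
          = algebraMap ℂ (RatFunField d) x from fun x => by
        rw [← MvPolynomial.algebraMap_eq, ← IsScalarTower.algebraMap_apply]]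
      rw [Finset.prod_congr rfl (fun i (hi : i ∈ F) => map_pow
        (algebraMap (MvPolynomial (Fin d) ℂ) (RatFunField d)) (Lv (a i)) (M - α i))]
      simp only [← ellForm_eq a]
      rw [clear_denoms hzF hellF hellz hsupp (hKle α hα) (hMle α hα), csmul]
      ring
    have hq0 : q = 0 := by
      apply alg_eq_zero_iff.mp
      rw [hqdef, map_sum, Finset.sum_congr rfl hterm, ← Finset.mul_sum, hsum', mul_zero]
    set τ := aeval (R := ℂ) (tauFun a z j₀) with hτdef
    have hτLv : ∀ i, τ (Lv (a i)) = Lv (b i) := fun i => tau_Lv hj₀ (a i)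
    have hτLvz : τ (Lv (a z)) = 0 := by rw [hτLv z, hb, ctr_z hj₀, Lv_zero]
    set s'' := s'.filter (fun α => α z = K) with hs''def
    have hτq : ∑ α ∈ s'', C (c α) * ∏ i ∈ F, (Lv (b i)) ^ (M - α i) = 0 := by
      have h0 : τ q = 0 := by rw [hq0, map_zero]
      rw [hqdef, map_sum] at h0
      rw [← h0, hs''def, Finset.sum_filter]
      apply Finset.sum_congr rfl
      intro α hα
      rw [map_mul, map_mul, map_pow, map_prod, hτLvz]
      rw [show τ (C (c α)) = C (c α) from by
        rw [hτdef, aeval_C, MvPolynomial.algebraMap_eq]]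
      rw [Finset.prod_congr rfl (fun i (_ : i ∈ F) =>
        (show τ (Lv (a i) ^ (M - α i)) = Lv (b i) ^ (M - α i) from by rw [map_pow, hτLv i]))]
      by_cases hKα : α z = K
      · rw [if_pos hKα, hKα, Nat.sub_self, pow_zero, one_mul]
      · rw [if_neg hKα, zero_pow, zero_mul, mul_zero]
        exact Nat.sub_ne_zero_of_lt (lt_of_le_of_ne (hKle α hα) hKα)
    have hbff : ∀ i ∈ F, ellForm b i ≠ 0 := fun i hi => ellForm_ne_zero (hbne i hi)
    have hKd : ∑ α ∈ s'', c α • fInv b (α.erase z) = 0 := by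
      have h0 : algebraMap (MvPolynomial (Fin d) ℂ) (RatFunField d)
          (∑ α ∈ s'', C (c α) * ∏ i ∈ F, (Lv (b i)) ^ (M - α i)) = 0 := by
        rw [hτq, map_zero]
      rw [map_sum] at h0
      have hterm2 : ∀ α ∈ s'', algebraMap (MvPolynomial (Fin d) ℂ) (RatFunField d)
          (C (c α) * ∏ i ∈ F, (Lv (b i)) ^ (M - α i))
          = (∏ i ∈ F, (ellForm b i) ^ M) * (c α • fInv b (α.erase z)) := by
        intro α hα
        have hα' : α ∈ s' := (Finset.mem_filter.mp hα).1
        have hsupp2 : (α.erase z).support ⊆ F := by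
          rw [Finsupp.support_erase, hFdef]
          exact Finset.erase_subset_erase z (hs α (hs'sub hα')).1
        have hM2 : ∀ i, (α.erase z) i ≤ M := by
          intro i
          rcases eq_or_ne i z with rfl | hne
          · rw [Finsupp.erase_same]; exact Nat.zero_le M
          · rw [Finsupp.erase_ne hne]; exact hMle α hα' i
        rw [map_mul, map_prod]
        rw [show algebraMap (MvPolynomial (Fin d) ℂ) (RatFunField d) (C (c α))
            = algebraMap ℂ (RatFunField d) (c α) from by
          rw [← MvPolynomial.algebraMap_eq, ← IsScalarTower.algebraMap_apply]]
        rw [Finset.prod_congr rfl (fun i (hi : i ∈ F) => map_pow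
          (algebraMap (MvPolynomial (Fin d) ℂ) (RatFunField d)) (Lv (b i)) (M - α i))]
        simp only [← ellForm_eq b]
        rw [show ∏ i ∈ F, (ellForm b i) ^ (M - α i)
            = ∏ i ∈ F, (ellForm b i) ^ (M - (α.erase z) i) from
          Finset.prod_congr rfl (fun i hi => by
            rw [Finsupp.erase_ne (fun h : i = z => hzF (h ▸ hi))])]
        rw [term_eq hbff (α.erase z) hsupp2 hM2, csmul]
        ring
      rw [Finset.sum_congr rfl hterm2, ← Finset.mul_sum] at h0
      rcases mul_eq_zero.mp h0 with h | h
      · exact absurd h (Finset.prod_ne_zero_iff.mpr (fun i hi => pow_ne_zero M (hbff i hi)))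
      · exact h
    -- reindex and apply the induction hypothesis
    have hrecover : ∀ α ∈ s'', α.erase z + Finsupp.single z K = α := by
      intro α hα
      have hKα : α z = K := (Finset.mem_filter.mp hα).2
      rw [← hKα, Finsupp.erase_add_single]
    have hinj : ∀ α ∈ s'', ∀ α' ∈ s'', α.erase z = α'.erase z → α = α' := by
      intro α hα α' hα' h
      rw [← hrecover α hα, ← hrecover α' hα', h]
    set t := s''.image (fun α => α.erase z) with htdef
    set c' : (Fin n →₀ ℕ) → ℂ := fun β => c (β + Finsupp.single z K) with hc'def
    have hsum'' : ∑ β ∈ t, c' β • fInv b β = 0 := by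
      rw [htdef, Finset.sum_image hinj]
      rw [← hKd]
      apply Finset.sum_congr rfl
      intro α hα
      rw [hc'def]
      beta_reduce
      rw [hrecover α hα]
    have hfacts2 : ∀ β ∈ t, β.support ⊆ E.erase z ∧ FaceOn b σ (E.erase z) β.support := by
      intro β hβ
      obtain ⟨α, hα, rfl⟩ := Finset.mem_image.mp hβ
      have hα' : α ∈ s := hs'sub (Finset.mem_filter.mp hα).1
      have hzsupp : z ∈ α.support := Finsupp.mem_support_iff.mpr (by
        rw [(Finset.mem_filter.mp hα).2]
        exact Nat.one_le_iff_ne_zero.mp hK1)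
      constructor
      · rw [Finsupp.support_erase]
        exact Finset.erase_subset_erase z (hs α hα').1
      · rw [Finsupp.support_erase]
        exact faceOn_ctr hzE hzmax (hs α hα').1 hzsupp (hs α hα').2
    have hIH := ihN _ hcard (E.erase z) rfl b (fun i hi => hbne i hi) t hfacts2 c' hsum''
    have hfinal := hIH (αK.erase z) (Finset.mem_image_of_mem _
      (Finset.mem_filter.mpr ⟨hαKs, hαKz⟩))
    rw [hc'def] at hfinal
    beta_reduce at hfinal
    rw [hrecover αK (Finset.mem_filter.mpr ⟨hαKs, hαKz⟩)] at hfinal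
    exact hcs' αK hαKs hfinal

end PS
namespace PS

variable {d n : ℕ}

/-- Linear independence of the face monomials, in family form. -/
lemma indep_family {a : Fin n → Fin d → ℂ} (ha : ∀ i, a i ≠ 0) (σ : LinearOrder (Fin n))
    (B : Set (Fin n →₀ ℕ)) (hB : ∀ α ∈ B, BCFace a σ α.support) :
    LinearIndependent ℂ (fun x : B => fInv a x.1) := by
  classical
  rw [linearIndependent_iff']
  intro t g hg x hx
  set tt := t.image (fun x : B => (x : Fin n →₀ ℕ)) with htt
  set cc : (Fin n →₀ ℕ) → ℂ := fun β => if h : β ∈ B then g ⟨β, h⟩ else 0 with hcc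
  have hinj : ∀ x ∈ t, ∀ y ∈ t, (x : Fin n →₀ ℕ) = (y : Fin n →₀ ℕ) → x = y :=
    fun x _ y _ h => Subtype.ext h
  have hsum : ∑ β ∈ tt, cc β • fInv a β = 0 := by
    rw [htt, Finset.sum_image hinj, ← hg]
    apply Finset.sum_congr rfl
    intro y _
    congr 1
    rw [hcc]
    beta_reduce
    rw [dif_pos y.2]
  have hfacts : ∀ β ∈ tt, β.support ⊆ Finset.univ ∧ FaceOn a σ Finset.univ β.support := by
    intro β hβ
    obtain ⟨y, _, rfl⟩ := Finset.mem_image.mp hβ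
    exact ⟨Finset.subset_univ _, faceOn_univ.mpr (hB y.1 y.2)⟩
  have hres := independent_on σ Finset.univ.card Finset.univ rfl a (fun i _ => ha i)
    tt hfacts cc hsum x.1 (Finset.mem_image_of_mem _ hx)
  rw [hcc] at hres
  beta_reduce at hres
  rw [dif_pos x.2] at hres
  exact hres

/-- The set of degree-`m` face monomials. -/
def Bset (a : Fin n → Fin d → ℂ) (σ : LinearOrder (Fin n)) (m : ℕ) : Set (Fin n →₀ ℕ) :=
  {β | BCFace a σ β.support ∧ β.degree = m}

lemma Bset_finite (a : Fin n → Fin d → ℂ) (σ : LinearOrder (Fin n)) (m : ℕ) :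
    (Bset a σ m).Finite :=
  (Finsupp.finite_of_degree_le m).subset (fun _ hα => le_of_eq hα.2)

lemma degree_eq_of_mem_hs {m : ℕ} {p : MvPolynomial (Fin n) ℂ}
    (hp : p ∈ homogeneousSubmodule (Fin n) ℂ m) {v : Fin n →₀ ℕ} (hv : v ∈ p.support) :
    v.degree = m := by
  have h1 := (mem_homogeneousSubmodule m p).mp hp
  have h2 := h1 (MvPolynomial.mem_support_iff.mp hv)
  rw [Finsupp.degree_eq_weight_one]
  exact h2

/-- The graded dimension of the Orlik–Terao algebra. -/
lemma gradedDim_ker {a : Fin n → Fin d → ℂ} (ha : ∀ i, a i ≠ 0) (σ : LinearOrder (Fin n))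
    (m : ℕ) :
    gradedDim (RingHom.ker (phiHom a)) m = Nat.card (Bset a σ m) := by
  classical
  set φA := (aeval (fun i => (ellForm a i)⁻¹) : MvPolynomial (Fin n) ℂ →ₐ[ℂ] RatFunField d)
    with hφA
  have hφ : ∀ p, phiHom a p = φA p := by
    intro p
    rw [hφA]
    show eval₂ _ _ p = aeval _ p
    rw [MvPolynomial.aeval_def, IsScalarTower.algebraMap_eq ℂ (MvPolynomial (Fin d) ℂ)
      (RatFunField d)]
  set HS := homogeneousSubmodule (Fin n) ℂ m with hHS
  set T : HS →ₗ[ℂ] RatFunField d := φA.toLinearMap.comp HS.subtype with hT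
  have hker : LinearMap.ker T = Submodule.comap HS.subtype
      ((RingHom.ker (phiHom a)).restrictScalars ℂ) := by
    ext x
    simp only [LinearMap.mem_ker, Submodule.mem_comap, Submodule.restrictScalars_mem,
      Submodule.coe_subtype, RingHom.mem_ker, hT, LinearMap.coe_comp, Function.comp_apply,
      AlgHom.toLinearMap_apply, hφ]
  have heq : gradedDim (RingHom.ker (phiHom a)) m
      = Module.finrank ℂ ↥(LinearMap.range T) := by
    rw [gradedDim, ← hker]
    exact (LinearMap.quotKerEquivRange T).finrank_eq
  have hrange : LinearMap.range T = Submodule.span ℂ (fInv a '' (Bset a σ m)) := by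
    apply le_antisymm
    · rintro _ ⟨⟨p, hp⟩, rfl⟩
      show φA p ∈ _
      rw [show φA p = ∑ v ∈ p.support, (coeff v p) • fInv a v from by
        conv_lhs => rw [p.as_sum]
        rw [map_sum]
        apply Finset.sum_congr rfl
        intro v _
        rw [aeval_monomial, ← csmul]
        rfl]
      apply Submodule.sum_mem
      intro v hv
      apply Submodule.smul_mem
      have hdeg : v.degree = m := degree_eq_of_mem_hs hp hv
      have hsp := span_mem ha σ v
      rw [hdeg] at hsp
      exact hsp
    · rw [Submodule.span_le]
      rintro _ ⟨α, hα, rfl⟩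
      have hmono : (monomial α (1:ℂ)) ∈ HS := by
        rw [hHS, mem_homogeneousSubmodule]
        exact isHomogeneous_monomial _ hα.2
      refine ⟨⟨monomial α 1, hmono⟩, ?_⟩
      show φA (monomial α 1) = fInv a α
      rw [aeval_monomial, map_one, one_mul]
      rfl
  rw [heq, hrange]
  haveI : Fintype ↥(Bset a σ m) := (Bset_finite a σ m).fintype
  have hind : LinearIndependent ℂ (fun x : ↥(Bset a σ m) => fInv a x.1) :=
    indep_family ha σ _ (fun _ hα => hα.1)
  rw [show fInv a '' (Bset a σ m) = Set.range (fun x : ↥(Bset a σ m) => fInv a x.1) from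
    Set.image_eq_range _ _]
  rw [finrank_span_eq_card hind]
  exact Nat.card_eq_fintype_card.symm

end PS
namespace PS

variable {d n : ℕ}

lemma prod_X_eq (T : Finset (Fin n)) :
    ∏ i ∈ T, (X i : MvPolynomial (Fin n) ℂ)
      = monomial (∑ i ∈ T, Finsupp.single i 1) 1 := by
  classical
  induction T using Finset.induction_on with
  | empty => simp
  | insert _ _ h ih =>
    rw [Finset.prod_insert h, ih, Finset.sum_insert h, X, monomial_mul, one_mul]

lemma sum_single_apply (T : Finset (Fin n)) (j : Fin n) :
    (∑ i ∈ T, Finsupp.single i (1:ℕ)) j = if j ∈ T then 1 else 0 := by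
  classical
  rw [Finset.sum_apply']
  rw [Finset.sum_congr rfl (fun i (_ : i ∈ T) => Finsupp.single_apply)]
  exact Finset.sum_ite_eq' T j (fun _ => 1)

lemma support_sum_single (T : Finset (Fin n)) :
    (∑ i ∈ T, Finsupp.single i (1:ℕ)).support = T := by
  classical
  ext j
  rw [Finsupp.mem_support_iff, sum_single_apply]
  by_cases h : j ∈ T <;> simp [h]

lemma mem_bcIdeal_of_nonface {a : Fin n → Fin d → ℂ} {σ : LinearOrder (Fin n)}
    {β : Fin n →₀ ℕ} (hβ : ¬ BCFace a σ β.support) (r : ℂ) :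
    monomial β r ∈ bcIdeal a σ := by
  classical
  have hu : (∑ i ∈ β.support, Finsupp.single i (1:ℕ)) ≤ β := by
    intro j
    rw [sum_single_apply]
    by_cases h : j ∈ β.support
    · rw [if_pos h]
      exact Nat.one_le_iff_ne_zero.mpr (Finsupp.mem_support_iff.mp h)
    · rw [if_neg h]
      exact Nat.zero_le _
  have hsplit : monomial β r
      = monomial (β - ∑ i ∈ β.support, Finsupp.single i 1) r * ∏ i ∈ β.support, X i := by
    rw [prod_X_eq, monomial_mul, mul_one, tsub_add_cancel_of_le hu]
  rw [hsplit]
  exact Ideal.mul_mem_left _ _ (Ideal.subset_span ⟨β.support, hβ, rfl⟩)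

lemma support_nonface_of_mem {a : Fin n → Fin d → ℂ} {σ : LinearOrder (Fin n)}
    {p : MvPolynomial (Fin n) ℂ} (hp : p ∈ bcIdeal a σ) :
    ∀ β ∈ p.support, ¬ BCFace a σ β.support := by
  classical
  induction hp using Submodule.span_induction with
  | mem x hx =>
    obtain ⟨T, hT, rfl⟩ := hx
    intro β hβ
    rw [prod_X_eq, support_monomial, if_neg one_ne_zero] at hβ
    rw [Finset.mem_singleton] at hβ
    subst hβ
    rw [support_sum_single]
    exact hT
  | zero => intro β hβ; simp at hβ
  | add x y hx hy ihx ihy =>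
    intro β hβ
    rcases Finset.mem_union.mp (Finsupp.support_add hβ) with h | h
    · exact ihx β h
    · exact ihy β h
  | smul r x hx ihx =>
    intro β hβ
    rw [smul_eq_mul] at hβ
    have hβ' := MvPolynomial.support_mul r x hβ
    rw [Finset.mem_add] at hβ'
    obtain ⟨γ, hγ, δ, hδ, hsum⟩ := hβ'
    intro hface
    apply ihx δ hδ
    apply bcface_subset _ hface
    intro j hj
    rw [Finsupp.mem_support_iff] at hj ⊢
    rw [← hsum, Finsupp.add_apply]
    intro hcon
    exact hj (by omega)

/-- The graded dimension of the Stanley–Reisner ring. -/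
lemma gradedDim_bc (a : Fin n → Fin d → ℂ) (σ : LinearOrder (Fin n)) (m : ℕ) :
    gradedDim (bcIdeal a σ) m = Nat.card (Bset a σ m) := by
  classical
  haveI : Fintype ↥(Bset a σ m) := (Bset_finite a σ m).fintype
  set HS := homogeneousSubmodule (Fin n) ℂ m with hHS
  set Ψ : HS →ₗ[ℂ] (↥(Bset a σ m) → ℂ) :=
    { toFun := fun p x => coeff x.1 p.1,
      map_add' := fun p q => by funext x; exact coeff_add x.1 p.1 q.1,
      map_smul' := fun r p => by funext x; exact coeff_smul x.1 r p.1 } with hΨ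
  have hkerΨ : LinearMap.ker Ψ = Submodule.comap HS.subtype
      ((bcIdeal a σ).restrictScalars ℂ) := by
    ext x
    obtain ⟨p, hp⟩ := x
    simp only [LinearMap.mem_ker, Submodule.mem_comap, Submodule.restrictScalars_mem,
      Submodule.coe_subtype]
    constructor
    · intro h0
      have hc : ∀ y : ↥(Bset a σ m), coeff y.1 p = 0 := fun y => congrFun h0 y
      rw [show p = ∑ v ∈ p.support, monomial v (coeff v p) from p.as_sum]
      apply Submodule.sum_mem
      intro v hv
      apply mem_bcIdeal_of_nonface
      intro hface
      have hdeg : v.degree = m := degree_eq_of_mem_hs hp hv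
      exact (MvPolynomial.mem_support_iff.mp hv) (hc ⟨v, ⟨hface, hdeg⟩⟩)
    · intro hmem
      funext y
      by_contra hne
      exact support_nonface_of_mem hmem y.1 (MvPolynomial.mem_support_iff.mpr hne) y.2.1
  have hsurj : Function.Surjective Ψ := by
    intro g
    have hmem : (∑ x : ↥(Bset a σ m), g x • monomial x.1 (1:ℂ)) ∈ HS := by
      apply Submodule.sum_mem
      intro x _
      apply Submodule.smul_mem
      rw [hHS, mem_homogeneousSubmodule]
      exact isHomogeneous_monomial _ x.2.2
    refine ⟨⟨_, hmem⟩, ?_⟩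
    funext x
    show coeff x.1 (∑ y : ↥(Bset a σ m), g y • monomial y.1 (1:ℂ)) = g x
    rw [coeff_sum]
    rw [Finset.sum_eq_single x]
    · rw [coeff_smul, coeff_monomial, if_pos rfl, smul_eq_mul, mul_one]
    · intro y _ hyx
      rw [coeff_smul, coeff_monomial, if_neg (fun h => hyx (Subtype.ext h)), smul_zero]
    · intro hx
      exact absurd (Finset.mem_univ x) hx
  calc gradedDim (bcIdeal a σ) m = Module.finrank ℂ (HS ⧸ LinearMap.ker Ψ) := by
        rw [gradedDim, hkerΨ]
    _ = Module.finrank ℂ ↥(LinearMap.range Ψ) := (LinearMap.quotKerEquivRange Ψ).finrank_eq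
    _ = Module.finrank ℂ (↥(Bset a σ m) → ℂ) := by
        rw [LinearMap.range_eq_top.mpr hsurj]
        exact finrank_top ℂ _
    _ = Nat.card (Bset a σ m) := by
        rw [Module.finrank_fintype_fun_eq_card, Nat.card_eq_fintype_card]

end PS

/-- For every linear order `σ` on `{1,…,n}` and every degree `m`, the Hilbert function of
`R(𝒜) = ℂ[e]/I(𝒜)` agrees with that of the Stanley–Reisner ring of the `σ`-broken
circuit complex. -/
theorem stmt3 {d n : ℕ} (a : Fin n → Fin d → ℂ)
    (ha : ∀ i, a i ≠ 0)
    (hspan : Submodule.span ℂ (Set.range a) = ⊤)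
    (σ : LinearOrder (Fin n)) :
    ∀ m : ℕ, gradedDim (RingHom.ker (phiHom a)) m = gradedDim (bcIdeal a σ) m := by
  intro m
  rw [PS.gradedDim_ker ha σ m, PS.gradedDim_bc a σ m]
end
end

section
/- For a point z ∈ ℂ^n, the following are equivalent: (i) the stabilizer {t ∈ T^k : t_i z_i = z_i for all i} of z in T^k is finite; (ii) the family of vectors {a_i : i such that z_i = 0} is linearly independent in ℂ^d; (iii) the linear map ℂ^n → (𝔱^k)^* sending w to the functional x ↦ Σ_i z_i w_i x_i is surjective. -/
open scoped BigOperators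

noncomputable section

/-- The subgroup `T^k ⊆ (ℂ^×)^n` cut out by the integer matrix `A`:
`T^k = {t : Π_i t_i^{A_{ji}} = 1 for j = 1,…,d}`. -/
def Tk {d n : ℕ} (A : Matrix (Fin d) (Fin n) ℤ) : Set (Fin n → ℂˣ) :=
  {t | ∀ j : Fin d, ∏ i : Fin n, (t i) ^ (A j i) = 1}

/-- `𝔱^k = ker (A : ℂ^n → ℂ^d)`. -/
def tkLie {d n : ℕ} (A : Matrix (Fin d) (Fin n) ℤ) : Submodule ℂ (Fin n → ℂ) :=
  LinearMap.ker (Matrix.mulVecLin (A.map (Int.cast : ℤ → ℂ)))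

/-- The linear functional `x ↦ Σ_i z_i w_i x_i` on `𝔱^k`, i.e. `μ(z,w) ∈ (𝔱^k)^*`. -/
def muL {d n : ℕ} (A : Matrix (Fin d) (Fin n) ℤ) (z w : Fin n → ℂ) :
    Module.Dual ℂ (tkLie A) :=
  ∑ i : Fin n, (z i * w i) •
    ((LinearMap.proj (R := ℂ) (φ := fun _ : Fin n => ℂ) i).comp (tkLie A).subtype)

/-- The stabilizer of `z ∈ ℂ^n` in `T^k`. -/
def stab {d n : ℕ} (A : Matrix (Fin d) (Fin n) ℤ) (z : Fin n → ℂ) : Set (Fin n → ℂˣ) :=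
  {t | t ∈ Tk A ∧ ∀ i, (t i : ℂ) * z i = z i}

open scoped Classical

section aux

variable {d n : ℕ} (A : Matrix (Fin d) (Fin n) ℤ) (z : Fin n → ℂ)

private lemma sum_subtype_zero {M : Type*} [AddCommMonoid M] (f : Fin n → M)
    (hf : ∀ i, z i ≠ 0 → f i = 0) :
    ∑ i : {i : Fin n // z i = 0}, f i = ∑ i, f i := by
  rw [← Finset.sum_subtype (p := fun i => z i = 0) (Finset.univ.filter fun i => z i = 0)
    (by simp) f]
  exact Finset.sum_filter_of_ne fun i _ h => by
    by_contra hz; exact h (hf i hz)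

private lemma mulVec_eq (x : Fin n → ℂ) :
    (A.map (Int.cast : ℤ → ℂ)).mulVec x = 0 ↔ ∀ j, ∑ i, (A j i : ℂ) * x i = 0 := by
  rw [funext_iff]
  exact forall_congr' fun j => by
    simp [Matrix.mulVec, dotProduct, Matrix.map_apply]

private lemma li_iff :
    LinearIndependent ℂ (fun i : {i : Fin n // z i = 0} => fun j : Fin d => (A j i : ℂ)) ↔
    (∀ x : Fin n → ℂ, (A.map (Int.cast : ℤ → ℂ)).mulVec x = 0 →
      (∀ i, z i ≠ 0 → x i = 0) → x = 0) := by
  rw [Fintype.linearIndependent_iff]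
  constructor
  · intro H x hAx hx
    rw [mulVec_eq] at hAx
    have h0 : ∀ i : {i : Fin n // z i = 0}, x i = 0 := by
      apply H fun i => x i
      funext j
      simp only [Finset.sum_apply, Pi.smul_apply, smul_eq_mul, Pi.zero_apply]
      rw [sum_subtype_zero (z := z) (f := fun i => x i * (A j i : ℂ))
        (fun i hzi => by simp [hx i hzi])]
      calc ∑ i, x i * (A j i : ℂ) = ∑ i, (A j i : ℂ) * x i :=
            Finset.sum_congr rfl fun i _ => mul_comm _ _
        _ = 0 := hAx j
    funext i
    by_cases hzi : z i = 0
    · exact h0 ⟨i, hzi⟩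
    · exact hx i hzi
  · intro H g hg i
    set x : Fin n → ℂ := fun i => if h : z i = 0 then g ⟨i, h⟩ else 0 with hxdef
    have hAx : (A.map (Int.cast : ℤ → ℂ)).mulVec x = 0 := by
      rw [mulVec_eq]
      intro j
      have hgj := congrFun hg j
      simp only [Finset.sum_apply, Pi.smul_apply, smul_eq_mul, Pi.zero_apply] at hgj
      rw [← sum_subtype_zero (z := z) (f := fun i => (A j i : ℂ) * x i)
        (fun i hzi => by simp [hxdef, dif_neg hzi])]
      calc ∑ i : {i : Fin n // z i = 0}, (A j i : ℂ) * x i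
          = ∑ i : {i : Fin n // z i = 0}, g i * (A j i : ℂ) := by
            refine Finset.sum_congr rfl fun i _ => ?_
            simp [hxdef, dif_pos i.2, mul_comm]
        _ = 0 := hgj
    have hx0 : x = 0 := H x hAx fun i hzi => by simp [hxdef, dif_neg hzi]
    have := congrFun hx0 i
    simpa [hxdef, dif_pos i.2] using this


private lemma mem_tkLie_iff (x : Fin n → ℂ) :
    x ∈ tkLie A ↔ (A.map (Int.cast : ℤ → ℂ)).mulVec x = 0 := by
  simp [tkLie, LinearMap.mem_ker]

private lemma muL_apply (w : Fin n → ℂ) (x : tkLie A) :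
    muL A z w x = ∑ i, (z i * w i) * (x : Fin n → ℂ) i := by
  simp [muL]

private lemma surj_iff :
    Function.Surjective (fun w : Fin n → ℂ => muL A z w) ↔
    (∀ x : Fin n → ℂ, (A.map (Int.cast : ℤ → ℂ)).mulVec x = 0 →
      (∀ i, z i ≠ 0 → x i = 0) → x = 0) := by
  constructor
  · intro hs x hAx hx
    by_contra hx0
    obtain ⟨i₀, hi₀⟩ := Function.ne_iff.mp hx0
    have hi₀' : x i₀ ≠ 0 := by simpa using hi₀
    set xv : tkLie A := ⟨x, (mem_tkLie_iff A x).mpr hAx⟩ with hxv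
    obtain ⟨w, hw⟩ := hs ((LinearMap.proj (R := ℂ) (φ := fun _ : Fin n => ℂ) i₀).comp
      (tkLie A).subtype)
    replace hw : muL A z w = (LinearMap.proj (R := ℂ) (φ := fun _ : Fin n => ℂ) i₀).comp
      (tkLie A).subtype := hw
    have h1 : muL A z w xv = x i₀ := by rw [hw]; rfl
    have h2 : muL A z w xv = 0 := by
      rw [muL_apply]
      refine Finset.sum_eq_zero fun i _ => ?_
      by_cases hzi : z i = 0
      · simp [hzi]
      · have hxi : x i = 0 := hx i hzi
        show (z i * w i) * x i = 0
        simp [hxi]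
    exact hi₀' (by rw [← h1, h2])
  · intro hP f
    set Ψ : tkLie A →ₗ[ℂ] (Fin n → ℂ) :=
      { toFun := fun x => fun i => z i * (x : Fin n → ℂ) i
        map_add' := fun x y => by funext i; simp [mul_add]
        map_smul' := fun c x => by funext i; simp [mul_left_comm] } with hΨ
    have hker : LinearMap.ker Ψ = ⊥ := by
      rw [LinearMap.ker_eq_bot']
      intro x hx
      have hx' : ∀ i, z i * (x : Fin n → ℂ) i = 0 := fun i => congrFun hx i
      apply Subtype.ext
      refine hP (x : Fin n → ℂ) ((mem_tkLie_iff A _).mp x.2) fun i hzi => ?_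
      have := hx' i
      exact (mul_eq_zero.mp this).resolve_left hzi
    obtain ⟨σ, hσ⟩ := Ψ.exists_leftInverse_of_injective hker
    set g : (Fin n → ℂ) →ₗ[ℂ] ℂ := f.comp σ with hgdef
    set e : Fin n → (Fin n → ℂ) := fun i => fun j => if i = j then 1 else 0 with he
    have hg : ∀ v : Fin n → ℂ, g v = ∑ i, v i * g (e i) := by
      intro v
      conv_lhs => rw [pi_eq_sum_univ v]
      rw [map_sum]
      exact Finset.sum_congr rfl fun i _ => by rw [map_smul, smul_eq_mul]
    refine ⟨fun i => g (e i), ?_⟩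
    show muL A z _ = f
    refine LinearMap.ext fun x => ?_
    rw [muL_apply]
    calc ∑ i, (z i * g (e i)) * (x : Fin n → ℂ) i
        = ∑ i, (Ψ x) i * g (e i) := Finset.sum_congr rfl fun i _ => by
          show _ = (z i * (x : Fin n → ℂ) i) * g (e i); ring
      _ = g (Ψ x) := (hg _).symm
      _ = f (σ (Ψ x)) := rfl
      _ = f x := by
          rw [show σ (Ψ x) = x from by simpa using DFunLike.congr_fun hσ x]


private lemma infinite_of_not_li
    (h : ¬ LinearIndependent ℂ
      (fun i : {i : Fin n // z i = 0} => fun j : Fin d => (A j i : ℂ))) :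
    (stab A z).Infinite := by
  rw [Fintype.not_linearIndependent_iff] at h
  obtain ⟨g, hg, i₀, hi₀⟩ := h
  set c : Fin n → ℂ := fun i => if h : z i = 0 then g ⟨i, h⟩ else 0 with hc
  have hrel : ∀ j, ∑ i, (A j i : ℂ) * c i = 0 := by
    intro j
    have hgj := congrFun hg j
    simp only [Finset.sum_apply, Pi.smul_apply, smul_eq_mul, Pi.zero_apply] at hgj
    rw [← sum_subtype_zero (z := z) (f := fun i => (A j i : ℂ) * c i)
      (fun i hzi => by simp [hc, dif_neg hzi])]
    calc ∑ i : {i : Fin n // z i = 0}, (A j i : ℂ) * c i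
        = ∑ i : {i : Fin n // z i = 0}, g i * (A j i : ℂ) := by
          refine Finset.sum_congr rfl fun i _ => ?_
          simp [hc, dif_pos i.2, mul_comm]
      _ = 0 := hgj
  have hc0 : c i₀.val ≠ 0 := by
    simpa [hc, dif_pos i₀.2] using hi₀
  set T : ℂ → (Fin n → ℂˣ) :=
    fun u i => Units.mk0 (Complex.exp (u * c i)) (Complex.exp_ne_zero _) with hT
  have hmem : ∀ u, T u ∈ stab A z := by
    intro u
    refine ⟨fun j => ?_, fun i => ?_⟩
    · apply Units.ext
      rw [Units.val_one]
      have : ((∏ i, (T u i) ^ (A j i) : ℂˣ) : ℂ) = ∏ i, Complex.exp (u * c i) ^ (A j i) := by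
        rw [← Units.coeHom_apply, map_prod]
        exact Finset.prod_congr rfl fun i _ => by
          rw [Units.coeHom_apply, Units.val_zpow_eq_zpow_val]; rfl
      rw [this]
      have : ∀ i, Complex.exp (u * c i) ^ (A j i)
          = Complex.exp (u * ((A j i : ℂ) * c i)) := by
        intro i
        rw [← Complex.exp_int_mul]
        ring_nf
      rw [Finset.prod_congr rfl fun i _ => this i, ← Complex.exp_sum, ← Finset.mul_sum,
        hrel j, mul_zero, Complex.exp_zero]
    · by_cases hzi : z i = 0
      · simp [hzi]
      · have : c i = 0 := dif_neg hzi
        show Complex.exp (u * c i) * z i = z i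
        rw [this, mul_zero, Complex.exp_zero, one_mul]
  refine Set.infinite_of_injective_forall_mem
    (f := fun k : ℕ => T ((k : ℂ) / c i₀.val)) ?_ (fun k => hmem _)
  intro k₁ k₂ hkk
  have hv : Complex.exp ((k₁ : ℂ) / c i₀.val * c i₀.val)
      = Complex.exp ((k₂ : ℂ) / c i₀.val * c i₀.val) :=
    congrArg Units.val (congrFun hkk i₀.val)
  rw [div_mul_cancel₀ _ hc0, div_mul_cancel₀ _ hc0] at hv
  rw [show ((k₁ : ℕ) : ℂ) = (((k₁ : ℕ) : ℝ) : ℂ) by norm_cast,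
    show ((k₂ : ℕ) : ℂ) = (((k₂ : ℕ) : ℝ) : ℂ) by norm_cast,
    ← Complex.ofReal_exp, ← Complex.ofReal_exp] at hv
  have h2 : ((k₁ : ℕ) : ℝ) = ((k₂ : ℕ) : ℝ) :=
    Real.exp_injective (Complex.ofReal_injective hv)
  exact_mod_cast h2


private lemma exists_int_dual
    (hli : LinearIndependent ℂ
      (fun i : {i : Fin n // z i = 0} => fun j : Fin d => (A j i : ℂ)))
    (i₀ : Fin n) (hz₀ : z i₀ = 0) :
    ∃ (N : ℤ) (m : Fin d → ℤ), N ≠ 0 ∧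
      ∀ i, z i = 0 → ∑ j, m j * A j i = if i = i₀ then N else 0 := by
  set L : (Fin d → ℚ) →ₗ[ℚ] ({i : Fin n // z i = 0} → ℚ) :=
    { toFun := fun q => fun i => ∑ j, q j * (A j i.val : ℚ)
      map_add' := fun a b => by funext i; simp [add_mul, Finset.sum_add_distrib]
      map_smul' := fun r a => by funext i; simp [Finset.mul_sum, mul_assoc] } with hL
  have hLsurj : Function.Surjective L := by
    rw [← LinearMap.dualMap_injective_iff, ← LinearMap.ker_eq_bot, LinearMap.ker_eq_bot']
    intro φ hφ
    set e : {i : Fin n // z i = 0} → ({i : Fin n // z i = 0} → ℚ) :=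
      fun i => fun i' => if i = i' then 1 else 0 with he
    have hφv : ∀ v, φ v = ∑ i, v i * φ (e i) := by
      intro v
      conv_lhs => rw [pi_eq_sum_univ v]
      rw [map_sum]
      exact Finset.sum_congr rfl fun i _ => by rw [map_smul, smul_eq_mul]
    have hrelj : ∀ j, ∑ i : {i : Fin n // z i = 0}, φ (e i) * (A j i.val : ℚ) = 0 := by
      intro j
      have h0 : φ (L (fun j' => if j = j' then 1 else 0)) = 0 := by
        have := DFunLike.congr_fun hφ (fun j' => if j = j' then 1 else 0)
        simpa using this
      have hL0 : L (fun j' => if j = j' then 1 else 0) = fun i => (A j i.val : ℚ) := by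
        funext i
        show ∑ j', (if j = j' then (1:ℚ) else 0) * (A j' i.val : ℚ) = _
        simp [ite_mul]
      rw [hL0, hφv] at h0
      rw [← h0]
      exact Finset.sum_congr rfl fun i _ => mul_comm _ _
    have hc0 : ∀ i : {i : Fin n // z i = 0}, φ (e i) = 0 := by
      have hz := Fintype.linearIndependent_iff.mp hli
        (fun i => ((φ (e i) : ℚ) : ℂ)) ?_
      · intro i
        exact_mod_cast hz i
      · funext j
        simp only [Finset.sum_apply, Pi.smul_apply, smul_eq_mul, Pi.zero_apply]
        exact_mod_cast hrelj j
    refine LinearMap.ext fun v => ?_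
    rw [hφv v]
    simp [hc0]
  obtain ⟨q, hq⟩ := hLsurj (fun i => if i.val = i₀ then 1 else 0)
  obtain ⟨b, hb⟩ := IsLocalization.exist_integer_multiples_of_finite
    (nonZeroDivisors ℤ) (S := ℚ) q
  have hb' : ∀ j, ∃ mj : ℤ, (mj : ℚ) = ((b : ℤ) : ℚ) * q j := by
    intro j
    obtain ⟨mj, hmj⟩ := hb j
    refine ⟨mj, ?_⟩
    rw [show ((b : ℤ) : ℚ) * q j = (b : ℤ) • q j from (zsmul_eq_mul _ _).symm, ← hmj]
    simp
  choose m hm using hb'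
  refine ⟨(b : ℤ), m, nonZeroDivisors.coe_ne_zero b, fun i hzi => ?_⟩
  have key : ((∑ j, m j * A j i : ℤ) : ℚ) = ((b : ℤ) : ℚ) * (if i = i₀ then 1 else 0) := by
    push_cast
    calc ∑ j, (m j : ℚ) * (A j i : ℚ)
        = ∑ j, ((b : ℤ) : ℚ) * (q j * (A j i : ℚ)) := by
          refine Finset.sum_congr rfl fun j _ => ?_
          rw [hm j, mul_assoc]
      _ = ((b : ℤ) : ℚ) * ∑ j, q j * (A j i : ℚ) := by rw [Finset.mul_sum]
      _ = ((b : ℤ) : ℚ) * (if i = i₀ then 1 else 0) := by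
          have hqi := congrFun hq (⟨i, hzi⟩ : {i : Fin n // z i = 0})
          rw [show (L q) ⟨i, hzi⟩ = ∑ j, q j * (A j i : ℚ) from rfl] at hqi
          rw [hqi]
  have key2 : ((∑ j, m j * A j i : ℤ) : ℚ)
      = ((if i = i₀ then (b : ℤ) else 0 : ℤ) : ℚ) := by
    rw [key]; split_ifs <;> simp
  exact_mod_cast key2

private lemma zpow_sum_aux {ι : Type*} (t : ℂˣ) (s : Finset ι) (e : ι → ℤ) :
    t ^ (∑ j ∈ s, e j) = ∏ j ∈ s, t ^ (e j) := by
  induction s using Finset.cons_induction with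
  | empty => simp
  | cons a s ha ih => rw [Finset.sum_cons, Finset.prod_cons, zpow_add, ih]

private lemma stab_pow (t : Fin n → ℂˣ) (ht : t ∈ stab A z)
    (N : ℤ) (m : Fin d → ℤ) (i₀ : Fin n) (hz₀ : z i₀ = 0)
    (hNm : ∀ i, z i = 0 → ∑ j, m j * A j i = if i = i₀ then N else 0) :
    t i₀ ^ N = 1 := by
  obtain ⟨ht1, ht2⟩ := ht
  have hone : ∀ i, z i ≠ 0 → t i = 1 := by
    intro i hzi
    apply Units.ext
    exact mul_right_cancel₀ hzi (by rw [Units.val_one, one_mul]; exact ht2 i)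
  have key : ∏ j, (∏ i, t i ^ (A j i)) ^ (m j) = 1 :=
    Finset.prod_eq_one fun j _ => by rw [ht1 j, one_zpow]
  have step1 : ∏ j, (∏ i, t i ^ (A j i)) ^ (m j) = ∏ i, t i ^ (∑ j, m j * A j i) := by
    calc ∏ j, (∏ i, t i ^ (A j i)) ^ (m j)
        = ∏ j, ∏ i, (t i ^ (A j i)) ^ (m j) :=
          Finset.prod_congr rfl fun j _ => (Finset.prod_zpow _ _ _).symm
      _ = ∏ i, ∏ j, (t i ^ (A j i)) ^ (m j) := Finset.prod_comm
      _ = ∏ i, t i ^ (∑ j, m j * A j i) := by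
          refine Finset.prod_congr rfl fun i _ => ?_
          rw [zpow_sum_aux]
          exact Finset.prod_congr rfl fun j _ => by rw [mul_comm, zpow_mul]
  rw [step1] at key
  have step2 : ∏ i, t i ^ (∑ j, m j * A j i) = t i₀ ^ N := by
    rw [Finset.prod_eq_single i₀]
    · rw [hNm i₀ hz₀, if_pos rfl]
    · intro i _ hne
      by_cases hzi : z i = 0
      · rw [hNm i hzi, if_neg hne, zpow_zero]
      · rw [hone i hzi, one_zpow]
    · intro hmem; exact absurd (Finset.mem_univ i₀) hmem
  rw [← step2, key]

private lemma finite_pow_units (N : ℤ) (hN : N ≠ 0) : {u : ℂˣ | u ^ N = 1}.Finite := by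
  have hK : 0 < N.natAbs := Int.natAbs_pos.mpr hN
  have hsub : {u : ℂˣ | u ^ N = 1} ⊆ Units.val ⁻¹' {x : ℂ | x ^ N.natAbs = 1} := by
    intro u hu
    have hu0 : u ^ N = 1 := hu
    have hu' : u ^ N.natAbs = 1 := by
      rcases Int.natAbs_eq N with h | h
      · rw [← zpow_natCast, ← h]
        exact hu0
      · have h1 : u ^ (-(N.natAbs : ℤ)) = 1 := by rw [← h]; exact hu0
        rw [zpow_neg, inv_eq_one] at h1
        rw [← zpow_natCast]
        exact h1
    show (u : ℂ) ^ N.natAbs = 1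
    rw [← Units.val_pow_eq_pow_val, hu', Units.val_one]
  refine Set.Finite.subset (Set.Finite.preimage (Units.val_injective.injOn) ?_) hsub
  have hroot : {x : ℂ | x ^ N.natAbs = 1}
      ⊆ {x : ℂ | ((Polynomial.X : Polynomial ℂ) ^ N.natAbs - 1).IsRoot x} := by
    intro x hx
    simp only [Set.mem_setOf_eq, Polynomial.IsRoot, Polynomial.eval_sub,
      Polynomial.eval_pow, Polynomial.eval_X, Polynomial.eval_one, sub_eq_zero]
    exact hx
  exact Set.Finite.subset (Polynomial.finite_setOf_isRoot (by
    simpa using Polynomial.X_pow_sub_C_ne_zero hK (1 : ℂ))) hroot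

private lemma finite_of_li
    (hli : LinearIndependent ℂ
      (fun i : {i : Fin n // z i = 0} => fun j : Fin d => (A j i : ℂ))) :
    (stab A z).Finite := by
  have hdata : ∀ i : Fin n, ∃ N : ℤ, N ≠ 0 ∧ ∀ t ∈ stab A z, t i ^ N = 1 := by
    intro i
    by_cases hzi : z i = 0
    · obtain ⟨N, m, hN, hNm⟩ := exists_int_dual A z hli i hzi
      exact ⟨N, hN, fun t ht => stab_pow A z t ht N m i hzi hNm⟩
    · refine ⟨1, one_ne_zero, fun t ht => ?_⟩
      rw [zpow_one]
      apply Units.ext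
      exact mul_right_cancel₀ hzi (by rw [Units.val_one, one_mul]; exact ht.2 i)
  choose N hN0 hNt using hdata
  refine Set.Finite.subset (Set.Finite.pi (fun i => finite_pow_units (N i) (hN0 i))) ?_
  intro t ht
  simp only [Set.mem_pi, Set.mem_univ, forall_true_left]
  exact fun i => hNt i t ht

end aux

/-- For a point `z ∈ ℂ^n`, the following are equivalent: (i) the stabilizer of `z` in `T^k`
is finite; (ii) the vectors `{a_i : z_i = 0}` are linearly independent in `ℂ^d`;
(iii) the linear map `ℂ^n → (𝔱^k)^*`, `w ↦ (x ↦ Σ_i z_i w_i x_i)`, is surjective. -/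
theorem stmt5 {d n : ℕ} (hd : 0 < d) (hn : 0 < n) (hdn : d ≤ n) (k : ℕ) (hk : k = n - d)
    (A : Matrix (Fin d) (Fin n) ℤ)
    (hcols : ∀ i : Fin n, (fun j => A j i) ≠ (0 : Fin d → ℤ))
    (hrank : (A.map (Int.cast : ℤ → ℚ)).rank = d)
    (z : Fin n → ℂ) :
    List.TFAE
      [ (stab A z).Finite,
        LinearIndependent ℂ (fun i : {i : Fin n // z i = 0} => fun j : Fin d => (A j i : ℂ)),
        Function.Surjective (fun w : Fin n → ℂ => muL A z w) ] := by
  tfae_have 1 ↔ 2 := by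
    constructor
    · intro hfin
      by_contra hli
      exact (infinite_of_not_li A z hli) hfin
    · exact finite_of_li A z
  tfae_have 2 ↔ 3 := (li_iff A z).trans (surj_iff A z).symm
  tfae_finish
end
end

section
/- If λ ∈ (𝔱^k)^* is a regular value of μ, then T^k acts locally freely on μ^{-1}(λ): for every (z,w) ∈ ℂ^n × ℂ^n with μ(z,w) = λ, the stabilizer {t ∈ T^k : t_i z_i = z_i and t_i^{-1} w_i = w_i for all i} of (z,w) under the action t·(z,w) = (t·z, t^{-1}·w) is finite. -/
open scoped BigOperators

noncomputable section

/-- The moment map `μ : ℂ^n × ℂ^n → (𝔱^k)^*`, `μ(z,w)(x) = Σ_i z_i w_i x_i`. -/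
def muMap {d n : ℕ} (A : Matrix (Fin d) (Fin n) ℤ) :
    (Fin n → ℂ) × (Fin n → ℂ) → (tkLie A →L[ℂ] ℂ) :=
  fun p => LinearMap.toContinuousLinearMap (muL A p.1 p.2)

/-- `λ` is a regular value of `μ` if the derivative of `μ` is surjective at every point of
`μ⁻¹(λ)`. -/
def IsRegularValue {d n : ℕ} (A : Matrix (Fin d) (Fin n) ℤ) (lam : tkLie A →L[ℂ] ℂ) : Prop :=
  ∀ p : (Fin n → ℂ) × (Fin n → ℂ), muMap A p = lam →
    Function.Surjective (fderiv ℂ (muMap A) p)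

-- auxiliary lemmas

lemma prod_zpow_eq_zpow_sum {G ι : Type*} [CommGroup G] (s : Finset ι) (f : ι → ℤ) (a : G) :
    ∏ i ∈ s, a ^ f i = a ^ (∑ i ∈ s, f i) := by
  induction s using Finset.cons_induction with
  | empty => simp
  | cons i s hi ih => simp [Finset.prod_cons, Finset.sum_cons, ih, zpow_add]

lemma muMap_apply {d n : ℕ} (A : Matrix (Fin d) (Fin n) ℤ) (z w : Fin n → ℂ) (x : tkLie A) :
    muMap A (z, w) x = ∑ i : Fin n, z i * w i * (x : Fin n → ℂ) i := by
  simp [muMap, muL, mul_assoc]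

lemma muMap_isBoundedBilinear {d n : ℕ} (A : Matrix (Fin d) (Fin n) ℤ) :
    IsBoundedBilinearMap ℂ (muMap A) where
  add_left x₁ x₂ y := by
    ext v; simp only [muMap_apply, ContinuousLinearMap.add_apply, Pi.add_apply,
      ← Finset.sum_add_distrib]
    exact Finset.sum_congr rfl fun i _ => by ring
  smul_left c x y := by
    ext v; simp only [muMap_apply, ContinuousLinearMap.smul_apply, Pi.smul_apply,
      smul_eq_mul, Finset.mul_sum]
    exact Finset.sum_congr rfl fun i _ => by ring
  add_right x y₁ y₂ := by
    ext v; simp only [muMap_apply, ContinuousLinearMap.add_apply, Pi.add_apply,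
      ← Finset.sum_add_distrib]
    exact Finset.sum_congr rfl fun i _ => by ring
  smul_right c x y := by
    ext v; simp only [muMap_apply, ContinuousLinearMap.smul_apply, Pi.smul_apply,
      smul_eq_mul, Finset.mul_sum]
    exact Finset.sum_congr rfl fun i _ => by ring
  bound := by
    refine ⟨(n : ℝ) + 1, by positivity, fun z w => ?_⟩
    have hb : (0 : ℝ) ≤ ((n : ℝ) + 1) * ‖z‖ * ‖w‖ := by positivity
    refine ContinuousLinearMap.opNorm_le_bound _ hb fun x => ?_
    rw [muMap_apply]
    calc ‖∑ i : Fin n, z i * w i * (x : Fin n → ℂ) i‖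
        ≤ ∑ i : Fin n, ‖z i * w i * (x : Fin n → ℂ) i‖ := norm_sum_le _ _
      _ ≤ ∑ _i : Fin n, ‖z‖ * ‖w‖ * ‖x‖ := by
          refine Finset.sum_le_sum fun i _ => ?_
          rw [norm_mul, norm_mul]
          have h1 : ‖z i‖ ≤ ‖z‖ := norm_le_pi_norm z i
          have h2 : ‖w i‖ ≤ ‖w‖ := norm_le_pi_norm w i
          have h3 : ‖(x : Fin n → ℂ) i‖ ≤ ‖x‖ := norm_le_pi_norm (x : Fin n → ℂ) i
          exact mul_le_mul (mul_le_mul h1 h2 (norm_nonneg _) (norm_nonneg _)) h3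
            (norm_nonneg _) (by positivity)
      _ = (n : ℝ) * (‖z‖ * ‖w‖ * ‖x‖) := by
          simp [Finset.sum_const, Finset.card_univ, mul_comm]
      _ ≤ ((n : ℝ) + 1) * ‖z‖ * ‖w‖ * ‖x‖ := by
          have : (n : ℝ) ≤ (n : ℝ) + 1 := by linarith
          nlinarith [norm_nonneg z, norm_nonneg w, norm_nonneg x, this]

/-- the coordinate functional on `tkLie A` -/
def epsFn {d n : ℕ} (A : Matrix (Fin d) (Fin n) ℤ) (i : Fin n) : tkLie A →L[ℂ] ℂ :=
  LinearMap.toContinuousLinearMap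
    ((LinearMap.proj (R := ℂ) (φ := fun _ : Fin n => ℂ) i).comp (tkLie A).subtype)

lemma epsFn_apply {d n : ℕ} (A : Matrix (Fin d) (Fin n) ℤ) (i : Fin n) (x : tkLie A) :
    epsFn A i x = (x : Fin n → ℂ) i := by
  simp [epsFn]

/-- If `λ ∈ (𝔱^k)^*` is a regular value of `μ`, then `T^k` acts locally freely on `μ⁻¹(λ)`:
the stabilizer of every point `(z,w) ∈ μ⁻¹(λ)` under `t·(z,w) = (t·z, t⁻¹·w)` is finite. -/
theorem stmt6 {d n : ℕ} (hd : 0 < d) (hn : 0 < n) (hdn : d ≤ n) (k : ℕ) (hk : k = n - d)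
    (A : Matrix (Fin d) (Fin n) ℤ)
    (hcols : ∀ i : Fin n, (fun j => A j i) ≠ (0 : Fin d → ℤ))
    (hrank : (A.map (Int.cast : ℤ → ℚ)).rank = d)
    (lam : tkLie A →L[ℂ] ℂ) (hreg : IsRegularValue A lam) :
    ∀ z w : Fin n → ℂ, muMap A (z, w) = lam →
      {t : Fin n → ℂˣ | t ∈ Tk A ∧
        ∀ i, (t i : ℂ) * z i = z i ∧ ((t i)⁻¹ : ℂˣ) * w i = w i}.Finite := by
  intro z w hzw
  classical
  set S : Set (Fin n) := {i | z i = 0 ∧ w i = 0} with hS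
  -- the derivative of muMap at (z,w)
  have hB := muMap_isBoundedBilinear A
  have hsurj : Function.Surjective (IsBoundedBilinearMap.deriv (𝕜 := ℂ) (G := tkLie A →L[ℂ] ℂ) hB (z, w)) := by
    have h := hreg (z, w) hzw
    rwa [(IsBoundedBilinearMap.hasFDerivAt (𝕜 := ℂ) (G := tkLie A →L[ℂ] ℂ) hB (z, w)).fderiv] at h
  -- Step 1: complex columns over S are independent
  have hker : ∀ c : Fin n → ℚ, (∀ i, i ∉ S → c i = 0) →
      (∀ j, ∑ i : Fin n, (A j i : ℚ) * c i = 0) → c = 0 := by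
    intro c hsupp hAc
    by_contra hcne
    have hex : ∃ i, c i ≠ 0 := by
      by_contra h
      push_neg at h
      exact hcne (funext fun i => h i)
    obtain ⟨i₀, hi₀⟩ := hex
    have hxmem : (fun i => (c i : ℂ)) ∈ tkLie A := by
      simp only [tkLie, LinearMap.mem_ker]
      funext j
      have hq := congrArg (Rat.cast : ℚ → ℂ) (hAc j)
      push_cast at hq
      simpa [Matrix.mulVecLin_apply, Matrix.mulVec, dotProduct, Matrix.map_apply] using hq
    set x : tkLie A := ⟨fun i => (c i : ℂ), hxmem⟩ with hx
    obtain ⟨p', hp'⟩ := hsurj (epsFn A i₀)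
    have h0 : (IsBoundedBilinearMap.deriv (𝕜 := ℂ) (G := tkLie A →L[ℂ] ℂ) hB (z, w) p') x = 0 := by
      rw [IsBoundedBilinearMap.deriv_apply (𝕜 := ℂ) (G := tkLie A →L[ℂ] ℂ) hB]
      simp only [ContinuousLinearMap.add_apply, muMap_apply]
      have hz1 : ∀ i : Fin n, z i * p'.2 i * (x : Fin n → ℂ) i = 0 := by
        intro i
        by_cases hiS : i ∈ S
        · rw [hiS.1]; ring
        · have : c i = 0 := hsupp i hiS
          have : (x : Fin n → ℂ) i = 0 := by simp [hx, this]
          rw [this]; ring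
      have hw1 : ∀ i : Fin n, p'.1 i * w i * (x : Fin n → ℂ) i = 0 := by
        intro i
        by_cases hiS : i ∈ S
        · rw [hiS.2]; ring
        · have : c i = 0 := hsupp i hiS
          have : (x : Fin n → ℂ) i = 0 := by simp [hx, this]
          rw [this]; ring
      rw [Finset.sum_eq_zero fun i _ => hz1 i, Finset.sum_eq_zero fun i _ => hw1 i]
      ring
    rw [hp', epsFn_apply] at h0
    have : (c i₀ : ℂ) = 0 := by simpa [hx] using h0
    exact hi₀ (by exact_mod_cast this)
  -- Step 2: for each i₀, a uniform torsion exponent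
  have key : ∀ i₀ : Fin n, ∃ N : ℕ, 0 < N ∧ ∀ t : Fin n → ℂˣ, t ∈ Tk A →
      (∀ i, (t i : ℂ) * z i = z i ∧ ((t i)⁻¹ : ℂˣ) * w i = w i) → (t i₀) ^ N = 1 := by
    have hone : ∀ (t : Fin n → ℂˣ),
        (∀ i, (t i : ℂ) * z i = z i ∧ ((t i)⁻¹ : ℂˣ) * w i = w i) →
        ∀ i, i ∉ S → t i = 1 := by
      intro t ht i hiS
      by_cases hz : z i = 0
      · have hw : w i ≠ 0 := fun hw => hiS ⟨hz, hw⟩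
        have h2 := (ht i).2
        have : (((t i)⁻¹ : ℂˣ) : ℂ) = 1 := by
          have := mul_right_cancel₀ hw (h2.trans (one_mul (w i)).symm)
          exact this
        have : (t i)⁻¹ = 1 := Units.ext (by simpa using this)
        exact inv_eq_one.mp this
      · have h1 := (ht i).1
        have : ((t i : ℂ)) = 1 := mul_right_cancel₀ hz (h1.trans (one_mul (z i)).symm)
        exact Units.ext (by simpa using this)
    intro i₀
    by_cases hiS : i₀ ∈ S
    · -- main case
      haveI : Fintype ↥S := Fintype.ofFinite _
      set M : Matrix (Fin d) ↥S ℚ := fun j i => (A j i.1 : ℚ) with hM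
      have hsum : ∀ (f : Fin n → ℚ), (∀ i, i ∉ S → f i = 0) →
          ∑ i : Fin n, f i = ∑ i : ↥S, f i.1 := by
        intro f hf
        rw [← Finset.sum_filter_of_ne (p := fun i => i ∈ S)
          (fun i _ hne => by by_contra h; exact hne (hf i h))]
        exact Finset.sum_subtype _ (by simp) f
      have hinj : LinearMap.ker M.mulVecLin = ⊥ := by
        rw [LinearMap.ker_eq_bot']
        intro c hc
        set cc : Fin n → ℚ := fun i => if h : i ∈ S then c ⟨i, h⟩ else 0 with hcc
        have hcsupp : ∀ i, i ∉ S → cc i = 0 := fun i hi => dif_neg hi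
        have hAcc : ∀ j, ∑ i : Fin n, (A j i : ℚ) * cc i = 0 := by
          intro j
          rw [hsum (fun i => (A j i : ℚ) * cc i)
            (fun i hi => by show (A j i : ℚ) * cc i = 0; rw [hcsupp i hi, mul_zero])]
          have hcj := congrFun hc j
          simp only [Matrix.mulVecLin_apply, Matrix.mulVec, dotProduct, Pi.zero_apply] at hcj
          rw [← hcj]
          exact Finset.sum_congr rfl fun i _ => by
            simp [hcc, i.2, hM]
        have h0 := hker cc hcsupp hAcc
        funext i
        have := congrFun h0 i.1
        simpa [hcc, i.2] using this
      obtain ⟨Φ', hΦ'⟩ := M.mulVecLin.exists_leftInverse_of_injective hinj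
      set F : (Fin d → ℚ) →ₗ[ℚ] ℚ :=
        (LinearMap.proj (⟨i₀, hiS⟩ : ↥S)).comp Φ' with hF
      set f : Fin d → ℚ := fun j => F (fun j' => if j = j' then (1:ℚ) else 0) with hfdef
      have hf : ∀ i (h : i ∈ S), ∑ j, (A j i : ℚ) * f j = if i = i₀ then 1 else 0 := by
        intro i hi
        have h1 : M.mulVecLin (Pi.single (⟨i, hi⟩ : ↥S) 1) = fun j => (A j i : ℚ) := by
          funext j
          rw [Matrix.mulVecLin_apply]
          simp [hM, Matrix.mulVecLin_apply, Matrix.mulVec, dotProduct, Pi.single_apply]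
        have h2 : F (M.mulVecLin (Pi.single (⟨i, hi⟩ : ↥S) 1)) = if i = i₀ then 1 else 0 := by
          have := LinearMap.ext_iff.mp hΦ' (Pi.single (⟨i, hi⟩ : ↥S) 1)
          simp only [LinearMap.comp_apply, LinearMap.id_apply] at this
          rw [hF]
          simp only [LinearMap.comp_apply, this, LinearMap.proj_apply]
          rw [Pi.single_apply]
          by_cases hii : i = i₀
          · simp [hii]
          · simp [hii, Subtype.ext_iff, Ne.symm hii]
        rw [h1] at h2
        calc ∑ j, (A j i : ℚ) * f j = F (fun j => (A j i : ℚ)) := by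
              conv_rhs => rw [pi_eq_sum_univ (fun j => (A j i : ℚ))]
              rw [map_sum]
              exact (Finset.sum_congr rfl fun j _ => by
                rw [map_smul, smul_eq_mul, hfdef]).symm
          _ = if i = i₀ then 1 else 0 := h2
      -- clear denominators
      set N : ℕ := ∏ j : Fin d, (f j).den with hN
      have hNpos : 0 < N := Finset.prod_pos fun j _ => (f j).pos
      set m : Fin d → ℤ :=
        fun j => (f j).num * ∏ j' ∈ Finset.univ.erase j, ((f j').den : ℤ) with hm
      have hmq : ∀ j, (m j : ℚ) = (N : ℚ) * f j := by
        intro j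
        have hd1 : ((f j).den : ℚ) * f j = (f j).num := by
          rw [mul_comm]; exact Rat.mul_den_eq_num (f j)
        have hN1 : (N : ℚ) = ((f j).den : ℚ) * ∏ j' ∈ Finset.univ.erase j, ((f j').den : ℚ) := by
          rw [hN]
          push_cast
          rw [← Finset.mul_prod_erase _ _ (Finset.mem_univ j)]
        rw [hN1, hm]
        push_cast
        rw [mul_assoc, mul_comm _ (f j), ← mul_assoc, hd1, mul_comm]
      -- the exponents
      set e : Fin n → ℤ := fun i => ∑ j, A j i * m j with he
      have heS : ∀ i (h : i ∈ S), e i = if i = i₀ then (N : ℤ) else 0 := by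
        intro i hi
        have : ((e i : ℤ) : ℚ) = ((if i = i₀ then (N : ℤ) else 0 : ℤ) : ℚ) := by
          rw [he]
          push_cast
          calc ∑ j, (A j i : ℚ) * (m j : ℚ)
              = (N : ℚ) * ∑ j, (A j i : ℚ) * f j := by
                rw [Finset.mul_sum]
                exact Finset.sum_congr rfl fun j _ => by rw [hmq j]; ring
            _ = _ := by rw [hf i hi]; split <;> simp
        exact_mod_cast this
      refine ⟨N, hNpos, fun t htT ht => ?_⟩
      have hprod : (1 : ℂˣ) = ∏ i : Fin n, (t i) ^ (e i) := by
        calc (1 : ℂˣ) = ∏ j : Fin d, (∏ i : Fin n, (t i) ^ (A j i)) ^ (m j) :=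
              (Finset.prod_eq_one fun j _ => by rw [htT j, one_zpow]).symm
          _ = ∏ j : Fin d, ∏ i : Fin n, ((t i) ^ (A j i)) ^ (m j) :=
              Finset.prod_congr rfl fun j _ => (Finset.prod_zpow _ _ _).symm
          _ = ∏ i : Fin n, ∏ j : Fin d, ((t i) ^ (A j i)) ^ (m j) := Finset.prod_comm
          _ = ∏ i : Fin n, (t i) ^ (e i) := by
              refine Finset.prod_congr rfl fun i _ => ?_
              rw [he]
              rw [← prod_zpow_eq_zpow_sum]
              exact Finset.prod_congr rfl fun j _ => (zpow_mul _ _ _).symm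
      have hsingle : ∏ i : Fin n, (t i) ^ (e i) = (t i₀) ^ (N : ℤ) := by
        rw [Finset.prod_eq_single i₀]
        · rw [heS i₀ hiS]; simp
        · intro i _ hne
          by_cases hiS' : i ∈ S
          · rw [heS i hiS', if_neg hne, zpow_zero]
          · rw [hone t ht i hiS', one_zpow]
        · intro h; exact absurd (Finset.mem_univ i₀) h
      rw [hsingle] at hprod
      rw [← zpow_natCast]
      exact hprod.symm
    · -- i₀ ∉ S : stabilizer coordinate is 1
      exact ⟨1, one_pos, fun t _ ht => by rw [pow_one, hone t ht i₀ hiS]⟩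
  choose N hNpos hNt using key
  have hfin : ∀ i : Fin n, {u : ℂˣ | u ^ (N i) = 1}.Finite := by
    intro i
    have hfinC : {x : ℂ | x ^ (N i) = 1}.Finite :=
      Set.Finite.ofFinset (Polynomial.nthRootsFinset (N i) (1 : ℂ)) (fun x => by
        rw [Polynomial.mem_nthRootsFinset (hNpos i)]; simp)
    have hset : {u : ℂˣ | u ^ (N i) = 1} = (Units.val) ⁻¹' {x : ℂ | x ^ (N i) = 1} := by
      ext u
      simp [Set.mem_preimage, Units.ext_iff]
    rw [hset]
    exact hfinC.preimage Units.val_injective.injOn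
  refine Set.Finite.subset (Set.Finite.pi hfin) ?_
  intro t ht
  intro i _
  exact hNt i t ht.1 ht.2
end
end

section
/- The locally free locus equals the union of the stable sets over all characters: a point z ∈ ℂ^n has finite stabilizer in T^k if and only if there exists α ∈ ℤ^n such that z is α-stable. In other words, (ℂ^n)^{lf} = ⋃_{α} (ℂ^n)^{α-st}. -/
open scoped BigOperators

noncomputable section

/-- The character `χ_α(t) = Π_i t_i^{α_i}` of `T^k` attached to `α ∈ ℤ^n`. -/
def chiChar {n : ℕ} (α : Fin n → ℤ) (t : Fin n → ℂˣ) : ℂˣ :=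
  ∏ i : Fin n, (t i) ^ (α i)

/-- `z` is `α`-semistable if some polynomial `f` with `f(t·x) = χ_α(t)^m f(x)` (for some
`m ≥ 1`) does not vanish at `z`. -/
def Semistable {d n : ℕ} (A : Matrix (Fin d) (Fin n) ℤ) (α : Fin n → ℤ)
    (z : Fin n → ℂ) : Prop :=
  ∃ m : ℕ, 1 ≤ m ∧ ∃ f : MvPolynomial (Fin n) ℂ,
    (∀ t ∈ Tk A, ∀ x : Fin n → ℂ,
      MvPolynomial.eval (fun i => (t i : ℂ) * x i) f
        = ((chiChar α t : ℂˣ) : ℂ) ^ m * MvPolynomial.eval x f) ∧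
    MvPolynomial.eval z f ≠ 0

/-- The `α`-semistable set `(ℂ^n)^{α-ss}`. -/
def ssSet {d n : ℕ} (A : Matrix (Fin d) (Fin n) ℤ) (α : Fin n → ℤ) : Set (Fin n → ℂ) :=
  {z | Semistable A α z}

/-- The `T^k`-orbit of `z ∈ ℂ^n`. -/
def orbit {d n : ℕ} (A : Matrix (Fin d) (Fin n) ℤ) (z : Fin n → ℂ) : Set (Fin n → ℂ) :=
  {y | ∃ t ∈ Tk A, y = fun i => (t i : ℂ) * z i}

/-- `z` is `α`-stable if it is `α`-semistable, its `T^k`-orbit is closed in the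
`α`-semistable set, and its stabilizer in `T^k` is finite. -/
def Stable {d n : ℕ} (A : Matrix (Fin d) (Fin n) ℤ) (α : Fin n → ℤ)
    (z : Fin n → ℂ) : Prop :=
  Semistable A α z ∧
  IsClosed {x : ↥(ssSet A α) | (x : Fin n → ℂ) ∈ orbit A z} ∧
  (stab A z).Finite

/-- The `α`-stable set `(ℂ^n)^{α-st}`. -/
def stSet {d n : ℕ} (A : Matrix (Fin d) (Fin n) ℤ) (α : Fin n → ℤ) : Set (Fin n → ℂ) :=
  {z | Stable A α z}

/-! ### Auxiliary material -/

/-- Every unit of `ℂ` has `m`-th roots for `m ≠ 0`. -/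
lemma exists_zpow_eq (u : ℂˣ) {m : ℤ} (hm : m ≠ 0) : ∃ v : ℂˣ, v ^ m = u := by
  obtain ⟨c, hc⟩ := IsAlgClosed.exists_pow_nat_eq (u : ℂ) (n := m.natAbs)
    (Int.natAbs_pos.mpr hm)
  have hc0 : c ≠ 0 := by
    intro h
    rw [h, zero_pow (by simpa using Int.natAbs_ne_zero.mpr hm)] at hc
    exact u.ne_zero hc.symm
  set w : ℂˣ := Units.mk0 c hc0 with hw
  have hwn : w ^ (m.natAbs : ℤ) = u := by
    rw [zpow_natCast]
    ext
    rw [Units.val_pow_eq_pow_val]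
    simpa [hw] using hc
  rcases Int.natAbs_eq m with h | h
  · exact ⟨w, by rw [h]; exact hwn⟩
  · refine ⟨w⁻¹, ?_⟩
    rw [h, inv_zpow, ← zpow_neg, neg_neg, hwn]

instance : DivisibleBy (Additive ℂˣ) ℤ where
  div a m := if hm : m = 0 then 0 else Additive.ofMul (exists_zpow_eq a.toMul hm).choose
  div_zero a := dif_pos rfl
  div_cancel a hm := by
    simp only [dif_neg hm]
    rw [← ofMul_zpow, (exists_zpow_eq a.toMul hm).choose_spec]
    rfl

/-- The character `c ↦ ∏ s_i ^ c_i` as a `ℤ`-linear map into `Additive ℂˣ`. -/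
def charMap {n : ℕ} (s : Fin n → ℂˣ) : (Fin n → ℤ) →ₗ[ℤ] Additive ℂˣ :=
  AddMonoidHom.toIntLinearMap
  { toFun := fun c => Additive.ofMul (∏ i, s i ^ c i)
    map_zero' := by simp
    map_add' := by
      intro a b
      simp [zpow_add, Finset.prod_mul_distrib] }

lemma charMap_apply {n : ℕ} (s : Fin n → ℂˣ) (c : Fin n → ℤ) :
    charMap s c = Additive.ofMul (∏ i, s i ^ c i) := rfl

/-- The lattice spanned by the rows of `A`. -/
def rowLat {d n : ℕ} (A : Matrix (Fin d) (Fin n) ℤ) : Submodule ℤ (Fin n → ℤ) :=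
  Submodule.span ℤ (Set.range fun j => A j)

/-- Integer vectors supported on the support of `z`. -/
def suppSub {n : ℕ} (z : Fin n → ℂ) : Submodule ℤ (Fin n → ℤ) where
  carrier := {c | ∀ i, z i = 0 → c i = 0}
  add_mem' := by intro a b ha hb i hi; simp [ha i hi, hb i hi]
  zero_mem' := by intro i _; rfl
  smul_mem' := by intro m c hc i hi; simp [hc i hi]

lemma prod_zpow_eq_one_of_mem_rowLat {d n : ℕ} {A : Matrix (Fin d) (Fin n) ℤ}
    {t : Fin n → ℂˣ} (ht : t ∈ Tk A) {c : Fin n → ℤ} (hc : c ∈ rowLat A) :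
    ∏ i, t i ^ c i = (1 : ℂˣ) := by
  induction hc using Submodule.span_induction with
  | mem x hx => obtain ⟨j, rfl⟩ := hx; exact ht j
  | zero => simp
  | add x y _ _ hx hy =>
      have : ∏ i, t i ^ (x + y) i = (∏ i, t i ^ x i) * ∏ i, t i ^ y i := by
        rw [← Finset.prod_mul_distrib]
        exact Finset.prod_congr rfl fun i _ => by simp [zpow_add]
      rw [this, hx, hy, mul_one]
  | smul m x _ hx =>
      have : ∏ i, t i ^ (m • x) i = (∏ i, t i ^ x i) ^ m := by
        rw [← Finset.prod_zpow]
        exact Finset.prod_congr rfl fun i _ => by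
          rw [Pi.smul_apply, smul_eq_mul, mul_comm, zpow_mul]
      rw [this, hx, one_zpow]

/-- Key extension lemma: a character prescribed on the support coordinates of `z` which is
trivial on the part of the row lattice supported there extends to an element of `T^k`. -/
lemma exists_mem_Tk_of_char {d n : ℕ} (A : Matrix (Fin d) (Fin n) ℤ) (z : Fin n → ℂ)
    (s : Fin n → ℂˣ)
    (hs : ∀ c ∈ rowLat A, c ∈ suppSub z → ∏ i, s i ^ c i = (1 : ℂˣ)) :
    ∃ t ∈ Tk A, ∀ i, z i ≠ 0 → t i = s i := by
  classical
  set M := Additive ℂˣ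
  set Lat := rowLat A
  set E := suppSub z
  set N := (Fin n → ℤ) ⧸ Lat
  set ρ : E →ₗ[ℤ] N := Lat.mkQ.comp E.subtype with hρ
  set φ : E →ₗ[ℤ] M := (charMap s).comp E.subtype with hφ
  have hker : LinearMap.ker ρ ≤ LinearMap.ker φ := by
    intro e he
    have he1 : Lat.mkQ (e : Fin n → ℤ) = 0 := he
    rw [Submodule.mkQ_apply] at he1
    have he' : (e : Fin n → ℤ) ∈ Lat := (Submodule.Quotient.mk_eq_zero Lat).mp he1
    have := hs e he' e.2
    simpa [hφ, charMap_apply] using congrArg Additive.ofMul this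
  set g : LinearMap.range ρ →ₗ[ℤ] M :=
    ((LinearMap.ker ρ).liftQ φ hker).comp (ρ.quotKerEquivRange).symm.toLinearMap with hg
  have hg' : ∀ e : E, g ⟨ρ e, LinearMap.mem_range_self ρ e⟩ = φ e := by
    intro e
    have h1 : (ρ.quotKerEquivRange) (Submodule.Quotient.mk e)
        = ⟨ρ e, LinearMap.mem_range_self ρ e⟩ :=
      Subtype.ext (ρ.quotKerEquivRange_apply_mk e)
    rw [hg, LinearMap.comp_apply, LinearEquiv.coe_toLinearMap, ← h1,
      LinearEquiv.symm_apply_apply]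
    exact Submodule.liftQ_apply _ φ e
  have : Module.Injective ℤ M := (Module.Baer.of_divisible _).injective
  obtain ⟨v, hv⟩ := Module.Injective.extension_property ℤ M _ N
    (LinearMap.range ρ).subtype Subtype.val_injective g
  set w : (Fin n → ℤ) →ₗ[ℤ] M := v.comp Lat.mkQ with hw
  have hwLat : ∀ c ∈ Lat, w c = 0 := by
    intro c hc
    have h0 : Lat.mkQ c = 0 := by
      simpa [Submodule.Quotient.mk_eq_zero] using hc
    rw [hw, LinearMap.comp_apply, h0, map_zero]
  have hwE : ∀ e : E, w e = charMap s e := by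
    intro e
    have : w e = v ((LinearMap.range ρ).subtype ⟨ρ e, LinearMap.mem_range_self ρ e⟩) := rfl
    rw [this, ← LinearMap.comp_apply, hv, hg' e]
    rfl
  refine ⟨fun i => (w (Pi.single i 1)).toMul, ?_, ?_⟩
  · intro j
    have hsum : ∑ i, A j i • Pi.single i (1 : ℤ) = A j := by
      simp_rw [← Pi.single_smul, smul_eq_mul, mul_one]
      exact Finset.univ_sum_single (A j)
    have h1 : ∏ i, ((w (Pi.single i 1)).toMul) ^ A j i
        = (∑ i, A j i • w (Pi.single i 1)).toMul := by
      rw [toMul_sum]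
      exact Finset.prod_congr rfl fun i _ => (toMul_zsmul _ _).symm
    have h2 : ∑ i, A j i • w (Pi.single i 1) = w (A j) := by
      calc ∑ i, A j i • w (Pi.single i 1) = ∑ i, w (A j i • Pi.single i 1) :=
            Finset.sum_congr rfl fun i _ => (map_zsmul w _ _).symm
        _ = w (∑ i, A j i • Pi.single i 1) := (map_sum w _ _).symm
        _ = w (A j) := by rw [hsum]
    rw [h1, h2, hwLat _ (Submodule.subset_span ⟨j, rfl⟩)]
    rfl
  · intro i hi
    have hE : (Pi.single i (1 : ℤ)) ∈ E := by
      intro j hj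
      have : j ≠ i := fun h => hi (h ▸ hj)
      simp [Pi.single_apply, this]
    have h3 := hwE ⟨_, hE⟩
    have h2 : charMap s (Pi.single i 1) = Additive.ofMul (s i) := by
      rw [charMap_apply]
      congr 1
      rw [Finset.prod_eq_single i (fun j _ hj => by simp [Pi.single_apply, hj])
        (by simp)]
      simp
    show (w (Pi.single i 1)).toMul = s i
    rw [show w (Pi.single i 1) = w ((⟨_, hE⟩ : E) : Fin n → ℤ) from rfl, h3, h2]
    rfl

/-- Value of the indicator character. -/
lemma chiChar_indicator {n : ℕ} (z : Fin n → ℂ) (t : Fin n → ℂˣ) :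
    ((chiChar (fun i => if z i ≠ 0 then (1 : ℤ) else 0) t : ℂˣ) : ℂ)
      = ∏ i ∈ Finset.univ.filter (fun i => z i ≠ 0), (t i : ℂ) := by
  classical
  have h0 : ((chiChar (fun i => if z i ≠ 0 then (1 : ℤ) else 0) t : ℂˣ) : ℂ)
      = ∏ i, ((t i : ℂ)) ^ (if z i ≠ 0 then (1 : ℤ) else 0) := by
    rw [chiChar, show ((∏ i, t i ^ (if z i ≠ 0 then (1 : ℤ) else 0) : ℂˣ) : ℂ)
      = ∏ i, ((t i ^ (if z i ≠ 0 then (1 : ℤ) else 0) : ℂˣ) : ℂ)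
      from map_prod (Units.coeHom ℂ) _ _]
    exact Finset.prod_congr rfl fun i _ => Units.val_zpow_eq_zpow_val _ _
  rw [h0, ← Finset.prod_filter_mul_prod_filter_not Finset.univ (fun i => z i ≠ 0)]
  have h2 : ∏ i ∈ Finset.univ.filter (fun i => ¬ z i ≠ 0),
      ((t i : ℂ)) ^ (if z i ≠ 0 then (1 : ℤ) else 0) = 1 := by
    apply Finset.prod_eq_one
    intro i hi
    rw [Finset.mem_filter] at hi
    simp [if_neg hi.2]
  rw [h2, mul_one]
  apply Finset.prod_congr rfl
  intro i hi
  rw [Finset.mem_filter] at hi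
  simp [if_pos hi.2]

/-- With `α` the indicator of the support of `z`, `z` is `α`-semistable. -/
lemma semistable_indicator {d n : ℕ} (A : Matrix (Fin d) (Fin n) ℤ) (z : Fin n → ℂ) :
    Semistable A (fun i => if z i ≠ 0 then 1 else 0) z := by
  classical
  refine ⟨1, le_refl 1, ∏ i ∈ Finset.univ.filter (fun i => z i ≠ 0), MvPolynomial.X i, ?_, ?_⟩
  · intro t _ y
    rw [map_prod, map_prod, pow_one, chiChar_indicator, ← Finset.prod_mul_distrib]
    exact Finset.prod_congr rfl fun i _ => by simp
  · rw [map_prod]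
    simp only [MvPolynomial.eval_X]
    rw [Finset.prod_ne_zero_iff]
    intro i hi
    exact (Finset.mem_filter.mp hi).2

/-- The key closedness lemma: every point of the `α`-semistable set (for `α` the indicator
of the support of `z`) lying in the closure of the orbit of `z` lies in the orbit. -/
lemma mem_orbit_of_closure {d n : ℕ} (A : Matrix (Fin d) (Fin n) ℤ) (z x : Fin n → ℂ)
    (hx : Semistable A (fun i => if z i ≠ 0 then 1 else 0) x)
    (hcl : x ∈ closure (orbit A z)) : x ∈ orbit A z := by
  classical
  obtain ⟨u, hu, hul⟩ := mem_closure_iff_seq_limit.mp hcl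
  choose t ht hts using hu
  have hcoord : ∀ i, Filter.Tendsto (fun m => (t m i : ℂ) * z i)
      Filter.atTop (nhds (x i)) := by
    intro i
    have h := (tendsto_pi_nhds.mp hul) i
    refine h.congr fun m => ?_
    rw [hts m]
  have hx0 : ∀ i, z i = 0 → x i = 0 := by
    intro i hi
    have h := hcoord i
    rw [show (fun m => (t m i : ℂ) * z i) = (fun _ : ℕ => (0 : ℂ))
      from funext fun m => by rw [hi, mul_zero]] at h
    exact tendsto_nhds_unique h tendsto_const_nhds
  set S : Finset (Fin n) := Finset.univ.filter (fun i => z i ≠ 0) with hS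
  by_cases hfull : ∀ i, z i ≠ 0 → x i ≠ 0
  · -- the limit has full support: use the extension lemma
    set s : Fin n → ℂˣ := fun i =>
      if h : z i ≠ 0 then Units.mk0 (x i / z i) (div_ne_zero (hfull i h) h) else 1 with hsdef
    have hti : ∀ i, z i ≠ 0 → Filter.Tendsto (fun m => (t m i : ℂ))
        Filter.atTop (nhds (x i / z i)) := by
      intro i hi
      have h := (hcoord i).div_const (z i)
      refine h.congr fun m => ?_
      rw [mul_div_assoc, div_self hi, mul_one]
    have hs : ∀ c ∈ rowLat A, c ∈ suppSub z → ∏ i, s i ^ c i = (1 : ℂˣ) := by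
      intro c hc hcsupp
      have honeC : ∀ m, ∏ i ∈ S, ((t m i : ℂ)) ^ c i = 1 := by
        intro m
        have h1 := congrArg (Units.coeHom ℂ) (prod_zpow_eq_one_of_mem_rowLat (ht m) hc)
        rw [map_prod, map_one] at h1
        have h2 : ∀ i, (Units.coeHom ℂ) (t m i ^ c i) = ((t m i : ℂ)) ^ c i := by
          intro i
          exact Units.val_zpow_eq_zpow_val _ _
        rw [Finset.prod_congr rfl (fun i _ => h2 i)] at h1
        rw [← h1]
        apply Finset.prod_subset (Finset.subset_univ S)
        intro i _ hiS
        have hzi : z i = 0 := by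
          by_contra hzi
          exact hiS (Finset.mem_filter.mpr ⟨Finset.mem_univ i, hzi⟩)
        rw [hcsupp i hzi, zpow_zero]
      have hlim : Filter.Tendsto (fun m => ∏ i ∈ S, ((t m i : ℂ)) ^ c i)
          Filter.atTop (nhds (∏ i ∈ S, (x i / z i) ^ c i)) := by
        apply tendsto_finset_prod
        intro i hiS
        have hzi : z i ≠ 0 := (Finset.mem_filter.mp hiS).2
        exact (hti i hzi).zpow₀ _ (Or.inl (div_ne_zero (hfull i hzi) hzi))
      have hprod : ∏ i ∈ S, (x i / z i) ^ c i = 1 := by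
        exact tendsto_nhds_unique (hlim.congr honeC) tendsto_const_nhds
      refine Units.ext ?_
      have hcoe : ((∏ i, s i ^ c i : ℂˣ) : ℂ) = ∏ i, ((s i : ℂ)) ^ c i := by
        rw [show ((∏ i, s i ^ c i : ℂˣ) : ℂ) = ∏ i, ((s i ^ c i : ℂˣ) : ℂ)
          from map_prod (Units.coeHom ℂ) _ _]
        exact Finset.prod_congr rfl fun i _ => Units.val_zpow_eq_zpow_val _ _
      have hcoe2 : ∏ i, ((s i : ℂ)) ^ c i = ∏ i ∈ S, ((s i : ℂ)) ^ c i := by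
        symm
        apply Finset.prod_subset (Finset.subset_univ S)
        intro i _ hiS
        have hzi : z i = 0 := by
          by_contra hzi
          exact hiS (Finset.mem_filter.mpr ⟨Finset.mem_univ i, hzi⟩)
        rw [hcsupp i hzi, zpow_zero]
      have hcoe3 : ∏ i ∈ S, ((s i : ℂ)) ^ c i = ∏ i ∈ S, (x i / z i) ^ c i := by
        apply Finset.prod_congr rfl
        intro i hi
        have hzi : z i ≠ 0 := (Finset.mem_filter.mp hi).2
        rw [hsdef]
        simp only [dif_pos hzi, Units.val_mk0]
      rw [hcoe, hcoe2, hcoe3, hprod, Units.val_one]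
    obtain ⟨tt, httk, htts⟩ := exists_mem_Tk_of_char A z s hs
    refine ⟨tt, httk, funext fun i => ?_⟩
    by_cases hi : z i ≠ 0
    · rw [htts i hi, hsdef]
      simp only [dif_pos hi]
      rw [Units.val_mk0, div_mul_cancel₀ _ hi]
    · push_neg at hi
      rw [hi, mul_zero]
      exact hx0 i hi
  · -- the limit has smaller support: contradict semistability
    exfalso
    push_neg at hfull
    obtain ⟨i0, hz0, hx0'⟩ := hfull
    obtain ⟨mm, hmm, f, hequiv, hfx⟩ := hx
    have hC : ∀ m, MvPolynomial.eval (u m) f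
        = ((chiChar (fun i => if z i ≠ 0 then 1 else 0) (t m) : ℂˣ) : ℂ) ^ mm
          * MvPolynomial.eval z f := by
      intro m
      rw [hts m]
      exact hequiv (t m) (ht m) z
    set P : ℕ → ℂ := fun m => ∏ i ∈ S, (t m i : ℂ) with hP
    have hP0 : Filter.Tendsto P Filter.atTop (nhds 0) := by
      have h1 : Filter.Tendsto (fun m => ∏ i ∈ S, ((t m i : ℂ) * z i))
          Filter.atTop (nhds (∏ i ∈ S, x i)) :=
        tendsto_finset_prod _ fun i _ => hcoord i
      have h2 : ∏ i ∈ S, x i = 0 :=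
        Finset.prod_eq_zero (Finset.mem_filter.mpr ⟨Finset.mem_univ i0, hz0⟩) hx0'
      have hz : ∏ i ∈ S, z i ≠ 0 := by
        rw [Finset.prod_ne_zero_iff]
        intro i hi
        exact (Finset.mem_filter.mp hi).2
      have h3 : Filter.Tendsto (fun m => (∏ i ∈ S, ((t m i : ℂ) * z i)) / ∏ i ∈ S, z i)
          Filter.atTop (nhds 0) := by
        rw [h2] at h1
        simpa using h1.div_const (∏ i ∈ S, z i)
      refine h3.congr fun m => ?_
      rw [Finset.prod_mul_distrib, mul_div_assoc, div_self hz, mul_one]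
    have hL : Filter.Tendsto (fun m => MvPolynomial.eval (u m) f)
        Filter.atTop (nhds (MvPolynomial.eval x f)) :=
      ((MvPolynomial.continuous_eval f).tendsto x).comp hul
    have hR : Filter.Tendsto (fun m => MvPolynomial.eval (u m) f)
        Filter.atTop (nhds 0) := by
      have h4 : Filter.Tendsto (fun m => P m ^ mm * MvPolynomial.eval z f)
          Filter.atTop (nhds 0) := by
        have := (hP0.pow mm).mul_const (MvPolynomial.eval z f)
        simpa [zero_pow (Nat.one_le_iff_ne_zero.mp hmm)] using this
      refine h4.congr fun m => ?_
      rw [hC m, chiChar_indicator]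
    exact hfx (tendsto_nhds_unique hL hR)

/-- The locally free locus equals the union of the stable sets over all characters:
`(ℂ^n)^{lf} = ⋃_α (ℂ^n)^{α-st}`. -/
theorem stmt9 {d n : ℕ} (hd : 0 < d) (hn : 0 < n) (hdn : d ≤ n) (k : ℕ) (hk : k = n - d)
    (A : Matrix (Fin d) (Fin n) ℤ)
    (hcols : ∀ i : Fin n, (fun j => A j i) ≠ (0 : Fin d → ℤ))
    (hrank : (A.map (Int.cast : ℤ → ℚ)).rank = d) :
    {z : Fin n → ℂ | (stab A z).Finite} = ⋃ α : Fin n → ℤ, stSet A α := by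
  classical
  ext z
  simp only [Set.mem_setOf_eq, Set.mem_iUnion]
  constructor
  · intro hfin
    refine ⟨fun i => if z i ≠ 0 then 1 else 0, semistable_indicator A z, ?_, hfin⟩
    have hset : {x : ↥(ssSet A (fun i => if z i ≠ 0 then 1 else 0)) |
        (x : Fin n → ℂ) ∈ orbit A z}
        = Subtype.val ⁻¹' (closure (orbit A z)) := by
      ext x
      constructor
      · exact fun h => subset_closure h
      · exact fun h => mem_orbit_of_closure A z x x.2 h
    rw [hset]
    exact isClosed_closure.preimage continuous_subtype_val
  · rintro ⟨α, h⟩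
    exact h.2.2
end
end

section
/- There are only finitely many distinct stable sets: the collection of subsets of ℂ^n of the form (ℂ^n)^{α-st} = {z ∈ ℂ^n : z is α-stable}, as α ranges over all elements of ℤ^n, is a finite collection of sets. -/
open scoped BigOperators

noncomputable section

open MvPolynomial in
/-- Semistability depends only on the support of the point. -/
lemma semistable_of_supp {d n : ℕ} (A : Matrix (Fin d) (Fin n) ℤ) (α : Fin n → ℤ)
    {z w : Fin n → ℂ} (h : ∀ i, z i = 0 ↔ w i = 0) (hz : Semistable A α z) :
    Semistable A α w := by
  obtain ⟨m, hm, f, hf, hfz⟩ := hz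
  set c : Fin n → ℂ := fun i => if w i = 0 then 1 else z i / w i with hc
  have hcw : ∀ i, c i * w i = z i := by
    intro i
    by_cases hw : w i = 0
    · simp [hc, hw, (h i).2 hw]
    · simp [hc, hw, div_mul_cancel₀ _ hw]
  have key : ∀ y : Fin n → ℂ,
      eval y (bind₁ (fun i => C (c i) * X i) f) = eval (fun i => c i * y i) f := by
    intro y
    have h0 := eval₂Hom_bind₁ (RingHom.id ℂ) y (fun i => C (c i) * X i) f
    have e1 : (eval₂Hom (RingHom.id ℂ) y : MvPolynomial (Fin n) ℂ →+* ℂ) = eval y := rfl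
    rw [e1] at h0
    have e2 : (fun i => eval y (C (c i) * X i)) = fun i => c i * y i := by
      funext i; simp
    rw [e2] at h0
    have e3 : (eval₂Hom (RingHom.id ℂ) (fun i => c i * y i) :
        MvPolynomial (Fin n) ℂ →+* ℂ) = eval (fun i => c i * y i) := rfl
    rw [e3] at h0
    exact h0
  refine ⟨m, hm, bind₁ (fun i => C (c i) * X i) f, ?_, ?_⟩
  · intro t ht x
    rw [key, key]
    have h1 : (fun i => c i * ((t i : ℂ) * x i)) = (fun i => (t i : ℂ) * (c i * x i)) := by
      funext i; ring
    rw [h1, hf t ht (fun i => c i * x i)]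
  · rw [key]
    have : (fun i => c i * w i) = z := funext hcw
    rw [this]; exact hfz

/-- The support map. -/
def suppFun {n : ℕ} (z : Fin n → ℂ) : Set (Fin n) := {i | z i ≠ 0}

lemma ssSet_eq_preimage {d n : ℕ} (A : Matrix (Fin d) (Fin n) ℤ) (α : Fin n → ℤ) :
    ssSet A α = suppFun ⁻¹' (suppFun '' ssSet A α) := by
  ext z
  constructor
  · intro hz; exact ⟨z, hz, rfl⟩
  · rintro ⟨w, hw, hsupp⟩
    refine semistable_of_supp A α (z := w) (w := z) ?_ hw
    intro i
    have := Set.ext_iff.1 hsupp i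
    simpa [suppFun, not_iff_not] using not_iff_not.2 this

/-- As `α` ranges over `ℤ^n`, only finitely many distinct stable sets
`(ℂ^n)^{α-st}` occur. -/
theorem stmt10 {d n : ℕ} (hd : 0 < d) (hn : 0 < n) (hdn : d ≤ n) (k : ℕ) (hk : k = n - d)
    (A : Matrix (Fin d) (Fin n) ℤ)
    (hcols : ∀ i : Fin n, (fun j => A j i) ≠ (0 : Fin d → ℤ))
    (hrank : (A.map (Int.cast : ℤ → ℚ)).rank = d) :
    {S : Set (Fin n → ℂ) | ∃ α : Fin n → ℤ, S = stSet A α}.Finite := by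
  -- the stable set is a function `G` of the semistable set
  set G : Set (Fin n → ℂ) → Set (Fin n → ℂ) := fun S =>
    {z | z ∈ S ∧ IsClosed {x : ↥S | (x : Fin n → ℂ) ∈ orbit A z} ∧ (stab A z).Finite}
    with hG
  have hst : ∀ α : Fin n → ℤ, stSet A α = G (ssSet A α) := fun α => rfl
  -- the semistable sets form a finite family
  have h1 : {S : Set (Fin n → ℂ) | ∃ α : Fin n → ℤ, S = ssSet A α}.Finite := by
    apply Set.Finite.subset
      ((Set.finite_univ (α := Set (Set (Fin n)))).image (fun T => suppFun ⁻¹' T))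
    rintro S ⟨α, rfl⟩
    exact ⟨suppFun '' ssSet A α, trivial, (ssSet_eq_preimage A α).symm⟩
  apply Set.Finite.subset (h1.image G)
  rintro S ⟨α, rfl⟩
  exact ⟨ssSet A α, ⟨α, rfl⟩, (hst α).symm⟩
end
end
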